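/- arXiv:1506.02247 — 10 statements merged into one kernel-verified Lean document; each statement's English description precedes it below -/
import Mathlib

section
/- Existence for problem P(Ω,u0) with Lipschitz data: there exists a function u : [0,T]×Ω → ℝ such that (i) u(0,x) = u0(x) for all x ∈ Ω, (ii) there are constants M, L' such that for every t ∈ [0,T] the function u(t,·) is bounded by M and Lipschitz with constant L' on Ω, and (iii) for every x ∈ Ω the map t ↦ u(t,x) is differentiable on [0,T] with ∂_t u(t,x) = ∫_Ω K_h(u(t,y) − u(t,x))·(u(t,y) − u(t,x)) dy + λ(u0(x) − u(t,x)). -/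
open MeasureTheory Set BoundedContinuousFunction

private lemma gron_mono {δ K ε : ℝ} (hδ : 0 ≤ δ) (hK : 0 ≤ K) (hε : 0 ≤ ε)
    {s t : ℝ} (hs : 0 ≤ s) (hst : s ≤ t) :
    gronwallBound δ K ε s ≤ gronwallBound δ K ε t := by
  by_cases hK0 : K = 0
  · simp only [gronwallBound, if_pos hK0]
    nlinarith
  · have hKpos : 0 < K := lt_of_le_of_ne hK (Ne.symm hK0)
    simp only [gronwallBound, if_neg hK0]
    have h1 : Real.exp (K * s) ≤ Real.exp (K * t) :=
      Real.exp_le_exp.2 (by nlinarith)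
    have h2 : (0:ℝ) ≤ ε / K := div_nonneg hε hKpos.le
    have h3 : (1:ℝ) ≤ Real.exp (K * s) := by
      rw [← Real.exp_zero]; exact Real.exp_le_exp.2 (by nlinarith)
    nlinarith

private lemma gron_homog (δ K ε t c : ℝ) :
    gronwallBound (c * δ) K (c * ε) t = c * gronwallBound δ K ε t := by
  by_cases hK : K = 0 <;> simp only [gronwallBound, if_pos, if_neg, hK, if_true, if_false] <;> ring

/-- clamp to `[-r, r]` -/
private def cl (r a : ℝ) : ℝ := max (-r) (min r a)

private lemma cl_continuous (r : ℝ) : Continuous (cl r) :=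
  continuous_const.max (continuous_const.min continuous_id)

private lemma cl_sub_le (r a b : ℝ) : |cl r a - cl r b| ≤ |a - b| := by
  unfold cl
  rw [max_comm (-r) (min r a), max_comm (-r) (min r b)]
  refine (abs_max_sub_max_le_abs _ _ _).trans ?_
  have := abs_min_sub_min_le_max r a r b
  simpa using this

private lemma cl_abs_le (r : ℝ) (hr : 0 ≤ r) (a : ℝ) : |cl r a| ≤ r := by
  rw [abs_le]
  constructor
  · exact le_max_left _ _
  · exact max_le (by linarith) (min_le_left _ _)

private lemma cl_eq_self {r a : ℝ} (ha : |a| ≤ r) : cl r a = a := by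
  rw [abs_le] at ha
  unfold cl
  rw [min_eq_right ha.2, max_eq_right ha.1]

private lemma cl_abs_le_abs (r : ℝ) (hr : 0 ≤ r) (a : ℝ) : |cl r a| ≤ |a| := by
  have h0 : cl r 0 = 0 := cl_eq_self (by simpa using hr)
  have := cl_sub_le r a 0
  rw [h0, sub_zero, sub_zero] at this
  exact this

set_option maxHeartbeats 4000000 in
/-- Existence for problem P(Ω,u0) with Lipschitz data: there is a function
`u : [0,T]×Ω → ℝ` with `u(0,·) = u0`, uniformly bounded and Lipschitz in space,
solving `∂_t u(t,x) = ∫_Ω K_h(u(t,y)−u(t,x))(u(t,y)−u(t,x)) dy + λ(u0(x)−u(t,x))`. -/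
theorem stmt_0
    (d : ℕ) (hd : 1 ≤ d)
    (Ω : Set (Fin d → ℝ)) (hΩopen : IsOpen Ω) (hΩbdd : Bornology.IsBounded Ω)
    (K : ℝ → ℝ) (hKnonneg : ∀ ξ, 0 ≤ K ξ) (BK : ℝ) (hKbdd : ∀ ξ, K ξ ≤ BK)
    (LK : NNReal) (hKlip : LipschitzWith LK K)
    (h : ℝ) (hh : 0 < h) (lam : ℝ) (hlam : 0 ≤ lam) (T : ℝ) (hT : 0 < T)
    (u0 : (Fin d → ℝ) → ℝ) (M0 : ℝ) (hu0bdd : ∀ x ∈ Ω, |u0 x| ≤ M0)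
    (L0 : NNReal) (hu0lip : LipschitzOnWith L0 u0 Ω) :
    ∃ u : ℝ → (Fin d → ℝ) → ℝ,
      (∀ x ∈ Ω, u 0 x = u0 x) ∧
      (∃ M L' : ℝ, ∀ t ∈ Icc (0:ℝ) T,
        (∀ x ∈ Ω, |u t x| ≤ M) ∧
        (∀ x ∈ Ω, ∀ y ∈ Ω, |u t x - u t y| ≤ L' * dist x y)) ∧
      (∀ x ∈ Ω, ∀ t ∈ Icc (0:ℝ) T,
        HasDerivWithinAt (fun τ => u τ x)
          ((∫ y in Ω, K ((u t y - u t x) / h) * (u t y - u t x)) +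
            lam * (u0 x - u t x)) (Icc 0 T) t) := by
  classical
  rcases Ω.eq_empty_or_nonempty with hΩe | ⟨x₀, hx₀⟩
  · exact ⟨fun _ _ => 0, by simp [hΩe], ⟨0, 0, by simp [hΩe]⟩, by simp [hΩe]⟩
  -- basic nonnegativity facts
  have hM0 : 0 ≤ M0 := le_trans (abs_nonneg _) (hu0bdd x₀ hx₀)
  have hBK0 : 0 ≤ BK := le_trans (hKnonneg 0) (hKbdd 0)
  have hKabs : ∀ ξ, |K ξ| ≤ BK := fun ξ => by
    rw [abs_of_nonneg (hKnonneg ξ)]; exact hKbdd ξ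
  have hΩfin : volume Ω < ⊤ := hΩbdd.measure_lt_top
  haveI : Fact (volume Ω < ⊤) := ⟨hΩfin⟩
  set A : ℝ := (volume Ω).toReal with hA
  have hA0 : 0 ≤ A := ENNReal.toReal_nonneg
  -- extension of the initial data
  obtain ⟨g, hglip, hgeq⟩ := hu0lip.extend_real
  set g0 : (Fin d → ℝ) → ℝ := fun x => cl M0 (g x) with hg0
  have hg0cont : Continuous g0 := (cl_continuous M0).comp hglip.continuous
  have hg0bdd : ∀ x, ‖g0 x‖ ≤ M0 := fun x => by
    rw [Real.norm_eq_abs]; exact cl_abs_le M0 hM0 _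
  have hg0eq : ∀ x ∈ Ω, g0 x = u0 x := fun x hx => by
    rw [hg0]; simp only []
    rw [← hgeq hx]
    exact cl_eq_self (hu0bdd x hx)
  set U0 : (Fin d → ℝ) →ᵇ ℝ :=
    BoundedContinuousFunction.ofNormedAddCommGroup g0 hg0cont M0 hg0bdd with hU0
  have hU0norm : ‖U0‖ ≤ M0 :=
    BoundedContinuousFunction.norm_ofNormedAddCommGroup_le hg0cont hM0 hg0bdd
  have hU0app : ∀ x, U0 x = g0 x := fun x => rfl
  -- constants
  set Kg : ℝ := 2 * BK * A + lam with hKgdef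
  have hKg0 : 0 ≤ Kg := by positivity
  set M : ℝ := gronwallBound M0 Kg (lam * M0) T with hM
  have hMM0 : M0 ≤ M := by
    have := gron_mono hM0 hKg0 (mul_nonneg hlam hM0) (le_refl (0:ℝ)) hT.le
    rwa [gronwallBound_x0] at this
  have hM0' : 0 ≤ M := hM0.trans hMM0
  set R : ℝ := 2 * M + 1 with hR
  have hR0 : 0 < R := by positivity
  set M2 : ℝ := M + 1 with hM2
  have hM20 : 0 ≤ M2 := by positivity
  set Lf : ℝ := BK + (LK : ℝ) * R / h with hLf
  have hLf0 : 0 ≤ Lf := by positivity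
  set f : ℝ → ℝ := fun a => K (cl R a / h) * cl R a with hfdef
  have hfcont : Continuous f :=
    (hKlip.continuous.comp ((cl_continuous R).div_const h)).mul (cl_continuous R)
  have hfb1 : ∀ a, |f a| ≤ BK * |a| := fun a => by
    rw [hfdef]; simp only []
    rw [abs_mul]
    exact mul_le_mul (hKabs _) (cl_abs_le_abs R hR0.le a) (abs_nonneg _) hBK0
  have hfb2 : ∀ a, |f a| ≤ BK * R := fun a => by
    rw [hfdef]; simp only []
    rw [abs_mul]
    exact mul_le_mul (hKabs _) (cl_abs_le R hR0.le a) (abs_nonneg _) hBK0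
  have hflip : ∀ a b, |f a - f b| ≤ Lf * |a - b| := by
    intro a b
    have hpq : |cl R a - cl R b| ≤ |a - b| := cl_sub_le R a b
    have hq : |cl R b| ≤ R := cl_abs_le R hR0.le b
    have hKd : |K (cl R a / h) - K (cl R b / h)| ≤ (LK : ℝ) * (|cl R a - cl R b| / h) := by
      have := hKlip.dist_le_mul (cl R a / h) (cl R b / h)
      rw [Real.dist_eq, Real.dist_eq, div_sub_div_same, abs_div, abs_of_pos hh] at this
      exact this
    have hsplit : f a - f b
        = K (cl R a / h) * (cl R a - cl R b) + (K (cl R a / h) - K (cl R b / h)) * cl R b := by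
      rw [hfdef]; ring
    calc |f a - f b|
        ≤ |K (cl R a / h)| * |cl R a - cl R b|
            + |K (cl R a / h) - K (cl R b / h)| * |cl R b| := by
          rw [hsplit]
          refine (abs_add_le _ _).trans ?_
          rw [abs_mul, abs_mul]
      _ ≤ Lf * |a - b| := by
          have h1 : |K (cl R a / h)| * |cl R a - cl R b| ≤ BK * |a - b| :=
            mul_le_mul (hKabs _) hpq (abs_nonneg _) hBK0
          have hdiv : |cl R a - cl R b| / h ≤ |a - b| / h := by gcongr
          have h2 : |K (cl R a / h) - K (cl R b / h)| * |cl R b|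
              ≤ ((LK : ℝ) * (|a - b| / h)) * R := by
            refine mul_le_mul (hKd.trans ?_) hq (abs_nonneg _) (by positivity)
            have : (0:ℝ) ≤ (LK : ℝ) := LK.coe_nonneg
            nlinarith
          calc |K (cl R a / h)| * |cl R a - cl R b|
              + |K (cl R a / h) - K (cl R b / h)| * |cl R b|
              ≤ BK * |a - b| + ((LK : ℝ) * (|a - b| / h)) * R := add_le_add h1 h2
            _ = Lf * |a - b| := by rw [hLf]; ring
  -- integrability and integral estimates
  have hInt : ∀ (v : (Fin d → ℝ) →ᵇ ℝ) (c : ℝ),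
      IntegrableOn (fun z => f (v z - c)) Ω volume := by
    intro v c
    have hc : Continuous fun z => f (v z - c) :=
      hfcont.comp (v.continuous.sub continuous_const)
    refine (integrable_const (BK * R)).mono' hc.aestronglyMeasurable ?_
    exact Filter.Eventually.of_forall fun z => by
      rw [Real.norm_eq_abs]; exact hfb2 _
  have hkey : ∀ (v w : (Fin d → ℝ) →ᵇ ℝ) (c c' : ℝ),
      |(∫ z in Ω, f (v z - c)) - ∫ z in Ω, f (w z - c')|
        ≤ Lf * (dist v w + |c - c'|) * A := by
    intro v w c c'
    rw [← integral_sub (hInt v c) (hInt w c')]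
    rw [← Real.norm_eq_abs]
    refine norm_setIntegral_le_of_norm_le_const hΩfin ?_
    · intro z _
      rw [Real.norm_eq_abs]
      refine (hflip _ _).trans ?_
      have h1 : |v z - c - (w z - c')| ≤ |v z - w z| + |c - c'| := by
        have : v z - c - (w z - c') = (v z - w z) - (c - c') := by ring
        rw [this]; exact abs_sub _ _
      have h2 : |v z - w z| ≤ dist v w := by
        rw [← Real.dist_eq]; exact BoundedContinuousFunction.dist_coe_le_dist z
      have := dist_nonneg (x := v) (y := w)
      nlinarith [abs_nonneg (c - c')]
  have hJ1 : ∀ (v : (Fin d → ℝ) →ᵇ ℝ) (c : ℝ), |∫ z in Ω, f (v z - c)| ≤ BK * R * A := by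
    intro v c
    rw [← Real.norm_eq_abs]
    refine norm_setIntegral_le_of_norm_le_const hΩfin ?_
    · intro z _; rw [Real.norm_eq_abs]; exact hfb2 _
  have hJ2 : ∀ (v : (Fin d → ℝ) →ᵇ ℝ) (c : ℝ),
      |∫ z in Ω, f (v z - c)| ≤ BK * (‖v‖ + |c|) * A := by
    intro v c
    rw [← Real.norm_eq_abs]
    refine norm_setIntegral_le_of_norm_le_const hΩfin ?_
    · intro z _
      rw [Real.norm_eq_abs]
      refine (hfb1 _).trans ?_
      have h1 : |v z - c| ≤ |v z| + |c| := abs_sub _ _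
      have h2 : |v z| ≤ ‖v‖ := by
        rw [← Real.norm_eq_abs]; exact v.norm_coe_le_norm z
      nlinarith
  -- the vector field F
  set C0 : ℝ := BK * R * A + lam * (M0 + M2) with hC0
  have hC00 : 0 ≤ C0 := by positivity
  have hFfun_cont : ∀ v : (Fin d → ℝ) →ᵇ ℝ,
      Continuous (fun x => (∫ z in Ω, f (v z - v x)) + lam * (U0 x - cl M2 (v x))) := by
    intro v
    have hJc : LipschitzWith (Lf * A).toNNReal (fun c => ∫ z in Ω, f (v z - c)) := by
      refine LipschitzWith.of_dist_le_mul fun c c' => ?_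
      rw [Real.dist_eq, Real.dist_eq, Real.coe_toNNReal _ (mul_nonneg hLf0 hA0)]
      have := hkey v v c c'
      rw [dist_self] at this
      nlinarith
    exact ((hJc.continuous).comp v.continuous).add
      (continuous_const.mul (U0.continuous.sub ((cl_continuous M2).comp v.continuous)))
  have hFfun_bdd : ∀ (v : (Fin d → ℝ) →ᵇ ℝ) (x : Fin d → ℝ),
      ‖(∫ z in Ω, f (v z - v x)) + lam * (U0 x - cl M2 (v x))‖ ≤ C0 := by
    intro v x
    rw [Real.norm_eq_abs]
    have h1 := hJ1 v (v x)
    have h2 : |lam * (U0 x - cl M2 (v x))| ≤ lam * (M0 + M2) := by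
      rw [abs_mul, abs_of_nonneg hlam]
      refine mul_le_mul_of_nonneg_left ?_ hlam
      refine (abs_sub _ _).trans (add_le_add ?_ (cl_abs_le M2 hM20 _))
      rw [← Real.norm_eq_abs]; exact (U0.norm_coe_le_norm x).trans hU0norm
    calc |(∫ z in Ω, f (v z - v x)) + lam * (U0 x - cl M2 (v x))|
        ≤ |∫ z in Ω, f (v z - v x)| + |lam * (U0 x - cl M2 (v x))| := abs_add_le _ _
      _ ≤ C0 := by rw [hC0]; exact add_le_add h1 h2
  set F : ((Fin d → ℝ) →ᵇ ℝ) → ((Fin d → ℝ) →ᵇ ℝ) := fun v =>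
    BoundedContinuousFunction.ofNormedAddCommGroup _ (hFfun_cont v) C0 (hFfun_bdd v) with hF
  have hFapp : ∀ (v : (Fin d → ℝ) →ᵇ ℝ) (x : Fin d → ℝ),
      F v x = (∫ z in Ω, f (v z - v x)) + lam * (U0 x - cl M2 (v x)) := fun v x => rfl
  have hFnormC0 : ∀ v, ‖F v‖ ≤ C0 := fun v =>
    BoundedContinuousFunction.norm_ofNormedAddCommGroup_le _ hC00 _
  -- Lipschitz continuity of F
  set LF : ℝ := 2 * Lf * A + lam with hLF
  have hLF0 : 0 ≤ LF := by positivity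
  have hFlip : LipschitzWith LF.toNNReal F := by
    refine LipschitzWith.of_dist_le_mul fun v w => ?_
    rw [Real.coe_toNNReal _ hLF0]
    rw [BoundedContinuousFunction.dist_le (by positivity)]
    intro x
    rw [hFapp, hFapp, Real.dist_eq]
    have h1 := hkey v w (v x) (w x)
    have h2 : |v x - w x| ≤ dist v w := by
      rw [← Real.dist_eq]; exact BoundedContinuousFunction.dist_coe_le_dist x
    have h3 : |cl M2 (v x) - cl M2 (w x)| ≤ dist v w := (cl_sub_le _ _ _).trans h2
    have hsplit : ((∫ z in Ω, f (v z - v x)) + lam * (U0 x - cl M2 (v x)))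
        - ((∫ z in Ω, f (w z - w x)) + lam * (U0 x - cl M2 (w x)))
        = ((∫ z in Ω, f (v z - v x)) - (∫ z in Ω, f (w z - w x)))
          + lam * (cl M2 (w x) - cl M2 (v x)) := by ring
    rw [hsplit]
    refine (abs_add_le _ _).trans ?_
    have h4 : |lam * (cl M2 (w x) - cl M2 (v x))| ≤ lam * dist v w := by
      rw [abs_mul, abs_of_nonneg hlam, abs_sub_comm]
      exact mul_le_mul_of_nonneg_left h3 hlam
    have hd0 : (0:ℝ) ≤ dist v w := dist_nonneg
    rw [hLF]
    nlinarith [mul_nonneg hLf0 hA0, mul_le_mul_of_nonneg_left h2 (mul_nonneg hLf0 hA0)]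
  -- Picard-Lindelöf
  have hpl : IsPicardLindelof (fun _ x => F x) (tmin := 0) (tmax := T) ⟨0, ⟨le_refl _, hT.le⟩⟩ U0
      (C0 * T).toNNReal 0 C0.toNNReal LF.toNNReal :=
    { lipschitzOnWith := fun t _ => hFlip.lipschitzOnWith
      continuousOn := fun x _ => continuousOn_const
      norm_le := fun t _ x _ => by rw [Real.coe_toNNReal _ hC00]; exact hFnormC0 x
      mul_max_le := by
        rw [Real.coe_toNNReal _ hC00, Real.coe_toNNReal _ (mul_nonneg hC00 hT.le)]
        simp only [sub_zero, sub_self, NNReal.coe_zero, max_eq_left hT.le, le_refl] }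
  obtain ⟨α, hα0', hαd⟩ := hpl.exists_eq_forall_mem_Icc_hasDerivWithinAt₀
  have hα0 : α 0 = U0 := hα0'
  -- continuity of the solution and derivative within Ici
  have hαcont : ContinuousOn α (Icc 0 T) := fun t ht => (hαd t ht).continuousWithinAt
  have hαd' : ∀ t ∈ Ico (0:ℝ) T, HasDerivWithinAt α (F (α t)) (Ici t) t := fun t ht =>
    (hαd t (Ico_subset_Icc_self ht)).mono_of_mem_nhdsWithin (Icc_mem_nhdsGE_of_mem ht)
  -- Gronwall bound for the sup norm
  have hFnorm : ∀ v : (Fin d → ℝ) →ᵇ ℝ, ‖F v‖ ≤ Kg * ‖v‖ + lam * M0 := by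
    intro v
    rw [BoundedContinuousFunction.norm_le (by positivity)]
    intro x
    rw [hFapp, Real.norm_eq_abs]
    have h1 := hJ2 v (v x)
    have hvx : |v x| ≤ ‖v‖ := by rw [← Real.norm_eq_abs]; exact v.norm_coe_le_norm x
    have h2 : |lam * (U0 x - cl M2 (v x))| ≤ lam * (M0 + ‖v‖) := by
      rw [abs_mul, abs_of_nonneg hlam]
      refine mul_le_mul_of_nonneg_left ?_ hlam
      refine (abs_sub _ _).trans (add_le_add ?_ ((cl_abs_le_abs M2 hM20 _).trans hvx))
      rw [← Real.norm_eq_abs]; exact (U0.norm_coe_le_norm x).trans hU0norm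
    have h3 : |(∫ z in Ω, f (v z - v x)) + lam * (U0 x - cl M2 (v x))|
        ≤ |∫ z in Ω, f (v z - v x)| + |lam * (U0 x - cl M2 (v x))| := abs_add_le _ _
    have hv0 : (0:ℝ) ≤ ‖v‖ := norm_nonneg v
    rw [hKgdef]
    nlinarith [mul_nonneg hBK0 hA0, mul_le_mul_of_nonneg_left hvx (mul_nonneg hBK0 hA0)]
  have hgron := norm_le_gronwallBound_of_norm_deriv_right_le (δ := M0) (K := Kg) (ε := lam * M0) hαcont hαd'
    (by rw [hα0]; exact hU0norm) (fun t _ => hFnorm (α t))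
  have hαM : ∀ t ∈ Icc (0:ℝ) T, ‖α t‖ ≤ M := by
    intro t ht
    refine (hgron t ht).trans ?_
    rw [sub_zero, hM]
    exact gron_mono hM0 hKg0 (mul_nonneg hlam hM0) ht.1 ht.2
  have hαMx : ∀ t ∈ Icc (0:ℝ) T, ∀ x, |α t x| ≤ M := fun t ht x => by
    rw [← Real.norm_eq_abs]; exact ((α t).norm_coe_le_norm x).trans (hαM t ht)
  -- removal of the clamps on the solution
  have hFeq : ∀ t ∈ Icc (0:ℝ) T, ∀ x ∈ Ω, F (α t) x =
      (∫ y in Ω, K ((α t y - α t x) / h) * (α t y - α t x)) + lam * (u0 x - α t x) := by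
    intro t ht x hx
    have hint : ∀ z, f (α t z - α t x) = K ((α t z - α t x) / h) * (α t z - α t x) := by
      intro z
      have hz := hαMx t ht z
      have hx' := hαMx t ht x
      have habs : |α t z - α t x| ≤ R := by
        refine (abs_sub _ _).trans ?_
        rw [hR]; linarith
      rw [hfdef]
      simp only [cl_eq_self habs]
    have hcl : cl M2 (α t x) = α t x :=
      cl_eq_self ((hαMx t ht x).trans (by rw [hM2]; linarith))
    rw [hFapp]
    have hintg : (fun z => f (α t z - α t x))
        = fun z => K ((α t z - α t x) / h) * (α t z - α t x) := funext hint
    rw [hintg, hcl, hU0app, hg0eq x hx]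
  -- spatial Lipschitz constant
  set KL : ℝ := Lf * A + lam with hKL
  have hKL0 : 0 ≤ KL := by positivity
  set L' : ℝ := gronwallBound (L0:ℝ) KL (lam * (L0:ℝ)) T with hL'
  refine ⟨fun t x => α t x, ?_, ⟨M, L', ?_⟩, ?_⟩
  · -- initial condition
    intro x hx
    show α 0 x = u0 x
    rw [hα0, hU0app, hg0eq x hx]
  · -- uniform bound and spatial Lipschitz estimate
    intro t ht
    refine ⟨fun x _ => hαMx t ht x, ?_⟩
    intro x hx y hy
    have hxy : |u0 x - u0 y| ≤ (L0:ℝ) * dist x y := by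
      have := hu0lip.dist_le_mul x hx y hy
      rwa [Real.dist_eq] at this
    set φ : ℝ → ℝ := fun τ => α τ x - α τ y with hφ
    have hφd : ∀ τ ∈ Icc (0:ℝ) T,
        HasDerivWithinAt φ (F (α τ) x - F (α τ) y) (Icc 0 T) τ := by
      intro τ hτ
      exact (((BoundedContinuousFunction.evalCLM ℝ x).hasFDerivAt).comp_hasDerivWithinAt τ
          (hαd τ hτ)).sub
        (((BoundedContinuousFunction.evalCLM ℝ y).hasFDerivAt).comp_hasDerivWithinAt τ
          (hαd τ hτ))
    have hφcont : ContinuousOn φ (Icc 0 T) := fun τ hτ => (hφd τ hτ).continuousWithinAt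
    have hφd' : ∀ τ ∈ Ico (0:ℝ) T,
        HasDerivWithinAt φ (F (α τ) x - F (α τ) y) (Ici τ) τ := fun τ hτ =>
      (hφd τ (Ico_subset_Icc_self hτ)).mono_of_mem_nhdsWithin (Icc_mem_nhdsGE_of_mem hτ)
    have hφ0 : ‖φ 0‖ ≤ (L0:ℝ) * dist x y := by
      show ‖α 0 x - α 0 y‖ ≤ _
      rw [hα0, Real.norm_eq_abs, hU0app, hU0app, hg0eq x hx, hg0eq y hy]
      exact hxy
    have hbd : ∀ τ ∈ Ico (0:ℝ) T,
        ‖F (α τ) x - F (α τ) y‖ ≤ KL * ‖φ τ‖ + lam * ((L0:ℝ) * dist x y) := by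
      intro τ hτ
      rw [Real.norm_eq_abs, Real.norm_eq_abs]
      have h1 := hkey (α τ) (α τ) (α τ x) (α τ y)
      rw [dist_self] at h1
      have h3 : |cl M2 (α τ x) - cl M2 (α τ y)| ≤ |α τ x - α τ y| := cl_sub_le _ _ _
      have hU0xy : |U0 x - U0 y| ≤ (L0:ℝ) * dist x y := by
        rw [hU0app, hU0app, hg0eq x hx, hg0eq y hy]; exact hxy
      have hsplit : F (α τ) x - F (α τ) y
          = ((∫ z in Ω, f (α τ z - α τ x)) - (∫ z in Ω, f (α τ z - α τ y)))
            + lam * ((U0 x - U0 y) - (cl M2 (α τ x) - cl M2 (α τ y))) := by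
        rw [hFapp, hFapp]; ring
      rw [hsplit]
      refine (abs_add_le _ _).trans ?_
      have h4 : |lam * ((U0 x - U0 y) - (cl M2 (α τ x) - cl M2 (α τ y)))|
          ≤ lam * ((L0:ℝ) * dist x y + |α τ x - α τ y|) := by
        rw [abs_mul, abs_of_nonneg hlam]
        refine mul_le_mul_of_nonneg_left ((abs_sub _ _).trans (add_le_add hU0xy h3)) hlam
      have h5 : (0:ℝ) ≤ |α τ x - α τ y| := abs_nonneg _
      rw [hKL]
      nlinarith [mul_nonneg hLf0 hA0]
    have hφgron := norm_le_gronwallBound_of_norm_deriv_right_le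
      (δ := (L0:ℝ) * dist x y) (K := KL) (ε := lam * ((L0:ℝ) * dist x y))
      hφcont hφd' hφ0 hbd
    have hres := hφgron t ht
    rw [sub_zero] at hres
    have hrw : gronwallBound ((L0:ℝ) * dist x y) KL (lam * ((L0:ℝ) * dist x y)) t
        = dist x y * gronwallBound (L0:ℝ) KL (lam * (L0:ℝ)) t := by
      rw [show (L0:ℝ) * dist x y = dist x y * (L0:ℝ) by ring,
        show lam * (dist x y * (L0:ℝ)) = dist x y * (lam * (L0:ℝ)) by ring,
        gron_homog]
    rw [hrw] at hres
    have hmono : gronwallBound (L0:ℝ) KL (lam * (L0:ℝ)) t ≤ L' :=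
      gron_mono L0.coe_nonneg hKL0 (mul_nonneg hlam L0.coe_nonneg) ht.1 ht.2
    have : ‖φ t‖ ≤ dist x y * L' :=
      hres.trans (mul_le_mul_of_nonneg_left hmono dist_nonneg)
    rw [Real.norm_eq_abs] at this
    show |α t x - α t y| ≤ L' * dist x y
    rw [mul_comm]
    exact this
  · -- the differential equation
    intro x hx t ht
    have H := ((BoundedContinuousFunction.evalCLM ℝ x).hasFDerivAt).comp_hasDerivWithinAt t
      (hαd t ht)
    show HasDerivWithinAt (fun τ => α τ x)
      ((∫ y in Ω, K ((α t y - α t x) / h) * (α t y - α t x)) + lam * (u0 x - α t x))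
      (Icc 0 T) t
    rw [← hFeq t ht x hx]
    exact H
end

section
/- Uniqueness for problem P(Ω,u0): if u1 and u2 are two solutions of problem P(Ω,u0) on [0,T] with the same initial datum u0, then u1(t,x) = u2(t,x) for all t ∈ [0,T] and almost every x ∈ Ω. -/
open MeasureTheory Set

open Filter

/-- Comparison lemma: if `f 0 = 0` and `|f' s| ≤ c * s^n` on `[0,T]`,
then `|f s| ≤ c * s^(n+1) / (n+1)`. -/
lemma aux_deriv_pow_bound {f f' : ℝ → ℝ} {T c : ℝ} (n : ℕ)
    (hf0 : f 0 = 0)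
    (hderiv : ∀ s ∈ Icc (0:ℝ) T, HasDerivWithinAt f (f' s) (Icc 0 T) s)
    (hbound : ∀ s ∈ Icc (0:ℝ) T, |f' s| ≤ c * s ^ n) :
    ∀ s ∈ Icc (0:ℝ) T, |f s| ≤ c * s ^ (n + 1) / (n + 1) := by
  have hfc : ContinuousOn f (Icc 0 T) := fun s hs => (hderiv s hs).continuousWithinAt
  have hf' : ∀ s ∈ Ico (0:ℝ) T, HasDerivWithinAt f (f' s) (Ici s) s := by
    intro s hs
    exact (hderiv s (Ico_subset_Icc_self hs)).mono_of_mem_nhdsWithin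
      (Icc_mem_nhdsGE_of_mem ⟨hs.1, hs.2⟩)
  have hB : ∀ s : ℝ, HasDerivAt (fun s => c * s ^ (n + 1) / (n + 1)) (c * s ^ n) s := by
    intro s
    have h1 : HasDerivAt (fun s : ℝ => s ^ (n + 1)) ((n + 1 : ℕ) * s ^ n) s := by
      simpa using hasDerivAt_pow (n + 1) s
    have h2 := h1.const_mul (c / (n + 1 : ℝ))
    have hne : ((n : ℝ) + 1) ≠ 0 := by positivity
    have heq : (fun s : ℝ => c * s ^ (n + 1) / (n + 1)) = fun y => c / ((n : ℝ) + 1) * y ^ (n + 1) := by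
      funext y; field_simp
    rw [heq]
    convert h2 using 1
    · rfl
    · rfl
    push_cast
    field_simp
  have key := image_norm_le_of_norm_deriv_right_le_deriv_boundary hfc hf'
    (B := fun s => c * s ^ (n + 1) / (n + 1)) (B' := fun s => c * s ^ n)
    (by simp [Real.norm_eq_abs, hf0]) hB
    (fun s hs => by
      rw [Real.norm_eq_abs]; exact hbound s (Ico_subset_Icc_self hs))
  intro s hs
  simpa [Real.norm_eq_abs] using key hs

/-- `u : [0,T]×Ω → ℝ` is a solution of problem P(Ω,u0): `u(t,·)` is measurable and
bounded uniformly in `t ∈ [0,T]`, `u(0,·) = u0` on `Ω`, and for every `(t,x)` the map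
`t ↦ u(t,x)` is differentiable with
`∂_t u(t,x) = ∫_Ω K_h(u(t,y)−u(t,x))(u(t,y)−u(t,x)) dy + λ(u0(x)−u(t,x))`. -/
def IsSolution (d : ℕ) (Ω : Set (Fin d → ℝ)) (K : ℝ → ℝ) (h lam T : ℝ)
    (u0 : (Fin d → ℝ) → ℝ) (u : ℝ → (Fin d → ℝ) → ℝ) : Prop :=
  (∀ t ∈ Set.Icc (0:ℝ) T, Measurable (u t)) ∧
  (∃ M : ℝ, ∀ t ∈ Set.Icc (0:ℝ) T, ∀ x ∈ Ω, |u t x| ≤ M) ∧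
  (∀ x ∈ Ω, u 0 x = u0 x) ∧
  (∀ t ∈ Set.Icc (0:ℝ) T, ∀ x ∈ Ω,
    HasDerivWithinAt (fun τ => u τ x)
      ((∫ y in Ω, K ((u t y - u t x) / h) * (u t y - u t x)) + lam * (u0 x - u t x))
      (Set.Icc 0 T) t)


/-- Uniqueness for problem P(Ω,u0): two solutions with the same initial datum
coincide for all `t ∈ [0,T]` and almost every `x ∈ Ω`. -/
theorem stmt_1
    (d : ℕ) (hd : 1 ≤ d)
    (Ω : Set (Fin d → ℝ)) (hΩopen : IsOpen Ω) (hΩbdd : Bornology.IsBounded Ω)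
    (K : ℝ → ℝ) (hKnonneg : ∀ ξ, 0 ≤ K ξ) (BK : ℝ) (hKbdd : ∀ ξ, K ξ ≤ BK)
    (LK : NNReal) (hKlip : LipschitzWith LK K)
    (h : ℝ) (hh : 0 < h) (lam : ℝ) (hlam : 0 ≤ lam) (T : ℝ) (hT : 0 < T)
    (u0 : (Fin d → ℝ) → ℝ) (u1 u2 : ℝ → (Fin d → ℝ) → ℝ)
    (hu1 : IsSolution d Ω K h lam T u0 u1)
    (hu2 : IsSolution d Ω K h lam T u0 u2) :
    ∀ t ∈ Icc (0:ℝ) T, ∀ᵐ x ∂(volume.restrict Ω), u1 t x = u2 t x := by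
  obtain ⟨hm1, ⟨M1, hM1⟩, hi1, hd1⟩ := hu1
  obtain ⟨hm2, ⟨M2, hM2⟩, hi2, hd2⟩ := hu2
  rcases Set.eq_empty_or_nonempty Ω with hΩe | ⟨x0, hx0⟩
  · intro t ht
    simp [hΩe]
  have hΩmeas : MeasurableSet Ω := hΩopen.measurableSet
  have hvol : volume Ω < ⊤ := hΩbdd.measure_lt_top
  set volΩ : ℝ := (volume Ω).toReal with hvolΩdef
  have hvolΩ0 : 0 ≤ volΩ := ENNReal.toReal_nonneg
  have h0T : (0:ℝ) ∈ Icc (0:ℝ) T := ⟨le_refl 0, hT.le⟩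
  set Mb := max M1 M2 with hMbdef
  have hMb1 : ∀ t ∈ Icc (0:ℝ) T, ∀ x ∈ Ω, |u1 t x| ≤ Mb :=
    fun t ht x hx => (hM1 t ht x hx).trans (le_max_left _ _)
  have hMb2 : ∀ t ∈ Icc (0:ℝ) T, ∀ x ∈ Ω, |u2 t x| ≤ Mb :=
    fun t ht x hx => (hM2 t ht x hx).trans (le_max_right _ _)
  have hMbnn : 0 ≤ Mb := le_trans (abs_nonneg _) (hMb1 0 h0T x0 hx0)
  set A := 2 * Mb with hAdef
  have hAnn : 0 ≤ A := by positivity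
  have hBK : 0 ≤ BK := le_trans (hKnonneg 0) (hKbdd 0)
  set C0 := BK + (LK : ℝ) / h * (2 * Mb) with hC0def
  have hC0nn : 0 ≤ C0 := by positivity
  set L := 2 * volΩ * C0 + lam with hLdef
  have hLnn : 0 ≤ L := by positivity
  -- pointwise Lipschitz-type estimate on the nonlinearity
  have hker : ∀ a b : ℝ, |b| ≤ 2 * Mb →
      |K (a / h) * a - K (b / h) * b| ≤ C0 * |a - b| := by
    intro a b hb
    have e : K (a / h) * a - K (b / h) * b
        = K (a / h) * (a - b) + (K (a / h) - K (b / h)) * b := by ring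
    have hK1 : |K (a / h)| ≤ BK := by
      rw [abs_of_nonneg (hKnonneg _)]; exact hKbdd _
    have hK2 : |K (a / h) - K (b / h)| ≤ (LK : ℝ) * (|a - b| / h) := by
      have := hKlip.dist_le_mul (a / h) (b / h)
      rw [Real.dist_eq, Real.dist_eq] at this
      have e2 : a / h - b / h = (a - b) / h := by ring
      rw [e2, abs_div, abs_of_pos hh] at this
      exact this
    calc |K (a / h) * a - K (b / h) * b|
        = |K (a / h) * (a - b) + (K (a / h) - K (b / h)) * b| := by rw [e]
      _ ≤ |K (a / h) * (a - b)| + |(K (a / h) - K (b / h)) * b| := abs_add_le _ _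
      _ = |K (a / h)| * |a - b| + |K (a / h) - K (b / h)| * |b| := by
          rw [abs_mul, abs_mul]
      _ ≤ BK * |a - b| + ((LK : ℝ) * (|a - b| / h)) * (2 * Mb) := by
          gcongr
      _ = C0 * |a - b| := by rw [hC0def]; field_simp
  -- integrability of the nonlinear term
  have hint : ∀ (v : (Fin d → ℝ) → ℝ), Measurable v →
      (∀ x ∈ Ω, |v x| ≤ Mb) → ∀ c : ℝ, |c| ≤ Mb →
      IntegrableOn (fun y => K ((v y - c) / h) * (v y - c)) Ω volume := by
    intro v hv hvb c hc
    apply Measure.integrableOn_of_bounded (M := BK * (2 * Mb)) hvol.ne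
    · exact ((hKlip.continuous.measurable.comp
        ((hv.sub_const c).div_const h)).mul (hv.sub_const c)).aestronglyMeasurable
    · filter_upwards [ae_restrict_mem hΩmeas] with y hy
      rw [Real.norm_eq_abs, abs_mul]
      have h1 : |K ((v y - c) / h)| ≤ BK := by
        rw [abs_of_nonneg (hKnonneg _)]; exact hKbdd _
      have h2 : |v y - c| ≤ 2 * Mb := by
        calc |v y - c| ≤ |v y| + |c| := abs_sub _ _
          _ ≤ Mb + Mb := add_le_add (hvb y hy) hc
          _ = 2 * Mb := by ring
      exact mul_le_mul h1 h2 (abs_nonneg _) hBK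
  -- main induction
  have key : ∀ n : ℕ, ∀ s ∈ Icc (0:ℝ) T, ∀ z ∈ Ω,
      |u1 s z - u2 s z| ≤ A * L ^ n * s ^ n / n.factorial := by
    intro n
    induction n with
    | zero =>
      intro s hs z hz
      simp only [pow_zero, Nat.factorial_zero, Nat.cast_one, mul_one, div_one]
      calc |u1 s z - u2 s z| ≤ |u1 s z| + |u2 s z| := abs_sub _ _
        _ ≤ Mb + Mb := add_le_add (hMb1 s hs z hz) (hMb2 s hs z hz)
        _ = A := by rw [hAdef]; ring
    | succ n ih =>
      intro s hs z hz
      set c := L * A * L ^ n / n.factorial with hcdef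
      have hf0 : u1 0 z - u2 0 z = 0 := by rw [hi1 z hz, hi2 z hz]; ring
      have hder : ∀ σ ∈ Icc (0:ℝ) T,
          HasDerivWithinAt (fun τ => u1 τ z - u2 τ z)
            (((∫ y in Ω, K ((u1 σ y - u1 σ z) / h) * (u1 σ y - u1 σ z))
                + lam * (u0 z - u1 σ z))
              - ((∫ y in Ω, K ((u2 σ y - u2 σ z) / h) * (u2 σ y - u2 σ z))
                + lam * (u0 z - u2 σ z))) (Icc 0 T) σ :=
        fun σ hσ => (hd1 σ hσ z hz).sub (hd2 σ hσ z hz)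
      have hbnd : ∀ σ ∈ Icc (0:ℝ) T,
          |((∫ y in Ω, K ((u1 σ y - u1 σ z) / h) * (u1 σ y - u1 σ z))
              + lam * (u0 z - u1 σ z))
            - ((∫ y in Ω, K ((u2 σ y - u2 σ z) / h) * (u2 σ y - u2 σ z))
              + lam * (u0 z - u2 σ z))| ≤ c * σ ^ n := by
        intro σ hσ
        set b := A * L ^ n * σ ^ n / n.factorial with hbdef
        have hbnn : 0 ≤ b := by
          have : (0:ℝ) ≤ σ ^ n := pow_nonneg hσ.1 n
          positivity
        have hI1 := hint (u1 σ) (hm1 σ hσ) (hMb1 σ hσ) (u1 σ z) (hMb1 σ hσ z hz)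
        have hI2 := hint (u2 σ) (hm2 σ hσ) (hMb2 σ hσ) (u2 σ z) (hMb2 σ hσ z hz)
        have hsub : (∫ y in Ω, K ((u1 σ y - u1 σ z) / h) * (u1 σ y - u1 σ z))
            - (∫ y in Ω, K ((u2 σ y - u2 σ z) / h) * (u2 σ y - u2 σ z))
            = ∫ y in Ω, (K ((u1 σ y - u1 σ z) / h) * (u1 σ y - u1 σ z)
                - K ((u2 σ y - u2 σ z) / h) * (u2 σ y - u2 σ z)) :=
          (integral_sub hI1 hI2).symm
        have hIbound : |(∫ y in Ω, K ((u1 σ y - u1 σ z) / h) * (u1 σ y - u1 σ z))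
            - (∫ y in Ω, K ((u2 σ y - u2 σ z) / h) * (u2 σ y - u2 σ z))|
            ≤ (2 * C0 * b) * volΩ := by
          rw [hsub, ← Real.norm_eq_abs]
          apply norm_setIntegral_le_of_norm_le_const hvol
          · intro y hy
            rw [Real.norm_eq_abs]
            have h2b : |u2 σ y - u2 σ z| ≤ 2 * Mb := by
              calc |u2 σ y - u2 σ z| ≤ |u2 σ y| + |u2 σ z| := abs_sub _ _
                _ ≤ Mb + Mb := add_le_add (hMb2 σ hσ y hy) (hMb2 σ hσ z hz)
                _ = 2 * Mb := by ring
            calc |K ((u1 σ y - u1 σ z) / h) * (u1 σ y - u1 σ z)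
                - K ((u2 σ y - u2 σ z) / h) * (u2 σ y - u2 σ z)|
                ≤ C0 * |(u1 σ y - u1 σ z) - (u2 σ y - u2 σ z)| := hker _ _ h2b
              _ ≤ C0 * (|u1 σ y - u2 σ y| + |u1 σ z - u2 σ z|) := by
                  gcongr
                  have e : (u1 σ y - u1 σ z) - (u2 σ y - u2 σ z)
                      = (u1 σ y - u2 σ y) - (u1 σ z - u2 σ z) := by ring
                  rw [e]
                  exact abs_sub _ _
              _ ≤ C0 * (b + b) := by
                  gcongr
                  · exact ih σ hσ y hy
                  · exact ih σ hσ z hz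
              _ = 2 * C0 * b := by ring
        have hlamb : lam * |u1 σ z - u2 σ z| ≤ lam * b :=
          mul_le_mul_of_nonneg_left (ih σ hσ z hz) hlam
        calc |((∫ y in Ω, K ((u1 σ y - u1 σ z) / h) * (u1 σ y - u1 σ z))
              + lam * (u0 z - u1 σ z))
            - ((∫ y in Ω, K ((u2 σ y - u2 σ z) / h) * (u2 σ y - u2 σ z))
              + lam * (u0 z - u2 σ z))|
            = |((∫ y in Ω, K ((u1 σ y - u1 σ z) / h) * (u1 σ y - u1 σ z))
              - (∫ y in Ω, K ((u2 σ y - u2 σ z) / h) * (u2 σ y - u2 σ z)))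
              + (-(lam * (u1 σ z - u2 σ z)))| := by congr 1; ring
          _ ≤ |(∫ y in Ω, K ((u1 σ y - u1 σ z) / h) * (u1 σ y - u1 σ z))
              - (∫ y in Ω, K ((u2 σ y - u2 σ z) / h) * (u2 σ y - u2 σ z))|
              + |(-(lam * (u1 σ z - u2 σ z)))| := abs_add_le _ _
          _ ≤ (2 * C0 * b) * volΩ + lam * |u1 σ z - u2 σ z| := by
              rw [abs_neg, abs_mul, abs_of_nonneg hlam]
              exact add_le_add hIbound le_rfl
          _ ≤ (2 * C0 * b) * volΩ + lam * b := by gcongr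
          _ = L * b := by rw [hLdef]; ring
          _ = c * σ ^ n := by rw [hcdef, hbdef]; ring
      have := aux_deriv_pow_bound n hf0 hder hbnd s hs
      have hfac : ((n + 1 : ℕ).factorial : ℝ) = (n + 1 : ℝ) * (n.factorial : ℝ) := by
        rw [Nat.factorial_succ]; push_cast; ring
      calc |u1 s z - u2 s z| ≤ c * s ^ (n + 1) / (n + 1) := this
        _ = A * L ^ (n + 1) * s ^ (n + 1) / ((n + 1 : ℕ).factorial) := by
            rw [hcdef, hfac]
            have hn1 : ((n : ℝ) + 1) ≠ 0 := by positivity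
            have hnf : ((n.factorial : ℝ)) ≠ 0 := by
              exact_mod_cast Nat.factorial_ne_zero n
            push_cast
            field_simp
            ring
  -- conclusion
  intro t ht
  filter_upwards [ae_restrict_mem hΩmeas] with x hx
  have habs : ∀ n : ℕ, |u1 t x - u2 t x| ≤ A * (L * T) ^ n / n.factorial := by
    intro n
    refine (key n t ht x hx).trans ?_
    have h1 : A * L ^ n * t ^ n = A * (L * t) ^ n := by rw [mul_pow]; ring
    rw [h1]
    have h2 : (L * t) ^ n ≤ (L * T) ^ n := by
      apply pow_le_pow_left₀ (mul_nonneg hLnn ht.1)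
      exact mul_le_mul_of_nonneg_left ht.2 hLnn
    gcongr
  have hlim : Tendsto (fun n : ℕ => A * (L * T) ^ n / n.factorial) atTop (nhds 0) := by
    have h0 := FloorSemiring.tendsto_pow_div_factorial_atTop (K := ℝ) (L * T)
    have := h0.const_mul A
    simpa [mul_div_assoc] using this
  have hle : |u1 t x - u2 t x| ≤ 0 := ge_of_tendsto' hlim habs
  have := abs_nonpos_iff.mp hle
  linarith [this]
end

section
/- L² stability with respect to the initial datum: let u1, u2 be solutions of problems P(Ω,u01) and P(Ω,u02) respectively, both bounded by a constant M on [0,T]×Ω. Then there exists a constant C > 0, depending only on T, λ, |Ω|, h, M and on the bound and Lipschitz constant of K, such that for every t ∈ [0,T], ‖u1(t,·) − u2(t,·)‖_{L²(Ω)} ≤ C ‖u01 − u02‖_{L²(Ω)}. -/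
open MeasureTheory Set Filter Topology
open scoped ENNReal NNReal


lemma gronwallBound_le_aux {δ K ε x : ℝ} (hδ : 0 ≤ δ) (hK : 0 ≤ K) (hε : 0 ≤ ε) (hx : 0 ≤ x) :
    gronwallBound δ K ε x ≤ (δ + ε * x) * Real.exp (K * x) := by
  rcases eq_or_ne K 0 with hK0 | hK0
  · subst hK0
    rw [gronwallBound_K0]
    show δ + ε * x ≤ (δ + ε * x) * Real.exp (0 * x)
    rw [zero_mul, Real.exp_zero, mul_one]
  · have hKpos : 0 < K := lt_of_le_of_ne hK (Ne.symm hK0)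
    rw [gronwallBound_of_K_ne_0 hK0]
    have h1 : Real.exp (K * x) - 1 ≤ K * x * Real.exp (K * x) := by
      have h2 := Real.add_one_le_exp (-(K * x))
      have h3 : Real.exp (-(K * x)) = (Real.exp (K * x))⁻¹ := Real.exp_neg _
      have h4 : (0:ℝ) < Real.exp (K * x) := Real.exp_pos _
      rw [h3] at h2
      have h5 : (1 - K * x) * Real.exp (K * x) ≤ 1 := by
        rw [sub_mul, one_mul]
        have := (mul_le_mul_of_nonneg_right h2 h4.le)
        rw [inv_mul_cancel₀ h4.ne', add_mul, neg_mul] at this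
        linarith
      nlinarith
    have h6 : ε / K * (Real.exp (K * x) - 1) ≤ ε * x * Real.exp (K * x) := by
      have := mul_le_mul_of_nonneg_left h1 (div_nonneg hε hK)
      calc ε / K * (Real.exp (K * x) - 1) ≤ ε / K * (K * x * Real.exp (K * x)) := this
        _ = ε * x * Real.exp (K * x) := by field_simp
    have h7 : δ * Real.exp (K * x) ≤ δ * Real.exp (K * x) := le_refl _
    nlinarith [Real.exp_pos (K * x)]

lemma toReal_eLpNorm_two {α : Type*} [MeasurableSpace α] {μ : Measure α} {f : α → ℝ}
    (hf : MemLp f 2 μ) :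
    (eLpNorm f 2 μ).toReal = Real.sqrt (∫ x, (f x) ^ 2 ∂μ) := by
  rw [hf.eLpNorm_eq_integral_rpow_norm two_ne_zero ENNReal.ofNat_ne_top]
  have h2 : (2 : ℝ≥0∞).toReal = (2:ℝ) := by simp
  have hpt : ∀ a, ‖f a‖ ^ ((2:ℝ≥0∞).toReal) = (f a) ^ 2 := by
    intro a
    rw [h2, show (2:ℝ) = ((2:ℕ):ℝ) by norm_num, Real.rpow_natCast, Real.norm_eq_abs, sq_abs]
  rw [ENNReal.toReal_ofReal (by positivity)]
  simp_rw [hpt]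
  rw [h2, Real.sqrt_eq_rpow]
  norm_num

lemma Fdiff_aux {K : ℝ → ℝ} {BK h M' : ℝ} {LK : NNReal} (hK0 : ∀ ξ, 0 ≤ K ξ) (hKb : ∀ ξ, K ξ ≤ BK)
    (hKlip : LipschitzWith LK K) (hh : 0 < h) (hM' : 0 ≤ M')
    {a b a' b' : ℝ} (ha : |a| ≤ M') (hb : |b| ≤ M') (ha' : |a'| ≤ M') (hb' : |b'| ≤ M') :
    |K ((a - b) / h) * (a - b) - K ((a' - b') / h) * (a' - b')| ≤
      (BK + 2 * M' * LK / h) * (|a - a'| + |b - b'|) := by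
  have hBK0 : 0 ≤ BK := le_trans (hK0 0) (hKb 0)
  have hKlip' : ∀ p q : ℝ, |K p - K q| ≤ LK * |p - q| := by
    intro p q
    have := hKlip.dist_le_mul p q
    rwa [Real.dist_eq, Real.dist_eq] at this
  set p := a - b with hp
  set q := a' - b' with hq
  have hpq : |p - q| ≤ |a - a'| + |b - b'| := by
    calc |p - q| = |(a - a') - (b - b')| := by rw [hp, hq]; ring_nf
      _ ≤ |a - a'| + |b - b'| := abs_sub _ _
  have hqb : |q| ≤ 2 * M' := by
    calc |q| ≤ |a'| + |b'| := abs_sub a' b'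
      _ ≤ 2 * M' := by linarith
  have key : K (p / h) * p - K (q / h) * q = K (p / h) * (p - q) + (K (p / h) - K (q / h)) * q := by
    ring
  rw [key]
  have h1 : |K (p / h) * (p - q)| ≤ BK * |p - q| := by
    rw [abs_mul, abs_of_nonneg (hK0 _)]
    exact mul_le_mul_of_nonneg_right (hKb _) (abs_nonneg _)
  have h2 : |(K (p / h) - K (q / h)) * q| ≤ LK / h * |p - q| * (2 * M') := by
    rw [abs_mul]
    have h3 : |K (p / h) - K (q / h)| ≤ LK / h * |p - q| := by
      have := hKlip' (p / h) (q / h)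
      have h4 : |p / h - q / h| = |p - q| / h := by
        rw [div_sub_div_same, abs_div, abs_of_pos hh]
      rw [h4] at this
      calc |K (p / h) - K (q / h)| ≤ LK * (|p - q| / h) := this
        _ = LK / h * |p - q| := by ring
    calc |K (p / h) - K (q / h)| * |q| ≤ (LK / h * |p - q|) * (2 * M') :=
          mul_le_mul h3 hqb (abs_nonneg _) (by positivity)
      _ = LK / h * |p - q| * (2 * M') := rfl
  have hLK0 : (0:ℝ) ≤ LK := LK.coe_nonneg
  calc |K (p / h) * (p - q) + (K (p / h) - K (q / h)) * q|
      ≤ |K (p / h) * (p - q)| + |(K (p / h) - K (q / h)) * q| := abs_add_le _ _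
    _ ≤ BK * |p - q| + LK / h * |p - q| * (2 * M') := add_le_add h1 h2
    _ = (BK + 2 * M' * LK / h) * |p - q| := by ring
    _ ≤ (BK + 2 * M' * LK / h) * (|a - a'| + |b - b'|) := by
        apply mul_le_mul_of_nonneg_left hpq
        positivity

set_option maxHeartbeats 1000000 in
/-- L² stability with respect to the initial datum: if `u1, u2` solve
P(Ω,u01), P(Ω,u02) and are bounded by `M` on `[0,T]×Ω`, then there is a constant
`C > 0` (depending only on `T, λ, |Ω|, h, M` and on the bound and Lipschitz constant
of `K`) such that `‖u1(t,·) − u2(t,·)‖_{L²(Ω)} ≤ C ‖u01 − u02‖_{L²(Ω)}` for all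
`t ∈ [0,T]`. -/
theorem stmt_2
    (d : ℕ) (hd : 1 ≤ d)
    (Ω : Set (Fin d → ℝ)) (hΩopen : IsOpen Ω) (hΩbdd : Bornology.IsBounded Ω)
    (K : ℝ → ℝ) (hKnonneg : ∀ ξ, 0 ≤ K ξ) (BK : ℝ) (hKbdd : ∀ ξ, K ξ ≤ BK)
    (LK : NNReal) (hKlip : LipschitzWith LK K)
    (h : ℝ) (hh : 0 < h) (lam : ℝ) (hlam : 0 ≤ lam) (T : ℝ) (hT : 0 < T)
    (u01 u02 : (Fin d → ℝ) → ℝ)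
    (hu01m : Measurable u01) (hu02m : Measurable u02)
    (M01 : ℝ) (hu01b : ∀ x ∈ Ω, |u01 x| ≤ M01)
    (M02 : ℝ) (hu02b : ∀ x ∈ Ω, |u02 x| ≤ M02)
    (u1 u2 : ℝ → (Fin d → ℝ) → ℝ)
    (hu1 : IsSolution d Ω K h lam T u01 u1)
    (hu2 : IsSolution d Ω K h lam T u02 u2)
    (M : ℝ)
    (hu1M : ∀ t ∈ Icc (0:ℝ) T, ∀ x ∈ Ω, |u1 t x| ≤ M)
    (hu2M : ∀ t ∈ Icc (0:ℝ) T, ∀ x ∈ Ω, |u2 t x| ≤ M) :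
    ∃ C > (0:ℝ), ∀ t ∈ Icc (0:ℝ) T,
      Real.sqrt (∫ x in Ω, (u1 t x - u2 t x) ^ 2) ≤
        C * Real.sqrt (∫ x in Ω, (u01 x - u02 x) ^ 2) := by
  obtain ⟨h1meas, -, h1init, h1deriv⟩ := hu1
  obtain ⟨h2meas, -, h2init, h2deriv⟩ := hu2
  have hΩm : MeasurableSet Ω := hΩopen.measurableSet
  set μ : Measure (Fin d → ℝ) := volume.restrict Ω with hμdef
  have hVfin : volume Ω < ⊤ := hΩbdd.measure_lt_top
  haveI hfin : IsFiniteMeasure μ := ⟨by rw [hμdef, Measure.restrict_apply_univ]; exact hVfin⟩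
  have hae : ∀ᵐ x ∂μ, x ∈ Ω := ae_restrict_mem hΩm
  set V : ℝ := (volume Ω).toReal with hVdef
  have hV0 : 0 ≤ V := ENNReal.toReal_nonneg
  have hμuniv : μ.real univ = V := by rw [measureReal_def, hμdef, Measure.restrict_apply_univ]
  have h0T : (0:ℝ) ∈ Icc (0:ℝ) T := ⟨le_refl 0, hT.le⟩
  set M' : ℝ := max M 0 with hM'def
  have hM'0 : 0 ≤ M' := le_max_right _ _
  have hb1 : ∀ t ∈ Icc (0:ℝ) T, ∀ x ∈ Ω, |u1 t x| ≤ M' :=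
    fun t ht x hx => le_trans (hu1M t ht x hx) (le_max_left _ _)
  have hb2 : ∀ t ∈ Icc (0:ℝ) T, ∀ x ∈ Ω, |u2 t x| ≤ M' :=
    fun t ht x hx => le_trans (hu2M t ht x hx) (le_max_left _ _)
  set M0 : ℝ := max (max M01 M02) 0 with hM0def
  have hM00 : 0 ≤ M0 := le_max_right _ _
  have hb01 : ∀ x ∈ Ω, |u01 x| ≤ M0 :=
    fun x hx => le_trans (hu01b x hx) (le_trans (le_max_left _ _) (le_max_left _ _))
  have hb02 : ∀ x ∈ Ω, |u02 x| ≤ M0 :=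
    fun x hx => le_trans (hu02b x hx) (le_trans (le_max_right _ _) (le_max_left _ _))
  have hBK0 : 0 ≤ BK := le_trans (hKnonneg 0) (hKbdd 0)
  set L : ℝ := BK + 2 * M' * LK / h with hLdef
  have hL0 : 0 ≤ L := by positivity
  set c : ℝ := 2 * L * V + lam with hcdef
  have hc0 : 0 ≤ c := by positivity
  set W : ℝ := 2 * (BK * (2 * M') * V + lam * (M0 + M')) with hWdef
  have hW0 : 0 ≤ W := by positivity
  set w : ℝ → (Fin d → ℝ) → ℝ := fun t x => u1 t x - u2 t x with hwdef
  set w0 : (Fin d → ℝ) → ℝ := fun x => u01 x - u02 x with hw0def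
  set g0 : ℝ → (Fin d → ℝ) → ℝ := fun t x =>
    ((∫ y in Ω, K ((u1 t y - u1 t x) / h) * (u1 t y - u1 t x)) + lam * (u01 x - u1 t x)) -
    ((∫ y in Ω, K ((u2 t y - u2 t x) / h) * (u2 t y - u2 t x)) + lam * (u02 x - u2 t x))
    with hg0def
  -- basic measurability / boundedness
  have hwmeas : ∀ t ∈ Icc (0:ℝ) T, Measurable (w t) :=
    fun t ht => (h1meas t ht).sub (h2meas t ht)
  have hwbdd : ∀ t ∈ Icc (0:ℝ) T, ∀ x ∈ Ω, |w t x| ≤ 2 * M' := by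
    intro t ht x hx
    calc |u1 t x - u2 t x| ≤ |u1 t x| + |u2 t x| := abs_sub _ _
      _ ≤ 2 * M' := by have := hb1 t ht x hx; have := hb2 t ht x hx; linarith
  have hw0meas : Measurable w0 := hu01m.sub hu02m
  have hw0bdd : ∀ x ∈ Ω, |w0 x| ≤ 2 * M0 := by
    intro x hx
    calc |u01 x - u02 x| ≤ |u01 x| + |u02 x| := abs_sub _ _
      _ ≤ 2 * M0 := by have := hb01 x hx; have := hb02 x hx; linarith
  have hwderiv : ∀ t ∈ Icc (0:ℝ) T, ∀ x ∈ Ω,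
      HasDerivWithinAt (fun τ => w τ x) (g0 t x) (Icc 0 T) t :=
    fun t ht x hx => (h1deriv t ht x hx).sub (h2deriv t ht x hx)
  -- integrability of the kernel terms
  have hintF : ∀ (v : (Fin d → ℝ) → ℝ), Measurable v → (∀ y ∈ Ω, |v y| ≤ M') →
      ∀ cx : ℝ, Integrable (fun y => K ((v y - cx) / h) * (v y - cx)) μ := by
    intro v hv hvb cx
    have hmeas : Measurable (fun y => K ((v y - cx) / h) * (v y - cx)) :=
      ((hKlip.continuous.measurable).comp ((hv.sub measurable_const).div_const h)).mul
        (hv.sub measurable_const)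
    refine Integrable.mono' (integrable_const (BK * (M' + |cx|))) hmeas.aestronglyMeasurable ?_
    filter_upwards [hae] with y hy
    rw [Real.norm_eq_abs, abs_mul, abs_of_nonneg (hKnonneg _)]
    have h1 : |v y - cx| ≤ M' + |cx| := by
      calc |v y - cx| ≤ |v y| + |cx| := abs_sub _ _
        _ ≤ M' + |cx| := by have := hvb y hy; linarith
    exact mul_le_mul (hKbdd _) h1 (abs_nonneg _) hBK0
  -- measurability of g0
  have hImeas : ∀ (v : (Fin d → ℝ) → ℝ), Measurable v →
      Measurable (fun x => ∫ y in Ω, K ((v y - v x) / h) * (v y - v x)) := by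
    intro v hv
    have hj : StronglyMeasurable (fun p : (Fin d → ℝ) × (Fin d → ℝ) =>
        K ((v p.2 - v p.1) / h) * (v p.2 - v p.1)) := by
      apply Measurable.stronglyMeasurable
      exact ((hKlip.continuous.measurable).comp
        ((((hv.comp measurable_snd).sub (hv.comp measurable_fst)).div_const h))).mul
        ((hv.comp measurable_snd).sub (hv.comp measurable_fst))
    exact hj.integral_prod_right'.measurable
  have hg0meas : ∀ t ∈ Icc (0:ℝ) T, Measurable (g0 t) := by
    intro t ht
    apply Measurable.sub
    · exact (hImeas (u1 t) (h1meas t ht)).add ((hu01m.sub (h1meas t ht)).const_mul lam)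
    · exact (hImeas (u2 t) (h2meas t ht)).add ((hu02m.sub (h2meas t ht)).const_mul lam)
  -- uniform bound on g0
  have hIbdd : ∀ (v : (Fin d → ℝ) → ℝ), (∀ y ∈ Ω, |v y| ≤ M') →
      ∀ x ∈ Ω, |∫ y in Ω, K ((v y - v x) / h) * (v y - v x)| ≤ BK * (2 * M') * V := by
    intro v hvb x hx
    have hb : ∀ᵐ y ∂μ, ‖K ((v y - v x) / h) * (v y - v x)‖ ≤ BK * (2 * M') := by
      filter_upwards [hae] with y hy
      rw [Real.norm_eq_abs, abs_mul, abs_of_nonneg (hKnonneg _)]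
      have h1 : |v y - v x| ≤ 2 * M' := by
        calc |v y - v x| ≤ |v y| + |v x| := abs_sub _ _
          _ ≤ 2 * M' := by have := hvb y hy; have := hvb x hx; linarith
      exact mul_le_mul (hKbdd _) h1 (abs_nonneg _) hBK0
    have := norm_integral_le_of_norm_le_const (μ := μ) hb
    rwa [Real.norm_eq_abs, hμuniv] at this
  have hg0bdd : ∀ t ∈ Icc (0:ℝ) T, ∀ x ∈ Ω, |g0 t x| ≤ W := by
    intro t ht x hx
    have hI1 := hIbdd (u1 t) (hb1 t ht) x hx
    have hI2 := hIbdd (u2 t) (hb2 t ht) x hx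
    have hl1 : |lam * (u01 x - u1 t x)| ≤ lam * (M0 + M') := by
      rw [abs_mul, abs_of_nonneg hlam]
      refine mul_le_mul_of_nonneg_left ?_ hlam
      calc |u01 x - u1 t x| ≤ |u01 x| + |u1 t x| := abs_sub _ _
        _ ≤ M0 + M' := add_le_add (hb01 x hx) (hb1 t ht x hx)
    have hl2 : |lam * (u02 x - u2 t x)| ≤ lam * (M0 + M') := by
      rw [abs_mul, abs_of_nonneg hlam]
      refine mul_le_mul_of_nonneg_left ?_ hlam
      calc |u02 x - u2 t x| ≤ |u02 x| + |u2 t x| := abs_sub _ _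
        _ ≤ M0 + M' := add_le_add (hb02 x hx) (hb2 t ht x hx)
    simp only [hg0def]
    calc |(∫ y in Ω, K ((u1 t y - u1 t x) / h) * (u1 t y - u1 t x)) + lam * (u01 x - u1 t x) -
          ((∫ y in Ω, K ((u2 t y - u2 t x) / h) * (u2 t y - u2 t x)) + lam * (u02 x - u2 t x))|
        ≤ |(∫ y in Ω, K ((u1 t y - u1 t x) / h) * (u1 t y - u1 t x)) + lam * (u01 x - u1 t x)| +
          |(∫ y in Ω, K ((u2 t y - u2 t x) / h) * (u2 t y - u2 t x)) + lam * (u02 x - u2 t x)| :=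
          abs_sub _ _
      _ ≤ (|∫ y in Ω, K ((u1 t y - u1 t x) / h) * (u1 t y - u1 t x)| + |lam * (u01 x - u1 t x)|) +
          (|∫ y in Ω, K ((u2 t y - u2 t x) / h) * (u2 t y - u2 t x)| + |lam * (u02 x - u2 t x)|) :=
          add_le_add (abs_add_le _ _) (abs_add_le _ _)
      _ ≤ W := by rw [hWdef]; linarith
  -- MemLp facts
  have hmemw : ∀ t ∈ Icc (0:ℝ) T, MemLp (w t) 2 μ := by
    intro t ht
    refine MemLp.of_bound (hwmeas t ht).aestronglyMeasurable (2 * M') ?_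
    filter_upwards [hae] with x hx
    rw [Real.norm_eq_abs]; exact hwbdd t ht x hx
  have hmemw0 : MemLp w0 2 μ := by
    refine MemLp.of_bound hw0meas.aestronglyMeasurable (2 * M0) ?_
    filter_upwards [hae] with x hx
    rw [Real.norm_eq_abs]; exact hw0bdd x hx
  have hmemg : ∀ t ∈ Icc (0:ℝ) T, MemLp (g0 t) 2 μ := by
    intro t ht
    refine MemLp.of_bound (hg0meas t ht).aestronglyMeasurable W ?_
    filter_upwards [hae] with x hx
    rw [Real.norm_eq_abs]; exact hg0bdd t ht x hx
  set N0 : ℝ := (eLpNorm w0 2 μ).toReal with hN0def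
  have hN0 : N0 = Real.sqrt (∫ x in Ω, (u01 x - u02 x) ^ 2) := by
    rw [hN0def, toReal_eLpNorm_two hmemw0]
  have hN0nn : 0 ≤ N0 := ENNReal.toReal_nonneg
  -- MVT bound
  have hMVT : ∀ x ∈ Ω, ∀ s ∈ Icc (0:ℝ) T, ∀ r ∈ Icc (0:ℝ) T,
      |w s x - w r x| ≤ W * |s - r| := by
    intro x hx s hs r hr
    have := (convex_Icc (0:ℝ) T).norm_image_sub_le_of_norm_hasDerivWithin_le
      (f := fun τ => w τ x) (f' := fun τ => g0 τ x) (C := W)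
      (fun τ hτ => hwderiv τ hτ x hx)
      (fun τ hτ => by rw [Real.norm_eq_abs]; exact hg0bdd τ hτ x hx) hr hs
    rwa [Real.norm_eq_abs, Real.norm_eq_abs] at this
  -- Hölder: L¹ norm controlled by L² norm
  have hAt : ∀ t ∈ Icc (0:ℝ) T,
      (∫ y, |w t y| ∂μ) ≤ Real.sqrt (∫ x, (w t x) ^ 2 ∂μ) * Real.sqrt V := by
    intro t ht
    have hconj : (2:ℝ).HolderConjugate 2 := Real.HolderConjugate.two_two
    have hof : ENNReal.ofReal (2:ℝ) = 2 := by
      rw [show (2:ℝ) = ((2:ℕ):ℝ) by norm_num, ENNReal.ofReal_natCast]; norm_num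
    have hmabs : MemLp (fun y => |w t y|) (ENNReal.ofReal 2) μ := by
      rw [hof]; exact (hmemw t ht).norm
    have hm1 : MemLp (fun _ : (Fin d → ℝ) => (1:ℝ)) (ENNReal.ofReal 2) μ := by
      rw [hof]; exact memLp_const 1
    have hH := integral_mul_le_Lp_mul_Lq_of_nonneg hconj
      (ae_of_all _ fun y => abs_nonneg (w t y)) (ae_of_all _ fun _ => zero_le_one) hmabs hm1
    have e1 : ∀ a : ℝ, |a| ^ (2:ℝ) = a ^ 2 := by
      intro a
      rw [show (2:ℝ) = ((2:ℕ):ℝ) by norm_num, Real.rpow_natCast, sq_abs]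
    simp only [mul_one, e1, Real.one_rpow] at hH
    rw [integral_const, smul_eq_mul, mul_one, hμuniv] at hH
    rw [Real.sqrt_eq_rpow, Real.sqrt_eq_rpow]
    exact hH
  -- the key derivative norm bound
  have hN0' : N0 = Real.sqrt (∫ x, (w0 x) ^ 2 ∂μ) := by
    rw [hN0def, toReal_eLpNorm_two hmemw0]
  have hgbound : ∀ t ∈ Icc (0:ℝ) T,
      (eLpNorm (g0 t) 2 μ).toReal ≤ c * (eLpNorm (w t) 2 μ).toReal + lam * N0 := by
    intro t ht
    set At : ℝ := ∫ y, |w t y| ∂μ with hAtdef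
    have hAt0 : 0 ≤ At := integral_nonneg fun y => abs_nonneg _
    have hwint : Integrable (fun y => |w t y|) μ := ((hmemw t ht).integrable one_le_two).abs
    -- pointwise bound on g0
    have hpt : ∀ x ∈ Ω, |g0 t x| ≤ L * At + ((L * V + lam) * |w t x| + lam * |w0 x|) := by
      intro x hx
      have hFint1 := hintF (u1 t) (h1meas t ht) (hb1 t ht) (u1 t x)
      have hFint2 := hintF (u2 t) (h2meas t ht) (hb2 t ht) (u2 t x)
      have hsub : (∫ y in Ω, K ((u1 t y - u1 t x) / h) * (u1 t y - u1 t x)) -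
          (∫ y in Ω, K ((u2 t y - u2 t x) / h) * (u2 t y - u2 t x)) =
          ∫ y, (K ((u1 t y - u1 t x) / h) * (u1 t y - u1 t x) -
            K ((u2 t y - u2 t x) / h) * (u2 t y - u2 t x)) ∂μ :=
        (integral_sub hFint1 hFint2).symm
      have hptws : ∀ᵐ y ∂μ, |K ((u1 t y - u1 t x) / h) * (u1 t y - u1 t x) -
          K ((u2 t y - u2 t x) / h) * (u2 t y - u2 t x)| ≤ L * (|w t y| + |w t x|) := by
        filter_upwards [hae] with y hy
        have := Fdiff_aux hKnonneg hKbdd hKlip hh hM'0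
          (hb1 t ht y hy) (hb1 t ht x hx) (hb2 t ht y hy) (hb2 t ht x hx)
        rwa [hLdef]
      have habs : |∫ y, (K ((u1 t y - u1 t x) / h) * (u1 t y - u1 t x) -
          K ((u2 t y - u2 t x) / h) * (u2 t y - u2 t x)) ∂μ| ≤
          ∫ y, |K ((u1 t y - u1 t x) / h) * (u1 t y - u1 t x) -
            K ((u2 t y - u2 t x) / h) * (u2 t y - u2 t x)| ∂μ := by
        simpa only [Real.norm_eq_abs] using norm_integral_le_integral_norm (μ := μ)
          (fun y => K ((u1 t y - u1 t x) / h) * (u1 t y - u1 t x) -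
            K ((u2 t y - u2 t x) / h) * (u2 t y - u2 t x))
      have hmono : (∫ y, |K ((u1 t y - u1 t x) / h) * (u1 t y - u1 t x) -
          K ((u2 t y - u2 t x) / h) * (u2 t y - u2 t x)| ∂μ) ≤
          ∫ y, L * (|w t y| + |w t x|) ∂μ := by
        refine integral_mono_ae (hFint1.sub hFint2).abs ?_ hptws
        exact ((hwint.add (integrable_const _)).const_mul L)
      have hcalc : (∫ y, L * (|w t y| + |w t x|) ∂μ) = L * At + L * V * |w t x| := by
        rw [integral_const_mul, integral_add hwint (integrable_const _), integral_const,
          smul_eq_mul, hμuniv, hAtdef]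
        ring
      have hl : |lam * (u01 x - u1 t x) - lam * (u02 x - u2 t x)| ≤
          lam * |w0 x| + lam * |w t x| := by
        have : lam * (u01 x - u1 t x) - lam * (u02 x - u2 t x) =
            lam * (w0 x) - lam * (w t x) := by rw [hw0def, hwdef]; ring
        rw [this]
        calc |lam * w0 x - lam * w t x| ≤ |lam * w0 x| + |lam * w t x| := abs_sub _ _
          _ = lam * |w0 x| + lam * |w t x| := by
              rw [abs_mul, abs_mul, abs_of_nonneg hlam]
      have hsplit : |g0 t x| ≤ |(∫ y in Ω, K ((u1 t y - u1 t x) / h) * (u1 t y - u1 t x)) -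
          (∫ y in Ω, K ((u2 t y - u2 t x) / h) * (u2 t y - u2 t x))| +
          |lam * (u01 x - u1 t x) - lam * (u02 x - u2 t x)| := by
        simp only [hg0def]
        have : (∫ y in Ω, K ((u1 t y - u1 t x) / h) * (u1 t y - u1 t x)) +
            lam * (u01 x - u1 t x) -
            ((∫ y in Ω, K ((u2 t y - u2 t x) / h) * (u2 t y - u2 t x)) +
            lam * (u02 x - u2 t x)) =
            ((∫ y in Ω, K ((u1 t y - u1 t x) / h) * (u1 t y - u1 t x)) -
            (∫ y in Ω, K ((u2 t y - u2 t x) / h) * (u2 t y - u2 t x))) +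
            (lam * (u01 x - u1 t x) - lam * (u02 x - u2 t x)) := by ring
        rw [this]
        exact abs_add_le _ _
      rw [hsub] at hsplit
      have := le_trans hsplit (add_le_add (le_trans habs (le_trans hmono hcalc.le)) hl)
      linarith
    -- eLpNorm estimate
    have haesm2 : AEStronglyMeasurable (fun x => (L * V + lam) * |w t x|) μ :=
      (((hwmeas t ht).abs.const_mul _)).aestronglyMeasurable
    have haesm3 : AEStronglyMeasurable (fun x => lam * |w0 x|) μ :=
      ((hw0meas.abs.const_mul _)).aestronglyMeasurable
    have hmono2 : eLpNorm (g0 t) 2 μ ≤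
        eLpNorm (fun x => L * At + ((L * V + lam) * |w t x| + lam * |w0 x|)) 2 μ := by
      apply eLpNorm_mono_ae
      filter_upwards [hae] with x hx
      rw [Real.norm_eq_abs, Real.norm_eq_abs]
      exact le_trans (hpt x hx) (le_abs_self _)
    have hsplit2 : (fun x => L * At + ((L * V + lam) * |w t x| + lam * |w0 x|)) =
        (fun _ : (Fin d → ℝ) => L * At) +
          ((fun x => (L * V + lam) * |w t x|) + (fun x => lam * |w0 x|)) := rfl
    have hadd : eLpNorm (fun x => L * At + ((L * V + lam) * |w t x| + lam * |w0 x|)) 2 μ ≤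
        eLpNorm (fun _ : (Fin d → ℝ) => L * At) 2 μ +
          (eLpNorm (fun x => (L * V + lam) * |w t x|) 2 μ +
           eLpNorm (fun x => lam * |w0 x|) 2 μ) := by
      rw [hsplit2]
      refine le_trans (eLpNorm_add_le aestronglyMeasurable_const (haesm2.add haesm3)
        one_le_two) ?_
      exact add_le_add_right (eLpNorm_add_le haesm2 haesm3 one_le_two) _
    -- MemLp of the three pieces
    have hm1 : MemLp (fun _ : (Fin d → ℝ) => L * At) 2 μ := memLp_const _
    have hm2 : MemLp (fun x => (L * V + lam) * |w t x|) 2 μ := ((hmemw t ht).norm).const_mul _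
    have hm3 : MemLp (fun x => lam * |w0 x|) 2 μ := (hmemw0.norm).const_mul _
    -- toReal computations
    have ht1 : (eLpNorm (fun _ : (Fin d → ℝ) => L * At) 2 μ).toReal = Real.sqrt V * (L * At) := by
      rw [toReal_eLpNorm_two hm1, integral_const, smul_eq_mul, hμuniv,
        Real.sqrt_mul hV0, Real.sqrt_sq (by positivity)]
    have ht2 : (eLpNorm (fun x => (L * V + lam) * |w t x|) 2 μ).toReal =
        (L * V + lam) * Real.sqrt (∫ x, (w t x) ^ 2 ∂μ) := by
      rw [toReal_eLpNorm_two hm2]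
      have : ∀ x, ((L * V + lam) * |w t x|) ^ 2 = (L * V + lam) ^ 2 * (w t x) ^ 2 := by
        intro x; rw [mul_pow, sq_abs]
      simp_rw [this]
      rw [integral_const_mul, Real.sqrt_mul (sq_nonneg _), Real.sqrt_sq (by positivity)]
    have ht3 : (eLpNorm (fun x => lam * |w0 x|) 2 μ).toReal = lam * N0 := by
      rw [toReal_eLpNorm_two hm3]
      have : ∀ x, (lam * |w0 x|) ^ 2 = lam ^ 2 * (w0 x) ^ 2 := by
        intro x; rw [mul_pow, sq_abs]
      simp_rw [this]
      rw [integral_const_mul, Real.sqrt_mul (sq_nonneg _), Real.sqrt_sq hlam, hN0']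
    have htw : (eLpNorm (w t) 2 μ).toReal = Real.sqrt (∫ x, (w t x) ^ 2 ∂μ) :=
      toReal_eLpNorm_two (hmemw t ht)
    have hfin3 : eLpNorm (fun x => (L * V + lam) * |w t x|) 2 μ +
        eLpNorm (fun x => lam * |w0 x|) 2 μ ≠ ⊤ :=
      (ENNReal.add_lt_top.mpr ⟨hm2.2, hm3.2⟩).ne
    have hletoReal : (eLpNorm (g0 t) 2 μ).toReal ≤
        (eLpNorm (fun _ : (Fin d → ℝ) => L * At) 2 μ).toReal +
          ((eLpNorm (fun x => (L * V + lam) * |w t x|) 2 μ).toReal +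
           (eLpNorm (fun x => lam * |w0 x|) 2 μ).toReal) := by
      have := ENNReal.toReal_mono ((ENNReal.add_lt_top.mpr ⟨hm1.2, ENNReal.add_lt_top.mpr
        ⟨hm2.2, hm3.2⟩⟩).ne) (le_trans hmono2 hadd)
      rwa [ENNReal.toReal_add hm1.2.ne hfin3, ENNReal.toReal_add hm2.2.ne hm3.2.ne] at this
    rw [ht1, ht2, ht3] at hletoReal
    -- use Hölder bound on At
    have hAtle := hAt t ht
    have hfinal : Real.sqrt V * (L * At) ≤ L * V * Real.sqrt (∫ x, (w t x) ^ 2 ∂μ) := by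
      have h1 : Real.sqrt V * (L * At) ≤ Real.sqrt V *
          (L * (Real.sqrt (∫ x, (w t x) ^ 2 ∂μ) * Real.sqrt V)) := by
        refine mul_le_mul_of_nonneg_left (mul_le_mul_of_nonneg_left hAtle hL0)
          (Real.sqrt_nonneg _)
      calc Real.sqrt V * (L * At) ≤ Real.sqrt V *
            (L * (Real.sqrt (∫ x, (w t x) ^ 2 ∂μ) * Real.sqrt V)) := h1
        _ = L * (Real.sqrt V * Real.sqrt V) * Real.sqrt (∫ x, (w t x) ^ 2 ∂μ) := by ring
        _ = L * V * Real.sqrt (∫ x, (w t x) ^ 2 ∂μ) := by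
            rw [Real.mul_self_sqrt hV0]
    rw [hcdef, htw]
    linarith
  -- Lp-valued path
  set f : ℝ → Lp ℝ 2 μ := fun t => if ht : t ∈ Icc (0:ℝ) T then (hmemw t ht).toLp (w t) else 0
    with hfdef
  set g : ℝ → Lp ℝ 2 μ := fun t => if ht : t ∈ Icc (0:ℝ) T then (hmemg t ht).toLp (g0 t) else 0
    with hgdef
  have hfval : ∀ t (ht : t ∈ Icc (0:ℝ) T), f t = (hmemw t ht).toLp (w t) := by
    intro t ht; rw [hfdef]; simp only [dif_pos ht]
  have hgval : ∀ t (ht : t ∈ Icc (0:ℝ) T), g t = (hmemg t ht).toLp (g0 t) := by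
    intro t ht; rw [hgdef]; simp only [dif_pos ht]
  have hfnorm : ∀ t (ht : t ∈ Icc (0:ℝ) T),
      ‖f t‖ = Real.sqrt (∫ x in Ω, (u1 t x - u2 t x) ^ 2) := by
    intro t ht
    rw [hfval t ht, Lp.norm_toLp, toReal_eLpNorm_two (hmemw t ht)]
  -- differentiability of the Lp-valued path
  have hfd : ∀ t ∈ Icc (0:ℝ) T, HasDerivWithinAt f (g t) (Icc 0 T) t := by
    intro t ht
    rw [hasDerivWithinAt_iff_tendsto_slope]
    set l := 𝓝[Icc (0:ℝ) T \ {t}] t with hldef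
    have hmem_ev : ∀ᶠ s in l, s ∈ Icc (0:ℝ) T \ {t} := eventually_mem_nhdsWithin
    set q : ℝ → (Fin d → ℝ) → ℝ := fun s x => (s - t)⁻¹ * (w s x - w t x) - g0 t x with hqdef
    have hqbdd : ∀ s, s ∈ Icc (0:ℝ) T \ {t} → ∀ x ∈ Ω, |q s x| ≤ 2 * W := by
      intro s hs x hx
      obtain ⟨hs1, hs2⟩ := hs
      have hst : s ≠ t := fun hh => hs2 (by simp [hh])
      have habs : |s - t| ≠ 0 := abs_ne_zero.mpr (sub_ne_zero.mpr hst)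
      have h1 : |(s - t)⁻¹ * (w s x - w t x)| ≤ W := by
        rw [abs_mul, abs_inv]
        have h2 := hMVT x hx s hs1 t ht
        calc |s - t|⁻¹ * |w s x - w t x| ≤ |s - t|⁻¹ * (W * |s - t|) :=
            mul_le_mul_of_nonneg_left h2 (inv_nonneg.mpr (abs_nonneg _))
          _ = W := by
            rw [mul_comm W, ← mul_assoc, inv_mul_cancel₀ habs, one_mul]
      calc |q s x| ≤ |(s - t)⁻¹ * (w s x - w t x)| + |g0 t x| := abs_sub _ _
        _ ≤ W + W := add_le_add h1 (hg0bdd t ht x hx)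
        _ = 2 * W := by ring
    have hqmeas : ∀ s, s ∈ Icc (0:ℝ) T \ {t} → Measurable (q s) := by
      intro s hs
      exact (((hwmeas s hs.1).sub (hwmeas t ht)).const_mul _).sub (hg0meas t ht)
    have hqmem : ∀ s (hs : s ∈ Icc (0:ℝ) T \ {t}), MemLp (q s) 2 μ := by
      intro s hs
      refine MemLp.of_bound (hqmeas s hs).aestronglyMeasurable (2 * W) ?_
      filter_upwards [hae] with x hx
      rw [Real.norm_eq_abs]
      exact hqbdd s hs x hx
    have hkey : ∀ᶠ s in l, dist (slope f t s) (g t) = Real.sqrt (∫ x, (q s x) ^ 2 ∂μ) := by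
      filter_upwards [hmem_ev] with s hs
      have hs1 := hs.1
      have hco : ((slope f t s - g t : Lp ℝ 2 μ) : (Fin d → ℝ) → ℝ) =ᵐ[μ] q s := by
        have e1 : slope f t s = (s - t)⁻¹ • (f s - f t) := rfl
        rw [e1, hfval s hs1, hfval t ht, hgval t ht]
        filter_upwards [Lp.coeFn_sub ((s - t)⁻¹ • ((hmemw s hs1).toLp (w s) -
            (hmemw t ht).toLp (w t))) ((hmemg t ht).toLp (g0 t)),
          Lp.coeFn_smul ((s - t)⁻¹) ((hmemw s hs1).toLp (w s) - (hmemw t ht).toLp (w t)),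
          Lp.coeFn_sub ((hmemw s hs1).toLp (w s)) ((hmemw t ht).toLp (w t)),
          (hmemw s hs1).coeFn_toLp, (hmemw t ht).coeFn_toLp, (hmemg t ht).coeFn_toLp]
          with x h1 h2 h3 h4 h5 h6
        rw [hqdef]
        simp only [Pi.sub_apply, Pi.smul_apply, smul_eq_mul] at h1 h2 h3 ⊢
        rw [h1, h2, h3, h4, h5, h6]
      rw [dist_eq_norm, Lp.norm_def, eLpNorm_congr_ae hco, toReal_eLpNorm_two (hqmem s hs)]
    have hint0 : Tendsto (fun s => ∫ x, (q s x) ^ 2 ∂μ) l (𝓝 (∫ x, (0:ℝ) ∂μ)) := by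
      apply tendsto_integral_filter_of_dominated_convergence
        (bound := fun _ => (2 * W) ^ 2)
      · filter_upwards [hmem_ev] with s hs
        exact ((hqmeas s hs).pow_const 2).aestronglyMeasurable
      · filter_upwards [hmem_ev] with s hs
        filter_upwards [hae] with x hx
        rw [Real.norm_eq_abs, abs_of_nonneg (sq_nonneg _), ← sq_abs]
        exact pow_le_pow_left₀ (abs_nonneg _) (hqbdd s hs x hx) 2
      · exact integrable_const _
      · filter_upwards [hae] with x hx
        have hslope := hasDerivWithinAt_iff_tendsto_slope.mp (hwderiv t ht x hx)
        have h2 := hslope.sub (tendsto_const_nhds (x := g0 t x))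
        rw [sub_self] at h2
        have h3 : Tendsto (fun s => q s x) l (𝓝 0) := h2
        simpa using h3.pow 2
    have hsqrt : Tendsto (fun s => Real.sqrt (∫ x, (q s x) ^ 2 ∂μ)) l (𝓝 0) := by
      rw [integral_zero] at hint0
      have := (Real.continuous_sqrt.tendsto 0).comp hint0
      simpa [Function.comp_def] using this
    refine tendsto_iff_dist_tendsto_zero.mpr ?_
    exact Filter.Tendsto.congr' (by filter_upwards [hkey] with s hs; exact hs.symm) hsqrt
  -- Grönwall
  have hcont : ContinuousOn f (Icc 0 T) := fun t ht => (hfd t ht).continuousWithinAt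
  have hf'Ici : ∀ t ∈ Ico (0:ℝ) T, HasDerivWithinAt f (g t) (Ici t) t := by
    intro t ht
    exact (hfd t (Ico_subset_Icc_self ht)).mono_of_mem_nhdsWithin (Icc_mem_nhdsGE_of_mem ht)
  have hnorm0 : ‖f 0‖ ≤ N0 := by
    rw [hfval 0 h0T, Lp.norm_toLp]
    have : eLpNorm (w 0) 2 μ = eLpNorm w0 2 μ := by
      apply eLpNorm_congr_ae
      filter_upwards [hae] with x hx
      rw [hwdef, hw0def]
      simp only [h1init x hx, h2init x hx]
    rw [this]
  have hgb' : ∀ t ∈ Ico (0:ℝ) T, ‖g t‖ ≤ c * ‖f t‖ + lam * N0 := by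
    intro t ht
    have ht' := Ico_subset_Icc_self ht
    rw [hgval t ht', hfval t ht', Lp.norm_toLp, Lp.norm_toLp]
    exact hgbound t ht'
  have happ := norm_le_gronwallBound_of_norm_deriv_right_le hcont hf'Ici hnorm0 hgb'
  refine ⟨(1 + lam * T) * Real.exp (c * T), by positivity, ?_⟩
  intro t ht
  have h1 : ‖f t‖ ≤ gronwallBound N0 c (lam * N0) (t - 0) := happ t ht
  rw [sub_zero] at h1
  have h2 : gronwallBound N0 c (lam * N0) t ≤ (N0 + lam * N0 * t) * Real.exp (c * t) :=
    gronwallBound_le_aux hN0nn hc0 (by positivity) ht.1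
  have h3 : (N0 + lam * N0 * t) * Real.exp (c * t) ≤ ((1 + lam * T) * Real.exp (c * T)) * N0 := by
    have he : Real.exp (c * t) ≤ Real.exp (c * T) :=
      Real.exp_le_exp.mpr (mul_le_mul_of_nonneg_left ht.2 hc0)
    have hN' : N0 + lam * N0 * t ≤ N0 + lam * N0 * T :=
      add_le_add_right (mul_le_mul_of_nonneg_left ht.2 (mul_nonneg hlam hN0nn)) _
    calc (N0 + lam * N0 * t) * Real.exp (c * t)
        ≤ (N0 + lam * N0 * T) * Real.exp (c * T) :=
          mul_le_mul hN' he (Real.exp_pos _).le (by positivity)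
      _ = ((1 + lam * T) * Real.exp (c * T)) * N0 := by ring
  rw [hfnorm t ht] at h1
  rw [← hN0]
  linarith
end

section
/- Time invariance of the level set structure: let u be a solution of problem P(Ω,u0) on [0,T], and suppose x1, x2 ∈ Ω are such that u0(x1) = u0(x2) and the equation of problem P(Ω,u0) holds at x1 and at x2 for all t. Then u(t,x1) = u(t,x2) for all t ∈ [0,T]. -/
open MeasureTheory Set

/-- Lipschitz-type estimate for `s ↦ K(s/h)·s` on bounded sets. -/
lemma aux_lip (K : ℝ → ℝ) (hKnonneg : ∀ ξ, 0 ≤ K ξ) (BK : ℝ) (hKbdd : ∀ ξ, K ξ ≤ BK)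
    (LK : NNReal) (hKlip : LipschitzWith LK K) (h : ℝ) (hh : 0 < h) (s1 s2 : ℝ) :
    |K (s1 / h) * s1 - K (s2 / h) * s2| ≤ (BK + (LK : ℝ) * |s2| / h) * |s1 - s2| := by
  have hA : K (s1 / h) * s1 - K (s2 / h) * s2
      = K (s1 / h) * (s1 - s2) + (K (s1 / h) - K (s2 / h)) * s2 := by ring
  rw [hA]
  have h1 : |K (s1 / h) * (s1 - s2)| ≤ BK * |s1 - s2| := by
    rw [abs_mul]
    apply mul_le_mul_of_nonneg_right _ (abs_nonneg _)
    rw [abs_of_nonneg (hKnonneg _)]; exact hKbdd _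
  have h2 : |(K (s1 / h) - K (s2 / h)) * s2| ≤ ((LK : ℝ) * |s2| / h) * |s1 - s2| := by
    have hl := hKlip.dist_le_mul (s1 / h) (s2 / h)
    rw [Real.dist_eq, Real.dist_eq] at hl
    have h3 : |s1 / h - s2 / h| = |s1 - s2| / h := by
      rw [div_sub_div_same, abs_div, abs_of_pos hh]
    rw [h3] at hl
    rw [abs_mul]
    calc |K (s1 / h) - K (s2 / h)| * |s2| ≤ ((LK : ℝ) * (|s1 - s2| / h)) * |s2| :=
          mul_le_mul_of_nonneg_right hl (abs_nonneg _)
      _ = ((LK : ℝ) * |s2| / h) * |s1 - s2| := by ring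
  calc |K (s1 / h) * (s1 - s2) + (K (s1 / h) - K (s2 / h)) * s2|
      ≤ |K (s1 / h) * (s1 - s2)| + |(K (s1 / h) - K (s2 / h)) * s2| := abs_add_le _ _
    _ ≤ BK * |s1 - s2| + ((LK : ℝ) * |s2| / h) * |s1 - s2| := add_le_add h1 h2
    _ = (BK + (LK : ℝ) * |s2| / h) * |s1 - s2| := by ring

/-- Time invariance of the level set structure: if `u` solves P(Ω,u0) and
`u0(x1) = u0(x2)` for points `x1, x2 ∈ Ω` (where the equation holds for all `t`),
then `u(t,x1) = u(t,x2)` for all `t ∈ [0,T]`. -/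
theorem stmt_3
    (d : ℕ) (hd : 1 ≤ d)
    (Ω : Set (Fin d → ℝ)) (hΩopen : IsOpen Ω) (hΩbdd : Bornology.IsBounded Ω)
    (K : ℝ → ℝ) (hKnonneg : ∀ ξ, 0 ≤ K ξ) (BK : ℝ) (hKbdd : ∀ ξ, K ξ ≤ BK)
    (LK : NNReal) (hKlip : LipschitzWith LK K)
    (h : ℝ) (hh : 0 < h) (lam : ℝ) (hlam : 0 ≤ lam) (T : ℝ) (hT : 0 < T)
    (u0 : (Fin d → ℝ) → ℝ) (hu0m : Measurable u0) (M0 : ℝ) (hu0b : ∀ x ∈ Ω, |u0 x| ≤ M0)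
    (u : ℝ → (Fin d → ℝ) → ℝ)
    (hu : IsSolution d Ω K h lam T u0 u)
    (x1 x2 : Fin d → ℝ) (hx1 : x1 ∈ Ω) (hx2 : x2 ∈ Ω)
    (heq0 : u0 x1 = u0 x2) :
    ∀ t ∈ Icc (0:ℝ) T, u t x1 = u t x2 := by
  obtain ⟨hmeas, ⟨M, hM⟩, hinit, hderiv⟩ := hu
  have hΩmeas : MeasurableSet Ω := hΩopen.measurableSet
  have hΩfin : volume Ω < ⊤ := hΩbdd.measure_lt_top
  -- the difference g
  set g : ℝ → ℝ := fun t => u t x1 - u t x2 with hg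
  have hM0 : 0 ≤ M := le_trans (abs_nonneg _) (hM 0 ⟨le_refl _, hT.le⟩ x1 hx1)
  set C : ℝ := (BK + (LK : ℝ) * (2 * M) / h) * (volume Ω).toReal + lam with hC
  -- derivative of g
  have hgderiv : ∀ t ∈ Icc (0:ℝ) T,
      HasDerivWithinAt g
        (((∫ y in Ω, K ((u t y - u t x1) / h) * (u t y - u t x1)) + lam * (u0 x1 - u t x1))
          - ((∫ y in Ω, K ((u t y - u t x2) / h) * (u t y - u t x2)) + lam * (u0 x2 - u t x2)))
        (Icc 0 T) t := fun t ht => (hderiv t ht x1 hx1).sub (hderiv t ht x2 hx2)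
  have hgcont : ContinuousOn g (Icc 0 T) :=
    fun t ht => (hgderiv t ht).continuousWithinAt
  -- the bound on the derivative
  have hbound : ∀ t ∈ Icc (0:ℝ) T,
      ‖((∫ y in Ω, K ((u t y - u t x1) / h) * (u t y - u t x1)) + lam * (u0 x1 - u t x1))
          - ((∫ y in Ω, K ((u t y - u t x2) / h) * (u t y - u t x2)) + lam * (u0 x2 - u t x2))‖
        ≤ C * ‖g t‖ := by
    intro t ht
    have hum : Measurable (u t) := hmeas t ht
    have hint : ∀ a : ℝ, IntegrableOn (fun y => K ((u t y - a) / h) * (u t y - a)) Ω := by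
      intro a
      have hm : Measurable (fun y => K ((u t y - a) / h) * (u t y - a)) :=
        ((hKlip.continuous.measurable.comp ((hum.sub measurable_const).div_const h)).mul
          (hum.sub measurable_const))
      refine Integrable.mono' (g := fun _ => BK * (M + |a|))
        (integrableOn_const hΩfin.ne) hm.aestronglyMeasurable ?_
      refine (ae_restrict_iff' hΩmeas).2 (Filter.Eventually.of_forall fun y hy => ?_)
      have hKle : |K ((u t y - a) / h)| ≤ BK := by
        rw [abs_of_nonneg (hKnonneg _)]; exact hKbdd _
      have : |u t y - a| ≤ M + |a| :=
        (abs_sub _ _).trans (by have := hM t ht y hy; linarith)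
      calc ‖K ((u t y - a) / h) * (u t y - a)‖ = |K ((u t y - a) / h)| * |u t y - a| :=
            abs_mul _ _
        _ ≤ BK * (M + |a|) := by
            apply mul_le_mul hKle this (abs_nonneg _)
            exact le_trans (abs_nonneg _) hKle
    have hintdiff :
        (∫ y in Ω, K ((u t y - u t x1) / h) * (u t y - u t x1))
          - (∫ y in Ω, K ((u t y - u t x2) / h) * (u t y - u t x2))
        = ∫ y in Ω, (K ((u t y - u t x1) / h) * (u t y - u t x1)
            - K ((u t y - u t x2) / h) * (u t y - u t x2)) :=
      (integral_sub (hint (u t x1)) (hint (u t x2))).symm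
    have hIbound :
        ‖∫ y in Ω, (K ((u t y - u t x1) / h) * (u t y - u t x1)
            - K ((u t y - u t x2) / h) * (u t y - u t x2))‖
          ≤ ((BK + (LK : ℝ) * (2 * M) / h) * |g t|) * (volume Ω).toReal := by
      refine norm_setIntegral_le_of_norm_le_const hΩfin fun y hy => ?_
      have hs2 : |u t y - u t x2| ≤ 2 * M := by
        have h1 := hM t ht y hy
        have h2 := hM t ht x2 hx2
        calc |u t y - u t x2| ≤ |u t y| + |u t x2| := abs_sub _ _
          _ ≤ 2 * M := by linarith
      have key := aux_lip K hKnonneg BK hKbdd LK hKlip h hh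
        (u t y - u t x1) (u t y - u t x2)
      have hgt : (u t y - u t x1) - (u t y - u t x2) = -(g t) := by rw [hg]; ring
      rw [hgt, abs_neg] at key
      refine key.trans ?_
      gcongr
    -- assemble
    have hz : ((∫ y in Ω, K ((u t y - u t x1) / h) * (u t y - u t x1)) + lam * (u0 x1 - u t x1))
          - ((∫ y in Ω, K ((u t y - u t x2) / h) * (u t y - u t x2)) + lam * (u0 x2 - u t x2))
        = ((∫ y in Ω, K ((u t y - u t x1) / h) * (u t y - u t x1))
            - (∫ y in Ω, K ((u t y - u t x2) / h) * (u t y - u t x2))) + (- lam * g t) := by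
      rw [hg, heq0]; ring
    rw [hz, hintdiff]
    calc ‖(∫ y in Ω, (K ((u t y - u t x1) / h) * (u t y - u t x1)
            - K ((u t y - u t x2) / h) * (u t y - u t x2))) + (- lam * g t)‖
        ≤ ‖∫ y in Ω, (K ((u t y - u t x1) / h) * (u t y - u t x1)
            - K ((u t y - u t x2) / h) * (u t y - u t x2))‖ + ‖(- lam * g t)‖ := norm_add_le _ _
      _ ≤ ((BK + (LK : ℝ) * (2 * M) / h) * |g t|) * (volume Ω).toReal + lam * |g t| := by
          refine add_le_add hIbound ?_
          rw [Real.norm_eq_abs, abs_mul, abs_neg, abs_of_nonneg hlam]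
      _ = C * ‖g t‖ := by rw [hC, Real.norm_eq_abs]; ring
  -- Gronwall
  have hg0 : g 0 = 0 := by rw [hg]; simp [hinit x1 hx1, hinit x2 hx2, heq0]
  have hmain : ∀ t ∈ Icc (0:ℝ) T, ‖g t‖ ≤ gronwallBound 0 C 0 (t - 0) := by
    refine norm_le_gronwallBound_of_norm_deriv_right_le
      (f' := fun t => ((∫ y in Ω, K ((u t y - u t x1) / h) * (u t y - u t x1))
          + lam * (u0 x1 - u t x1))
        - ((∫ y in Ω, K ((u t y - u t x2) / h) * (u t y - u t x2))
          + lam * (u0 x2 - u t x2)))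
      hgcont ?_ (by simp [hg0]) ?_
    · intro t ht
      refine (hgderiv t ⟨ht.1, ht.2.le⟩).mono_of_mem_nhdsWithin ?_
      exact Filter.mem_of_superset (Icc_mem_nhdsGE_of_mem ⟨le_refl t, ht.2⟩)
        (Icc_subset_Icc_left ht.1)
    · intro t ht
      have := hbound t ⟨ht.1, ht.2.le⟩
      simpa using this
  intro t ht
  have := hmain t ht
  rw [gronwallBound_ε0_δ0] at this
  have : ‖g t‖ = 0 := le_antisymm this (norm_nonneg _)
  have : g t = 0 := by simpa using this
  have h0 : u t x1 - u t x2 = 0 := this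
  linarith
end

section
/- Contractivity of the semi-implicit fixed-point map: let w0, w_j : Ω → ℝ be bounded measurable, let τ > 0, t_j ≥ 0, λ ≥ 0, and let μ > 2|Ω|·sup K_h. Define, for bounded measurable φ : Ω → ℝ, A(φ)(x) = (1 + τ(λ+μ))^{-1} ( w_j(x) + τ ∫_Ω K_h(e^{μ t_j}(w_j(y) − w_j(x)))·(φ(y) − φ(x)) dy + τ λ w0(x) ). Then for all bounded measurable φ, ψ, sup_Ω |A(φ) − A(ψ)| ≤ (2τ|Ω|·sup K_h)/(1+τμ) · sup_Ω |φ − ψ|, the factor (2τ|Ω|·sup K_h)/(1+τμ) is strictly less than 1, and consequently A has a unique fixed point among bounded measurable functions on Ω (up to equality everywhere). -/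
open MeasureTheory Set

/-- Contractivity of the semi-implicit fixed-point map
`A(φ)(x) = (1+τ(λ+μ))⁻¹ (w_j(x) + τ ∫_Ω K_h(e^{μ t_j}(w_j(y)−w_j(x)))·(φ(y)−φ(x)) dy + τλ w0(x))`:
for `μ > 2|Ω|·sup K_h`, `A` contracts the sup-distance over `Ω` with factor
`2τ|Ω|·sup K_h/(1+τμ) < 1`, and hence has a unique fixed point among bounded
measurable functions. -/
theorem stmt_4
    (d : ℕ) (hd : 1 ≤ d)
    (Ω : Set (Fin d → ℝ)) (hΩopen : IsOpen Ω) (hΩbdd : Bornology.IsBounded Ω)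
    (K : ℝ → ℝ) (hKnonneg : ∀ ξ, 0 ≤ K ξ) (BK : ℝ) (hKbdd : ∀ ξ, K ξ ≤ BK)
    (LK : NNReal) (hKlip : LipschitzWith LK K)
    (h : ℝ) (hh : 0 < h)
    (w0 wj : (Fin d → ℝ) → ℝ)
    (hw0m : Measurable w0) (Mw0 : ℝ) (hw0b : ∀ x ∈ Ω, |w0 x| ≤ Mw0)
    (hwjm : Measurable wj) (Mwj : ℝ) (hwjb : ∀ x ∈ Ω, |wj x| ≤ Mwj)
    (τ : ℝ) (hτ : 0 < τ) (tj : ℝ) (htj : 0 ≤ tj) (lam : ℝ) (hlam : 0 ≤ lam)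
    (SK : ℝ) (hSK : SK = ⨆ ξ : ℝ, K (ξ / h))
    (μ : ℝ) (hμ : 2 * (volume Ω).toReal * SK < μ)
    (A : ((Fin d → ℝ) → ℝ) → (Fin d → ℝ) → ℝ)
    (hA : ∀ φ : (Fin d → ℝ) → ℝ, ∀ x : Fin d → ℝ,
      A φ x = (1 + τ * (lam + μ))⁻¹ *
        (wj x + τ * (∫ y in Ω, K ((Real.exp (μ * tj) * (wj y - wj x)) / h) * (φ y - φ x))
          + τ * lam * w0 x)) :
    (∀ φ ψ : (Fin d → ℝ) → ℝ,
      (Measurable φ ∧ ∃ Mφ : ℝ, ∀ x ∈ Ω, |φ x| ≤ Mφ) →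
      (Measurable ψ ∧ ∃ Mψ : ℝ, ∀ x ∈ Ω, |ψ x| ≤ Mψ) →
      sSup ((fun x => |A φ x - A ψ x|) '' Ω) ≤
        (2 * τ * (volume Ω).toReal * SK) / (1 + τ * μ) *
          sSup ((fun x => |φ x - ψ x|) '' Ω)) ∧
    (2 * τ * (volume Ω).toReal * SK) / (1 + τ * μ) < 1 ∧
    (∃ φ : (Fin d → ℝ) → ℝ,
      (Measurable φ ∧ ∃ Mφ : ℝ, ∀ x ∈ Ω, |φ x| ≤ Mφ) ∧
      (∀ x ∈ Ω, A φ x = φ x) ∧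
      (∀ ψ : (Fin d → ℝ) → ℝ,
        (Measurable ψ ∧ ∃ Mψ : ℝ, ∀ x ∈ Ω, |ψ x| ≤ Mψ) →
        (∀ x ∈ Ω, A ψ x = ψ x) → ∀ x ∈ Ω, ψ x = φ x)) := by
  have hΩm : MeasurableSet Ω := hΩopen.measurableSet
  have hvolfin : volume Ω < ⊤ := hΩbdd.measure_lt_top
  haveI : IsFiniteMeasure (volume.restrict Ω) := ⟨by rwa [Measure.restrict_apply_univ]⟩
  have hbddK : BddAbove (Set.range fun ξ : ℝ => K (ξ / h)) :=
    ⟨BK, by rintro _ ⟨ξ, rfl⟩; exact hKbdd _⟩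
  have hKleSK : ∀ z : ℝ, K (z / h) ≤ SK := fun z => hSK ▸ le_ciSup hbddK z
  have hSK0 : 0 ≤ SK := le_trans (hKnonneg _) (hKleSK 0)
  have hvol0 : 0 ≤ (volume Ω).toReal := ENNReal.toReal_nonneg
  have hμ0 : 0 < μ := lt_of_le_of_lt (by positivity) hμ
  have hden : 0 < 1 + τ * μ := by positivity
  have hden2 : 0 < 1 + τ * (lam + μ) := by nlinarith
  set q : ℝ := (2 * τ * (volume Ω).toReal * SK) / (1 + τ * μ) with hqdef
  have hq0 : 0 ≤ q := by rw [hqdef]; positivity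
  have hq1 : q < 1 := by rw [hqdef, div_lt_one hden]; nlinarith
  set c : ℝ := (1 + τ * (lam + μ))⁻¹ with hcdef
  have hc0 : 0 < c := inv_pos.2 hden2
  have hcle : c ≤ (1 + τ * μ)⁻¹ := by
    rw [hcdef]
    apply inv_anti₀ hden
    nlinarith
  have hcq : c * (2 * τ * (volume Ω).toReal * SK) ≤ q := by
    rw [hqdef, div_eq_mul_inv]
    calc c * (2 * τ * (volume Ω).toReal * SK)
        = (2 * τ * (volume Ω).toReal * SK) * c := by ring
      _ ≤ (2 * τ * (volume Ω).toReal * SK) * (1 + τ * μ)⁻¹ :=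
          mul_le_mul_of_nonneg_left hcle (by positivity)
  have hKmeas : ∀ x, Measurable fun y => K ((Real.exp (μ * tj) * (wj y - wj x)) / h) :=
    fun x => hKlip.continuous.measurable.comp
      (((hwjm.sub measurable_const).const_mul _).div_const h)
  -- Integrability of the integrand
  have hint : ∀ (φ : (Fin d → ℝ) → ℝ) (Mφ : ℝ), Measurable φ → (∀ z ∈ Ω, |φ z| ≤ Mφ) →
      ∀ x, Integrable (fun y => K ((Real.exp (μ * tj) * (wj y - wj x)) / h) * (φ y - φ x))
        (volume.restrict Ω) := by
    intro φ Mφ hφm hφb x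
    have hm : Measurable fun y => K ((Real.exp (μ * tj) * (wj y - wj x)) / h) * (φ y - φ x) :=
      (hKmeas x).mul (hφm.sub measurable_const)
    refine Integrable.mono' (integrable_const (SK * (Mφ + |φ x|))) hm.aestronglyMeasurable ?_
    refine (ae_restrict_iff' hΩm).2 (Filter.Eventually.of_forall fun y hy => ?_)
    rw [Real.norm_eq_abs, abs_mul, abs_of_nonneg (hKnonneg _)]
    have h1 : |φ y - φ x| ≤ Mφ + |φ x| :=
      (abs_sub _ _).trans (add_le_add (hφb y hy) le_rfl)
    exact mul_le_mul (hKleSK _) h1 (abs_nonneg _) hSK0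
  -- bddAbove helper
  have hbdd2 : ∀ (F G : (Fin d → ℝ) → ℝ) (MF MG : ℝ), (∀ z ∈ Ω, |F z| ≤ MF) →
      (∀ z ∈ Ω, |G z| ≤ MG) → BddAbove ((fun z => |F z - G z|) '' Ω) := by
    intro F G MF MG hF hG
    refine ⟨MF + MG, ?_⟩
    rintro _ ⟨z, hz, rfl⟩
    exact (abs_sub _ _).trans (add_le_add (hF z hz) (hG z hz))
  -- pointwise contraction estimate
  have hpt : ∀ (φ ψ : (Fin d → ℝ) → ℝ) (Mφ Mψ : ℝ), Measurable φ → Measurable ψ →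
      (∀ z ∈ Ω, |φ z| ≤ Mφ) → (∀ z ∈ Ω, |ψ z| ≤ Mψ) → ∀ x ∈ Ω,
      |A φ x - A ψ x| ≤ q * sSup ((fun z => |φ z - ψ z|) '' Ω) := by
    intro φ ψ Mφ Mψ hφm hψm hφb hψb x hx
    set M := sSup ((fun z => |φ z - ψ z|) '' Ω) with hM
    have hMle : ∀ z ∈ Ω, |φ z - ψ z| ≤ M :=
      fun z hz => le_csSup (hbdd2 φ ψ Mφ Mψ hφb hψb) ⟨z, hz, rfl⟩
    have hM0 : 0 ≤ M := (abs_nonneg _).trans (hMle x hx)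
    have h1 := hint φ Mφ hφm hφb x
    have h2 := hint ψ Mψ hψm hψb x
    have hAeq : A φ x - A ψ x =
        c * τ * ∫ y in Ω, K ((Real.exp (μ * tj) * (wj y - wj x)) / h)
          * ((φ y - ψ y) - (φ x - ψ x)) := by
      have hsplit : (∫ y in Ω, K ((Real.exp (μ * tj) * (wj y - wj x)) / h)
            * ((φ y - ψ y) - (φ x - ψ x)))
          = (∫ y in Ω, K ((Real.exp (μ * tj) * (wj y - wj x)) / h) * (φ y - φ x))
            - ∫ y in Ω, K ((Real.exp (μ * tj) * (wj y - wj x)) / h) * (ψ y - ψ x) := by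
        rw [← integral_sub h1 h2]
        congr 1
        funext y
        ring
      rw [hA φ x, hA ψ x, hsplit]
      ring
    rw [hAeq, abs_mul]
    have hnorm : ‖∫ y in Ω, K ((Real.exp (μ * tj) * (wj y - wj x)) / h)
        * ((φ y - ψ y) - (φ x - ψ x))‖ ≤ SK * (2 * M) * (volume Ω).toReal := by
      refine norm_setIntegral_le_of_norm_le_const hvolfin fun y hy => ?_
      rw [Real.norm_eq_abs, abs_mul, abs_of_nonneg (hKnonneg _)]
      have hd1 : |(φ y - ψ y) - (φ x - ψ x)| ≤ 2 * M := by
        have e1 := hMle y hy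
        have e2 := hMle x hx
        calc |(φ y - ψ y) - (φ x - ψ x)| ≤ |φ y - ψ y| + |φ x - ψ x| := abs_sub _ _
          _ ≤ 2 * M := by linarith
      exact mul_le_mul (hKleSK _) hd1 (abs_nonneg _) hSK0
    rw [Real.norm_eq_abs] at hnorm
    have habs : |c * τ| = c * τ := abs_of_nonneg (by positivity)
    calc |c * τ| * |∫ y in Ω, K ((Real.exp (μ * tj) * (wj y - wj x)) / h)
          * ((φ y - ψ y) - (φ x - ψ x))|
        ≤ (c * τ) * (SK * (2 * M) * (volume Ω).toReal) := by
          rw [habs]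
          exact mul_le_mul_of_nonneg_left hnorm (by positivity)
      _ = c * (2 * τ * (volume Ω).toReal * SK) * M := by ring
      _ ≤ q * M := mul_le_mul_of_nonneg_right hcq hM0
  -- part 1
  have part1 : ∀ φ ψ : (Fin d → ℝ) → ℝ,
      (Measurable φ ∧ ∃ Mφ : ℝ, ∀ x ∈ Ω, |φ x| ≤ Mφ) →
      (Measurable ψ ∧ ∃ Mψ : ℝ, ∀ x ∈ Ω, |ψ x| ≤ Mψ) →
      sSup ((fun x => |A φ x - A ψ x|) '' Ω) ≤ q * sSup ((fun x => |φ x - ψ x|) '' Ω) := by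
    rintro φ ψ ⟨hφm, Mφ, hφb⟩ ⟨hψm, Mψ, hψb⟩
    rcases Ω.eq_empty_or_nonempty with hΩe | ⟨x0, hx0⟩
    · simp [hΩe, Real.sSup_empty]
    · refine csSup_le ⟨_, ⟨x0, hx0, rfl⟩⟩ ?_
      rintro _ ⟨x, hx, rfl⟩
      exact hpt φ ψ Mφ Mψ hφm hψm hφb hψb x hx
  -- measurability of A φ
  have hAm : ∀ φ : (Fin d → ℝ) → ℝ, Measurable φ → Measurable (A φ) := by
    intro φ hφm
    have hAf : A φ = fun x => c * (wj x
        + τ * (∫ y in Ω, K ((Real.exp (μ * tj) * (wj y - wj x)) / h) * (φ y - φ x))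
        + τ * lam * w0 x) := funext (hA φ)
    rw [hAf]
    have hprod : StronglyMeasurable fun p : (Fin d → ℝ) × (Fin d → ℝ) =>
        K ((Real.exp (μ * tj) * (wj p.2 - wj p.1)) / h) * (φ p.2 - φ p.1) :=
      ((hKlip.continuous.measurable.comp
        ((((hwjm.comp measurable_snd).sub (hwjm.comp measurable_fst)).const_mul _).div_const h)).mul
        ((hφm.comp measurable_snd).sub (hφm.comp measurable_fst))).stronglyMeasurable
    have hIm : Measurable fun x =>
        ∫ y in Ω, K ((Real.exp (μ * tj) * (wj y - wj x)) / h) * (φ y - φ x) :=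
      hprod.integral_prod_right'.measurable
    exact ((hwjm.add (hIm.const_mul τ)).add (hw0m.const_mul (τ * lam))).const_mul c
  refine ⟨part1, hq1, ?_⟩
  rcases Ω.eq_empty_or_nonempty with hΩe | ⟨x0, hx0⟩
  · exact ⟨fun _ => 0, ⟨measurable_const, 0, by simp [hΩe]⟩, by simp [hΩe],
      fun ψ _ _ x hx => by rw [hΩe] at hx; exact absurd hx (notMem_empty x)⟩
  have hMwj0 : 0 ≤ Mwj := (abs_nonneg _).trans (hwjb x0 hx0)
  have hMw00 : 0 ≤ Mw0 := (abs_nonneg _).trans (hw0b x0 hx0)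
  have hq1' : 0 < 1 - q := by linarith
  set B : ℝ := c * (Mwj + τ * lam * Mw0) / (1 - q) with hB
  have hB0 : 0 ≤ B := by rw [hB]; positivity
  have hBineq : c * (Mwj + τ * lam * Mw0) + q * B = B := by
    rw [hB]
    field_simp
    ring
  -- boundedness preservation
  have hbound : ∀ φ : (Fin d → ℝ) → ℝ, Measurable φ → (∀ z ∈ Ω, |φ z| ≤ B) →
      ∀ x ∈ Ω, |A φ x| ≤ B := by
    intro φ hφm hφb x hx
    rw [hA φ x]
    have hI : |∫ y in Ω, K ((Real.exp (μ * tj) * (wj y - wj x)) / h) * (φ y - φ x)|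
        ≤ SK * (2 * B) * (volume Ω).toReal := by
      rw [← Real.norm_eq_abs]
      refine norm_setIntegral_le_of_norm_le_const hvolfin fun y hy => ?_
      rw [Real.norm_eq_abs, abs_mul, abs_of_nonneg (hKnonneg _)]
      have hd1 : |φ y - φ x| ≤ 2 * B := by
        have e1 := hφb y hy
        have e2 := hφb x hx
        calc |φ y - φ x| ≤ |φ y| + |φ x| := abs_sub _ _
          _ ≤ 2 * B := by linarith
      exact mul_le_mul (hKleSK _) hd1 (abs_nonneg _) hSK0
    have e2 : |wj x + τ * (∫ y in Ω, K ((Real.exp (μ * tj) * (wj y - wj x)) / h) * (φ y - φ x))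
        + τ * lam * w0 x| ≤ Mwj + τ * (SK * (2 * B) * (volume Ω).toReal) + τ * lam * Mw0 := by
      have t1 := hwjb x hx
      have t2 := hw0b x hx
      calc |wj x + τ * (∫ y in Ω, K ((Real.exp (μ * tj) * (wj y - wj x)) / h) * (φ y - φ x))
            + τ * lam * w0 x|
          ≤ |wj x| + |τ * (∫ y in Ω, K ((Real.exp (μ * tj) * (wj y - wj x)) / h) * (φ y - φ x))|
            + |τ * lam * w0 x| := abs_add_three _ _ _
        _ ≤ Mwj + τ * (SK * (2 * B) * (volume Ω).toReal) + τ * lam * Mw0 := by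
            simp only [abs_mul, abs_of_nonneg hτ.le, abs_of_nonneg hlam]
            refine add_le_add (add_le_add t1 (mul_le_mul_of_nonneg_left hI hτ.le)) ?_
            exact mul_le_mul_of_nonneg_left t2 (mul_nonneg hτ.le hlam)
    calc |c * (wj x + τ * (∫ y in Ω, K ((Real.exp (μ * tj) * (wj y - wj x)) / h) * (φ y - φ x))
          + τ * lam * w0 x)|
        ≤ c * (Mwj + τ * (SK * (2 * B) * (volume Ω).toReal) + τ * lam * Mw0) := by
          rw [abs_mul, abs_of_nonneg hc0.le]
          exact mul_le_mul_of_nonneg_left e2 hc0.le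
      _ = c * (Mwj + τ * lam * Mw0) + (c * (2 * τ * (volume Ω).toReal * SK)) * B := by ring
      _ ≤ c * (Mwj + τ * lam * Mw0) + q * B :=
          add_le_add le_rfl (mul_le_mul_of_nonneg_right hcq hB0)
      _ = B := hBineq
  -- iteration scheme
  obtain ⟨g, hgzero, hgsucc⟩ : ∃ g : ℕ → ((Fin d → ℝ) → ℝ),
      g 0 = (fun _ => 0) ∧ ∀ n, g (n + 1) = Ω.indicator (A (g n)) :=
    ⟨fun n => Nat.rec (fun _ => 0) (fun _ F => Ω.indicator (A F)) n, rfl, fun n => rfl⟩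
  have hgm : ∀ n, Measurable (g n) := by
    intro n
    induction n with
    | zero => rw [hgzero]; exact measurable_const
    | succ n ih => rw [hgsucc]; exact (hAm _ ih).indicator hΩm
  have hgb : ∀ n, ∀ z ∈ Ω, |g n z| ≤ B := by
    intro n
    induction n with
    | zero => intro z hz; rw [hgzero]; simpa using hB0
    | succ n ih =>
      intro z hz
      rw [hgsucc, indicator_of_mem hz]
      exact hbound (g n) (hgm n) ih z hz
  have hgA : ∀ n, ∀ z ∈ Ω, g (n + 1) z = A (g n) z := by
    intro n z hz
    rw [hgsucc]
    exact indicator_of_mem hz _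
  have hgout : ∀ n, ∀ z ∉ Ω, g n z = 0 := by
    intro n
    induction n with
    | zero => intro z _; rw [hgzero]
    | succ n _ =>
      intro z hz
      rw [hgsucc]
      exact indicator_of_notMem hz _
  set D0 : ℝ := sSup ((fun z => |g 1 z - g 0 z|) '' Ω) with hD0
  have hclaim : ∀ n, ∀ z ∈ Ω, |g (n + 1) z - g n z| ≤ D0 * q ^ n := by
    intro n
    induction n with
    | zero =>
      intro z hz
      have := le_csSup (hbdd2 (g 1) (g 0) B B (hgb 1) (hgb 0)) ⟨z, hz, rfl⟩
      rw [← hD0] at this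
      simpa using this
    | succ n ih =>
      intro z hz
      have h1 : |g (n + 2) z - g (n + 1) z| ≤ q * sSup ((fun z => |g (n + 1) z - g n z|) '' Ω) := by
        rw [hgA (n + 1) z hz, hgA n z hz]
        exact hpt _ _ B B (hgm _) (hgm _) (hgb _) (hgb _) z hz
      have h2 : sSup ((fun z => |g (n + 1) z - g n z|) '' Ω) ≤ D0 * q ^ n :=
        csSup_le ⟨_, ⟨x0, hx0, rfl⟩⟩ (by rintro _ ⟨z', hz', rfl⟩; exact ih z' hz')
      calc |g (n + 2) z - g (n + 1) z| ≤ q * (D0 * q ^ n) :=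
            h1.trans (mul_le_mul_of_nonneg_left h2 hq0)
        _ = D0 * q ^ (n + 1) := by ring
  have hconv : ∀ x, ∃ L : ℝ, Filter.Tendsto (fun n => g n x) Filter.atTop (nhds L) := by
    intro x
    by_cases hx : x ∈ Ω
    · have hc : CauchySeq fun n => g n x := by
        apply cauchySeq_of_le_geometric q D0 hq1
        intro n
        rw [dist_comm, Real.dist_eq]
        exact hclaim n x hx
      exact cauchySeq_tendsto_of_complete hc
    · refine ⟨0, ?_⟩
      have hzz : (fun n => g n x) = fun _ => (0 : ℝ) := funext fun n => hgout n x hx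
      rw [hzz]
      exact tendsto_const_nhds
  choose L hL using hconv
  have hLm : Measurable L :=
    measurable_of_tendsto_metrizable hgm (tendsto_pi_nhds.2 hL)
  have hLb : ∀ z ∈ Ω, |L z| ≤ B := fun z hz =>
    le_of_tendsto ((hL z).abs) (Filter.Eventually.of_forall fun n => hgb n z hz)
  have hrate : ∀ n, ∀ z ∈ Ω, |g n z - L z| ≤ D0 * q ^ n / (1 - q) := by
    intro n z hz
    have hd := dist_le_of_le_geometric_of_tendsto q D0 hq1
      (fun m => by rw [dist_comm, Real.dist_eq]; exact hclaim m z hz) (hL z) n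
    rwa [Real.dist_eq] at hd
  have hfix : ∀ z ∈ Ω, A L z = L z := by
    intro z hz
    have hb : ∀ n : ℕ, |A L z - L z| ≤ q * (D0 * q ^ n / (1 - q)) + D0 * q ^ (n + 1) / (1 - q) := by
      intro n
      have t1 : |A L z - A (g n) z| ≤ q * sSup ((fun y => |L y - g n y|) '' Ω) :=
        hpt L (g n) B B hLm (hgm n) hLb (hgb n) z hz
      have t2 : sSup ((fun y => |L y - g n y|) '' Ω) ≤ D0 * q ^ n / (1 - q) :=
        csSup_le ⟨_, ⟨x0, hx0, rfl⟩⟩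
          (by rintro _ ⟨y, hy, rfl⟩; exact (abs_sub_comm (L y) (g n y)).trans_le (hrate n y hy))
      have t3 : |A (g n) z - L z| ≤ D0 * q ^ (n + 1) / (1 - q) := by
        rw [← hgA n z hz]
        exact hrate (n + 1) z hz
      calc |A L z - L z| ≤ |A L z - A (g n) z| + |A (g n) z - L z| := abs_sub_le _ _ _
        _ ≤ q * (D0 * q ^ n / (1 - q)) + D0 * q ^ (n + 1) / (1 - q) :=
            add_le_add (t1.trans (mul_le_mul_of_nonneg_left t2 hq0)) t3
    have htend : Filter.Tendsto
        (fun n : ℕ => q * (D0 * q ^ n / (1 - q)) + D0 * q ^ (n + 1) / (1 - q))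
        Filter.atTop (nhds 0) := by
      have hq' : Filter.Tendsto (fun n : ℕ => q ^ n) Filter.atTop (nhds 0) :=
        tendsto_pow_atTop_nhds_zero_of_lt_one hq0 hq1
      have heq : (fun n : ℕ => q * (D0 * q ^ n / (1 - q)) + D0 * q ^ (n + 1) / (1 - q))
          = fun n : ℕ => (q * D0 / (1 - q) + D0 * q / (1 - q)) * q ^ n := by
        funext n
        ring
      rw [heq]
      simpa using hq'.const_mul (q * D0 / (1 - q) + D0 * q / (1 - q))
    have h0 : |A L z - L z| ≤ 0 := ge_of_tendsto' htend hb
    have h00 : |A L z - L z| = 0 := le_antisymm h0 (abs_nonneg _)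
    exact sub_eq_zero.1 (abs_eq_zero.1 h00)
  refine ⟨L, ⟨hLm, B, hLb⟩, hfix, ?_⟩
  rintro ψ ⟨hψm, Mψ, hψb⟩ hψfix x hx
  set M' := sSup ((fun z => |ψ z - L z|) '' Ω) with hM'
  have hle : ∀ z ∈ Ω, |ψ z - L z| ≤ M' :=
    fun z hz => le_csSup (hbdd2 ψ L Mψ B hψb hLb) ⟨z, hz, rfl⟩
  have hM'0 : 0 ≤ M' := (abs_nonneg _).trans (hle x hx)
  have hcontr : M' ≤ q * M' := by
    rw [hM']
    refine csSup_le ⟨_, ⟨x0, hx0, rfl⟩⟩ ?_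
    rintro _ ⟨z, hz, rfl⟩
    show |ψ z - L z| ≤ q * M'
    rw [← hψfix z hz, ← hfix z hz, hM']
    exact hpt ψ L Mψ B hψm hLm hψb hLb z hz
  have hM'le : M' ≤ 0 := by nlinarith
  have h0 : |ψ x - L x| = 0 := le_antisymm ((hle x hx).trans hM'le) (abs_nonneg _)
  exact sub_eq_zero.1 (abs_eq_zero.1 h0)
end

section
/- Uniform L∞ estimate for the semi-implicit time discretization: let w0, w_j : Ω → ℝ be bounded measurable, τ > 0, t_j ≥ 0, λ ≥ 0 and μ > 2|Ω|·sup K_h, and suppose the bounded measurable function w_{j+1} : Ω → ℝ satisfies, for every x ∈ Ω, w_{j+1}(x) = w_j(x) + τ ∫_Ω K_h(e^{μ t_j}(w_j(y) − w_j(x)))·(w_{j+1}(y) − w_{j+1}(x)) dy + τλ(w0(x) − w_{j+1}(x)) − τμ w_{j+1}(x). Then sup_Ω |w_{j+1}| ≤ ( sup_Ω |w_j| + τλ sup_Ω |w0| ) / ( 1 + τ(λ + μ − 2|Ω|·sup K_h) ). -/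
open MeasureTheory Set

/-- Uniform L∞ estimate for the semi-implicit time discretization: if `w_{j+1}` solves
`w_{j+1}(x) = w_j(x) + τ ∫_Ω K_h(e^{μ t_j}(w_j(y)−w_j(x)))(w_{j+1}(y)−w_{j+1}(x)) dy
+ τλ(w0(x)−w_{j+1}(x)) − τμ w_{j+1}(x)` with `μ > 2|Ω|·sup K_h`, then
`sup_Ω |w_{j+1}| ≤ (sup_Ω |w_j| + τλ sup_Ω |w0|)/(1 + τ(λ + μ − 2|Ω|·sup K_h))`. -/
theorem stmt_5
    (d : ℕ) (hd : 1 ≤ d)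
    (Ω : Set (Fin d → ℝ)) (hΩopen : IsOpen Ω) (hΩbdd : Bornology.IsBounded Ω)
    (K : ℝ → ℝ) (hKnonneg : ∀ ξ, 0 ≤ K ξ) (BK : ℝ) (hKbdd : ∀ ξ, K ξ ≤ BK)
    (LK : NNReal) (hKlip : LipschitzWith LK K)
    (h : ℝ) (hh : 0 < h)
    (w0 wj wj1 : (Fin d → ℝ) → ℝ)
    (hw0m : Measurable w0) (Mw0 : ℝ) (hw0b : ∀ x ∈ Ω, |w0 x| ≤ Mw0)
    (hwjm : Measurable wj) (Mwj : ℝ) (hwjb : ∀ x ∈ Ω, |wj x| ≤ Mwj)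
    (hwj1m : Measurable wj1) (Mwj1 : ℝ) (hwj1b : ∀ x ∈ Ω, |wj1 x| ≤ Mwj1)
    (τ : ℝ) (hτ : 0 < τ) (tj : ℝ) (htj : 0 ≤ tj) (lam : ℝ) (hlam : 0 ≤ lam)
    (SK : ℝ) (hSK : SK = ⨆ ξ : ℝ, K (ξ / h))
    (μ : ℝ) (hμ : 2 * (volume Ω).toReal * SK < μ)
    (heq : ∀ x ∈ Ω,
      wj1 x = wj x
        + τ * (∫ y in Ω, K ((Real.exp (μ * tj) * (wj y - wj x)) / h) * (wj1 y - wj1 x))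
        + τ * lam * (w0 x - wj1 x) - τ * μ * wj1 x) :
    ∀ x ∈ Ω, |wj1 x| ≤
      (sSup ((fun x => |wj x|) '' Ω) + τ * lam * sSup ((fun x => |w0 x|) '' Ω)) /
        (1 + τ * (lam + μ - 2 * (volume Ω).toReal * SK)) := by
  have hbdd : BddAbove (Set.range fun ξ : ℝ => K (ξ / h)) :=
    ⟨BK, by rintro _ ⟨ξ, rfl⟩; exact hKbdd _⟩
  have hKle : ∀ a : ℝ, K (a / h) ≤ SK := fun a => hSK ▸ le_ciSup hbdd a
  have hSK0 : 0 ≤ SK := le_trans (hKnonneg _) (hKle 0)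
  intro x hx
  set V := (volume Ω).toReal with hV
  have hV0 : 0 ≤ V := ENNReal.toReal_nonneg
  have hVfin : volume Ω < ⊤ := hΩbdd.measure_lt_top
  set S := sSup ((fun x => |wj1 x|) '' Ω) with hSdef
  set Mj := sSup ((fun x => |wj x|) '' Ω) with hMjdef
  set M0 := sSup ((fun x => |w0 x|) '' Ω) with hM0def
  have hbj1 : BddAbove ((fun x => |wj1 x|) '' Ω) :=
    ⟨Mwj1, by rintro _ ⟨y, hy, rfl⟩; exact hwj1b y hy⟩
  have hleS : ∀ y ∈ Ω, |wj1 y| ≤ S := fun y hy => le_csSup hbj1 ⟨y, hy, rfl⟩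
  have hS0 : 0 ≤ S := le_trans (abs_nonneg _) (hleS x hx)
  have hleMj : ∀ y ∈ Ω, |wj y| ≤ Mj := fun y hy =>
    le_csSup ⟨Mwj, by rintro _ ⟨z, hz, rfl⟩; exact hwjb z hz⟩ ⟨y, hy, rfl⟩
  have hleM0 : ∀ y ∈ Ω, |w0 y| ≤ M0 := fun y hy =>
    le_csSup ⟨Mw0, by rintro _ ⟨z, hz, rfl⟩; exact hw0b z hz⟩ ⟨y, hy, rfl⟩
  have hμ0 : 0 < μ := lt_of_le_of_lt (by positivity) hμ
  have hP0 : (0:ℝ) < 1 + τ * lam + τ * μ := by positivity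
  have hD0 : (0:ℝ) < 1 + τ * (lam + μ - 2 * V * SK) := by nlinarith
  -- key pointwise estimate
  have key : ∀ z ∈ Ω, (1 + τ * lam + τ * μ) * |wj1 z| ≤
      Mj + τ * (SK * (2 * S) * V) + τ * lam * M0 := by
    intro z hz
    set I := ∫ y in Ω, K ((Real.exp (μ * tj) * (wj y - wj z)) / h) * (wj1 y - wj1 z) with hI
    have hIb : |I| ≤ SK * (2 * S) * V := by
      have hm : AEStronglyMeasurable
          (fun y => K ((Real.exp (μ * tj) * (wj y - wj z)) / h) * (wj1 y - wj1 z))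
          (volume.restrict Ω) := by
        refine Measurable.aestronglyMeasurable ?_
        exact ((hKlip.continuous.measurable.comp
          (((measurable_const.mul (hwjm.sub measurable_const))).div_const h)).mul
          (hwj1m.sub measurable_const))
      have hC : ∀ y ∈ Ω, ‖K ((Real.exp (μ * tj) * (wj y - wj z)) / h) * (wj1 y - wj1 z)‖
          ≤ SK * (2 * S) := by
        intro y hy
        rw [Real.norm_eq_abs, abs_mul, abs_of_nonneg (hKnonneg _)]
        have h1 : |wj1 y - wj1 z| ≤ 2 * S := by
          have := hleS y hy; have := hleS z hz
          have := abs_sub_abs_le_abs_sub (wj1 y) (wj1 z)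
          have habs := abs_sub (wj1 y) (wj1 z)
          calc |wj1 y - wj1 z| ≤ |wj1 y| + |wj1 z| := abs_sub _ _
            _ ≤ 2 * S := by linarith [hleS y hy, hleS z hz]
        exact mul_le_mul (hKle _) h1 (abs_nonneg _) hSK0
      have := norm_setIntegral_le_of_norm_le_const (μ := volume) hVfin hC
      rw [Real.norm_eq_abs] at this
      exact this
    have heqz := heq z hz
    have hlin : (1 + τ * lam + τ * μ) * wj1 z = wj z + τ * I + τ * lam * w0 z := by
      rw [hI]; linarith [heqz]
    calc (1 + τ * lam + τ * μ) * |wj1 z| = |(1 + τ * lam + τ * μ) * wj1 z| := by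
          rw [abs_mul, abs_of_pos hP0]
      _ = |wj z + τ * I + τ * lam * w0 z| := by rw [hlin]
      _ ≤ |wj z| + τ * |I| + τ * lam * |w0 z| := by
          have h1 : |wj z + τ * I + τ * lam * w0 z| ≤ |wj z + τ * I| + |τ * lam * w0 z| :=
            abs_add_le _ _
          have h2 : |wj z + τ * I| ≤ |wj z| + |τ * I| := abs_add_le _ _
          rw [abs_mul, abs_mul, abs_of_pos hτ, abs_of_nonneg hlam] at *
          linarith
      _ ≤ Mj + τ * (SK * (2 * S) * V) + τ * lam * M0 := by
          have := hleMj z hz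
          have := hleM0 z hz
          have h3 : τ * |I| ≤ τ * (SK * (2 * S) * V) := by
            exact mul_le_mul_of_nonneg_left hIb hτ.le
          have h4 : τ * lam * |w0 z| ≤ τ * lam * M0 :=
            mul_le_mul_of_nonneg_left (hleM0 z hz) (by positivity)
          linarith
  -- take sup
  have hSP : S * (1 + τ * lam + τ * μ) ≤ Mj + τ * (SK * (2 * S) * V) + τ * lam * M0 := by
    have hS' : S ≤ (Mj + τ * (SK * (2 * S) * V) + τ * lam * M0) / (1 + τ * lam + τ * μ) := by
      refine csSup_le ⟨|wj1 x|, ⟨x, hx, rfl⟩⟩ ?_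
      rintro _ ⟨z, hz, rfl⟩
      rw [le_div_iff₀ hP0]
      linarith [key z hz]
    calc S * (1 + τ * lam + τ * μ)
        ≤ (Mj + τ * (SK * (2 * S) * V) + τ * lam * M0) / (1 + τ * lam + τ * μ)
          * (1 + τ * lam + τ * μ) := by
          exact mul_le_mul_of_nonneg_right hS' hP0.le
      _ = Mj + τ * (SK * (2 * S) * V) + τ * lam * M0 := by field_simp
  have hSD : S * (1 + τ * (lam + μ - 2 * V * SK)) ≤ Mj + τ * lam * M0 := by nlinarith
  have hfin : S ≤ (Mj + τ * lam * M0) / (1 + τ * (lam + μ - 2 * V * SK)) := by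
    rw [le_div_iff₀ hD0]; linarith
  exact le_trans (hleS x hx) hfin
end

section
/- Explicit formula for the spatial derivative of solutions in one dimension: let Ω = (a,b) ⊂ ℝ, K be additionally continuously differentiable, u0 continuously differentiable, and let u : [0,T]×(a,b) → ℝ be a bounded solution of problem P((a,b),u0) such that u and ∂_x u are continuous on [0,T]×(a,b), ∂_x u(·,x) is differentiable in t for each x, and ∂_t ∂_x u = ∂_x ∂_t u. Define η(t,x) = ∫_a^b [ K'_h(u(t,y) − u(t,x))·(u(t,y) − u(t,x)) + K_h(u(t,y) − u(t,x)) ] dy and G(t,x) = exp( −∫_0^t (λ + η(τ,x)) dτ ). Then for every t ∈ [0,T] and x ∈ (a,b), ∂_x u(t,x) = u0'(x) · G(t,x) · ( 1 + λ ∫_0^t G(τ,x)^{-1} dτ ). -/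
open MeasureTheory Set

open Topology Filter

/-- Explicit formula for the spatial derivative of solutions in one dimension:
if `u` solves P((a,b),u0) with `K, u0 ∈ C¹`, `∂_x u` continuous and commuting mixed
partials, then
`∂_x u(t,x) = u0'(x) · G(t,x) · (1 + λ ∫_0^t G(τ,x)⁻¹ dτ)` where
`η(t,x) = ∫_a^b [K'_h(u(t,y)−u(t,x))(u(t,y)−u(t,x)) + K_h(u(t,y)−u(t,x))] dy` and
`G(t,x) = exp(−∫_0^t (λ + η(τ,x)) dτ)`. -/
theorem stmt_6
    (a b : ℝ) (hab : a < b)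
    (K K' : ℝ → ℝ) (hKnonneg : ∀ ξ, 0 ≤ K ξ) (BK : ℝ) (hKbdd : ∀ ξ, K ξ ≤ BK)
    (LK : NNReal) (hKlip : LipschitzWith LK K)
    (hKderiv : ∀ ξ, HasDerivAt K (K' ξ) ξ) (hK'cont : Continuous K')
    (BK' : ℝ) (hK'bdd : ∀ ξ, |K' ξ| ≤ BK')
    (h : ℝ) (hh : 0 < h) (lam : ℝ) (hlam : 0 ≤ lam) (T : ℝ) (hT : 0 < T)
    (u0 u0' : ℝ → ℝ) (hu0deriv : ∀ x, HasDerivAt u0 (u0' x) x) (hu0'cont : Continuous u0')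
    (u ux ut utx : ℝ → ℝ → ℝ)
    (humeas : ∀ t ∈ Icc (0:ℝ) T, Measurable (u t))
    (M : ℝ) (hubdd : ∀ t ∈ Icc (0:ℝ) T, ∀ x ∈ Ioo a b, |u t x| ≤ M)
    (hinit : ∀ x ∈ Ioo a b, u 0 x = u0 x)
    -- u solves the equation: ∂_t u = ut with the integro-differential right-hand side
    (hsol : ∀ t ∈ Icc (0:ℝ) T, ∀ x ∈ Ioo a b,
      HasDerivWithinAt (fun τ => u τ x) (ut t x) (Icc 0 T) t)
    (hut : ∀ t ∈ Icc (0:ℝ) T, ∀ x ∈ Ioo a b,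
      ut t x = (∫ y in Ioo a b, K ((u t y - u t x) / h) * (u t y - u t x))
        + lam * (u0 x - u t x))
    -- ∂_x u = ux, with u and ∂_x u continuous on [0,T]×(a,b)
    (hux : ∀ t ∈ Icc (0:ℝ) T, ∀ x ∈ Ioo a b, HasDerivAt (fun z => u t z) (ux t x) x)
    (hucont : ContinuousOn (fun p : ℝ × ℝ => u p.1 p.2) (Icc 0 T ×ˢ Ioo a b))
    (huxcont : ContinuousOn (fun p : ℝ × ℝ => ux p.1 p.2) (Icc 0 T ×ˢ Ioo a b))
    -- commuting mixed partials: ∂_t ∂_x u = utx = ∂_x ∂_t u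
    (hmix1 : ∀ t ∈ Icc (0:ℝ) T, ∀ x ∈ Ioo a b,
      HasDerivWithinAt (fun τ => ux τ x) (utx t x) (Icc 0 T) t)
    (hmix2 : ∀ t ∈ Icc (0:ℝ) T, ∀ x ∈ Ioo a b,
      HasDerivAt (fun z => ut t z) (utx t x) x)
    -- η and G
    (η G : ℝ → ℝ → ℝ)
    (hη : ∀ t x, η t x = ∫ y in Ioo a b,
      (K' ((u t y - u t x) / h) / h * (u t y - u t x) + K ((u t y - u t x) / h)))
    (hG : ∀ t x, G t x = Real.exp (-(∫ τ in (0:ℝ)..t, (lam + η τ x)))) :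
    ∀ t ∈ Icc (0:ℝ) T, ∀ x ∈ Ioo a b,
      ux t x = u0' x * G t x * (1 + lam * ∫ τ in (0:ℝ)..t, (G τ x)⁻¹) := by
  intro t ht x hx
  obtain ⟨hxa, hxb⟩ := hx
  have hx : x ∈ Ioo a b := ⟨hxa, hxb⟩
  have hT0 : (0:ℝ) ∈ Icc (0:ℝ) T := ⟨le_refl 0, hT.le⟩
  have hKcont : Continuous K := hKlip.continuous
  have hM : 0 ≤ M := le_trans (abs_nonneg _) (hubdd 0 hT0 x hx)
  have hBK' : 0 ≤ BK' := le_trans (abs_nonneg _) (hK'bdd 0)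
  -- the η-integrand
  set Fη : ℝ → ℝ → ℝ := fun τ y =>
    K' ((u τ y - u τ x) / h) / h * (u τ y - u τ x) + K ((u τ y - u τ x) / h) with hFη
  set Cb : ℝ := BK' / h * (2 * M) + BK with hCb
  -- pointwise bound on the η-integrand
  have hFηbd : ∀ τ ∈ Icc (0:ℝ) T, ∀ y ∈ Ioo a b, |Fη τ y| ≤ Cb := by
    intro τ hτ y hy
    have h1 : |u τ y - u τ x| ≤ 2 * M := by
      have a1 := hubdd τ hτ y hy
      have a2 := hubdd τ hτ x hx
      calc |u τ y - u τ x| ≤ |u τ y| + |u τ x| := abs_sub _ _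
        _ ≤ 2 * M := by linarith
    have h2 : |K' ((u τ y - u τ x) / h) / h| ≤ BK' / h := by
      rw [abs_div, abs_of_pos hh]
      gcongr
      exact hK'bdd _
    have h3 : |K ((u τ y - u τ x) / h)| ≤ BK := by
      rw [abs_of_nonneg (hKnonneg _)]; exact hKbdd _
    calc |Fη τ y| ≤ |K' ((u τ y - u τ x) / h) / h * (u τ y - u τ x)|
          + |K ((u τ y - u τ x) / h)| := abs_add_le _ _
      _ = |K' ((u τ y - u τ x) / h) / h| * |u τ y - u τ x|
          + |K ((u τ y - u τ x) / h)| := by rw [abs_mul]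
      _ ≤ BK' / h * (2 * M) + BK :=
        add_le_add (mul_le_mul h2 h1 (abs_nonneg _) (by positivity)) h3
  -- measurability of the η-integrand
  have hFηmeas : ∀ τ ∈ Icc (0:ℝ) T,
      AEStronglyMeasurable (Fη τ) (volume.restrict (Ioo a b)) := by
    intro τ hτ
    have hm : Measurable fun y => (u τ y - u τ x) / h :=
      ((humeas τ hτ).sub_const (u τ x)).div_const h
    exact (((hK'cont.measurable.comp hm).div_const h).mul
      ((humeas τ hτ).sub_const (u τ x))).add (hKcont.measurable.comp hm)
      |>.aestronglyMeasurable
  -- continuity in t of u at fixed space point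
  have hucx : ∀ z ∈ Ioo a b, ContinuousOn (fun τ => u τ z) (Icc 0 T) := by
    intro z hz
    exact hucont.comp ((continuous_id.prodMk continuous_const).continuousOn)
      (fun τ hτ => ⟨hτ, hz⟩)
  -- continuity of η(·, x) on [0, T]
  have ηcont : ContinuousOn (fun τ => η τ x) (Icc 0 T) := by
    have : (fun τ => η τ x) = fun τ => ∫ y in Ioo a b, Fη τ y := funext fun τ => hη τ x
    rw [this]
    refine MeasureTheory.continuousOn_of_dominated (bound := fun _ => Cb) hFηmeas
      (fun τ hτ => ?_) (integrableOn_const measure_Ioo_lt_top.ne) ?_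
    · filter_upwards [ae_restrict_mem measurableSet_Ioo] with y hy
      rw [Real.norm_eq_abs]
      exact hFηbd τ hτ y hy
    · filter_upwards [ae_restrict_mem measurableSet_Ioo] with y hy
      have hc : ContinuousOn (fun τ => (u τ y - u τ x) / h) (Icc 0 T) :=
        ((hucx y hy).sub (hucx x hx)).div_const h
      exact (((hK'cont.comp_continuousOn hc).div_const h).mul
        ((hucx y hy).sub (hucx x hx))).add (hKcont.comp_continuousOn hc)
  -- the ODE satisfied by ∂ₓu at x
  have ode : ∀ τ ∈ Icc (0:ℝ) T,
      utx τ x = η τ x * (-(ux τ x)) + lam * (u0' x - ux τ x) := by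
    intro τ hτ
    -- a ball around x where ux is bounded and contained in (a,b)
    have huxc : ContinuousAt (fun z => ux τ z) x := by
      have : ContinuousOn (fun z => ux τ z) (Ioo a b) :=
        huxcont.comp ((continuous_const.prodMk continuous_id).continuousOn)
          (fun z hz => ⟨hτ, hz⟩)
      exact this.continuousAt (isOpen_Ioo.mem_nhds hx)
    have hev : ∀ᶠ z in 𝓝 x, |ux τ z| ≤ |ux τ x| + 1 ∧ z ∈ Ioo a b := by
      have h1 : ∀ᶠ z in 𝓝 x, |ux τ z - ux τ x| < 1 := by
        have := huxc.tendsto (Metric.ball_mem_nhds (ux τ x) one_pos)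
        filter_upwards [this] with z hz
        simpa [Real.dist_eq] using hz
      filter_upwards [h1, isOpen_Ioo.mem_nhds hx] with z h1z h2z
      refine ⟨?_, h2z⟩
      have := abs_sub_abs_le_abs_sub (ux τ z) (ux τ x)
      linarith
    obtain ⟨ε, hε, hball⟩ := Metric.eventually_nhds_iff_ball.1 hev
    -- differentiate under the integral sign
    have key := hasDerivAt_integral_of_dominated_loc_of_deriv_le
      (μ := volume.restrict (Ioo a b))
      (F := fun z y => K ((u τ y - u τ z) / h) * (u τ y - u τ z))
      (F' := fun z y => (K' ((u τ y - u τ z) / h) / h * (u τ y - u τ z)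
        + K ((u τ y - u τ z) / h)) * (-(ux τ z)))
      (x₀ := x) (bound := fun _ => Cb * (|ux τ x| + 1)) (Metric.ball_mem_nhds x hε)
      ?_ ?_ ?_ ?_ ?_ ?_
    · obtain ⟨-, hI⟩ := key
      have hIval : (∫ y in Ioo a b, (K' ((u τ y - u τ x) / h) / h * (u τ y - u τ x)
          + K ((u τ y - u τ x) / h)) * (-(ux τ x))) = η τ x * (-(ux τ x)) := by
        rw [MeasureTheory.integral_mul_const, hη τ x]
      rw [hIval] at hI
      have hlin : HasDerivAt (fun z => lam * (u0 z - u τ z)) (lam * (u0' x - ux τ x)) x :=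
        ((hu0deriv x).sub (hux τ hτ x hx)).const_mul lam
      have hsum := hI.add hlin
      have heq : (fun z => ut τ z) =ᶠ[𝓝 x]
          (fun z => (∫ y in Ioo a b, K ((u τ y - u τ z) / h) * (u τ y - u τ z))
            + lam * (u0 z - u τ z)) := by
        filter_upwards [isOpen_Ioo.mem_nhds hx] with z hz
        exact hut τ hτ z hz
      exact (hmix2 τ hτ x hx).unique (hsum.congr_of_eventuallyEq heq)
    · filter_upwards with z
      have hm : Measurable fun y => (u τ y - u τ z) / h :=
        ((humeas τ hτ).sub_const (u τ z)).div_const h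
      exact ((hKcont.measurable.comp hm).mul
        ((humeas τ hτ).sub_const (u τ z))).aestronglyMeasurable
    · -- integrability of F x₀
      have hm : Measurable fun y => (u τ y - u τ x) / h :=
        ((humeas τ hτ).sub_const (u τ x)).div_const h
      refine (MeasureTheory.integrable_const (BK * (2 * M))).mono'
        (((hKcont.measurable.comp hm).mul
          ((humeas τ hτ).sub_const (u τ x))).aestronglyMeasurable) ?_
      filter_upwards [ae_restrict_mem measurableSet_Ioo] with y hy
      have h1 : |u τ y - u τ x| ≤ 2 * M := by
        have a1 := hubdd τ hτ y hy
        have a2 := hubdd τ hτ x hx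
        calc |u τ y - u τ x| ≤ |u τ y| + |u τ x| := abs_sub _ _
          _ ≤ 2 * M := by linarith
      have h3 : |K ((u τ y - u τ x) / h)| ≤ BK := by
        rw [abs_of_nonneg (hKnonneg _)]; exact hKbdd _
      calc ‖K ((u τ y - u τ x) / h) * (u τ y - u τ x)‖
          = |K ((u τ y - u τ x) / h)| * |u τ y - u τ x| := abs_mul _ _
        _ ≤ BK * (2 * M) := mul_le_mul h3 h1 (abs_nonneg _)
            (le_trans (abs_nonneg _) h3)
    · have hm : Measurable fun y => (u τ y - u τ x) / h :=
        ((humeas τ hτ).sub_const (u τ x)).div_const h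
      exact (((((hK'cont.measurable.comp hm).div_const h).mul
        ((humeas τ hτ).sub_const (u τ x))).add (hKcont.measurable.comp hm)).mul_const
        (-(ux τ x))).aestronglyMeasurable
    · -- the uniform bound on F'
      filter_upwards [ae_restrict_mem measurableSet_Ioo] with y hy z hz
      obtain ⟨hz1, hz2⟩ := hball z hz
      have hb1 : |K' ((u τ y - u τ z) / h) / h * (u τ y - u τ z)
          + K ((u τ y - u τ z) / h)| ≤ Cb := by
        have h1 : |u τ y - u τ z| ≤ 2 * M := by
          have a1 := hubdd τ hτ y hy
          have a2 := hubdd τ hτ z hz2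
          calc |u τ y - u τ z| ≤ |u τ y| + |u τ z| := abs_sub _ _
            _ ≤ 2 * M := by linarith
        have h2 : |K' ((u τ y - u τ z) / h) / h| ≤ BK' / h := by
          rw [abs_div, abs_of_pos hh]
          gcongr
          exact hK'bdd _
        have h3 : |K ((u τ y - u τ z) / h)| ≤ BK := by
          rw [abs_of_nonneg (hKnonneg _)]; exact hKbdd _
        calc |K' ((u τ y - u τ z) / h) / h * (u τ y - u τ z)
              + K ((u τ y - u τ z) / h)|
            ≤ |K' ((u τ y - u τ z) / h) / h * (u τ y - u τ z)|
              + |K ((u τ y - u τ z) / h)| := abs_add_le _ _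
          _ = |K' ((u τ y - u τ z) / h) / h| * |u τ y - u τ z|
              + |K ((u τ y - u τ z) / h)| := by rw [abs_mul]
          _ ≤ BK' / h * (2 * M) + BK :=
            add_le_add (mul_le_mul h2 h1 (abs_nonneg _) (by positivity)) h3
      calc ‖(K' ((u τ y - u τ z) / h) / h * (u τ y - u τ z)
            + K ((u τ y - u τ z) / h)) * (-(ux τ z))‖
          = |K' ((u τ y - u τ z) / h) / h * (u τ y - u τ z)
            + K ((u τ y - u τ z) / h)| * |(-(ux τ z))| := abs_mul _ _
        _ ≤ Cb * (|ux τ x| + 1) := by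
            rw [abs_neg]
            refine mul_le_mul hb1 hz1 (abs_nonneg _) (le_trans (abs_nonneg _) hb1)
    · exact integrableOn_const measure_Ioo_lt_top.ne
    · -- differentiability in the parameter
      filter_upwards [ae_restrict_mem measurableSet_Ioo] with y hy z hz
      obtain ⟨-, hz2⟩ := hball z hz
      have hg : HasDerivAt (fun z => u τ y - u τ z) (-(ux τ z)) z :=
        (hux τ hτ z hz2).const_sub (u τ y)
      have hφ : HasDerivAt (fun δ => K (δ / h) * δ)
          (K' ((u τ y - u τ z) / h) / h * (u τ y - u τ z) + K ((u τ y - u τ z) / h))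
          (u τ y - u τ z) := by
        have h1 : HasDerivAt (fun δ : ℝ => K (δ / h)) (K' ((u τ y - u τ z) / h) * (1 / h))
            (u τ y - u τ z) := by
          have hd : HasDerivAt (fun δ : ℝ => δ / h) (1 / h) (u τ y - u τ z) :=
            (hasDerivAt_id _).div_const h
          exact HasDerivAt.comp _ (hKderiv _) hd
        have := h1.mul (hasDerivAt_id (u τ y - u τ z))
        refine this.congr_deriv ?_
        simp only [id_eq]
        ring
      have := hφ.comp z hg
      exact this
  -- initial value of ux
  have hv0 : ux 0 x = u0' x := by
    have heq : u0 =ᶠ[𝓝 x] (fun z => u 0 z) := by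
      filter_upwards [isOpen_Ioo.mem_nhds hx] with z hz using (hinit z hz).symm
    exact ((hux 0 hT0 x hx).congr_of_eventuallyEq heq).unique (hu0deriv x)
  -- the primitive of λ + η
  set E : ℝ → ℝ := fun s => ∫ τ in (0:ℝ)..s, (lam + η τ x) with hE
  have hηc : ContinuousOn (fun τ => lam + η τ x) (Icc 0 T) := continuousOn_const.add ηcont
  have hηT : IntegrableOn (fun τ => lam + η τ x) (uIcc 0 T) :=
    (hηc.mono (by rw [uIcc_of_le hT.le])).integrableOn_compact isCompact_uIcc
  have Econt : ContinuousOn E (Icc 0 T) := by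
    have := intervalIntegral.continuousOn_primitive_interval (a := 0) (b := T)
      (μ := volume) hηT
    rwa [uIcc_of_le hT.le] at this
  have hmemIci : ∀ s ∈ Ico (0:ℝ) T, Icc (0:ℝ) T ∈ 𝓝[Ici s] s := by
    intro s hs
    refine mem_nhdsWithin.2 ⟨Iio T, isOpen_Iio, hs.2, ?_⟩
    rintro z ⟨hz1, hz2⟩
    exact ⟨le_trans hs.1 hz2, le_of_lt hz1⟩
  have hEderiv : ∀ s ∈ Ico (0:ℝ) T, HasDerivWithinAt E (lam + η s x) (Ici s) s := by
    intro s hs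
    have hint : IntervalIntegrable (fun τ => lam + η τ x) volume 0 s := by
      apply ContinuousOn.intervalIntegrable
      rw [uIcc_of_le hs.1]
      exact hηc.mono (Icc_subset_Icc le_rfl hs.2.le)
    have hmeas : StronglyMeasurableAtFilter (fun τ => lam + η τ x) (𝓝[>] s) :=
      ⟨Icc 0 T, nhdsWithin_mono s Ioi_subset_Ici_self (hmemIci s hs),
        hηc.aestronglyMeasurable measurableSet_Icc⟩
    have hcw : ContinuousWithinAt (fun τ => lam + η τ x) (Ioi s) s :=
      (hηc s ⟨hs.1, hs.2.le⟩).mono_of_mem_nhdsWithin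
        (nhdsWithin_mono s Ioi_subset_Ici_self (hmemIci s hs))
    exact intervalIntegral.integral_hasDerivWithinAt_right hint hmeas hcw
  -- the two functions to compare
  set w : ℝ → ℝ := fun s => ux s x * Real.exp (E s) with hw
  set g : ℝ → ℝ := fun s => u0' x * (1 + lam * ∫ τ in (0:ℝ)..s, Real.exp (E τ)) with hgdef
  have hexpc : ContinuousOn (fun τ => Real.exp (E τ)) (Icc 0 T) :=
    Real.continuous_exp.comp_continuousOn Econt
  have hvcont : ContinuousOn (fun s => ux s x) (Icc 0 T) :=
    fun s hs => (hmix1 s hs x hx).continuousWithinAt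
  have hexpT : IntegrableOn (fun τ => Real.exp (E τ)) (uIcc 0 T) :=
    (hexpc.mono (by rw [uIcc_of_le hT.le])).integrableOn_compact isCompact_uIcc
  have hPexp : ContinuousOn (fun s => ∫ τ in (0:ℝ)..s, Real.exp (E τ)) (Icc 0 T) := by
    have := intervalIntegral.continuousOn_primitive_interval (a := 0) (b := T)
      (μ := volume) hexpT
    rwa [uIcc_of_le hT.le] at this
  have key : ∀ s ∈ Icc (0:ℝ) T, w s = g s := by
    apply eq_of_has_deriv_right_eq
      (f' := fun s => u0' x * (lam * Real.exp (E s)))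
    · intro s hs
      have hvder : HasDerivWithinAt (fun τ => ux τ x) (utx s x) (Ici s) s :=
        (hmix1 s ⟨hs.1, hs.2.le⟩ x hx).mono_of_mem_nhdsWithin (hmemIci s hs)
      have hEexp : HasDerivWithinAt (fun τ => Real.exp (E τ))
          (Real.exp (E s) * (lam + η s x)) (Ici s) s := (hEderiv s hs).exp
      have hprod : HasDerivWithinAt w
          (utx s x * Real.exp (E s) + ux s x * (Real.exp (E s) * (lam + η s x))) (Ici s) s :=
        hvder.mul hEexp
      refine hprod.congr_deriv ?_
      rw [ode s ⟨hs.1, hs.2.le⟩]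
      ring
    · intro s hs
      have hint : IntervalIntegrable (fun τ => Real.exp (E τ)) volume 0 s := by
        apply ContinuousOn.intervalIntegrable
        rw [uIcc_of_le hs.1]
        exact hexpc.mono (Icc_subset_Icc le_rfl hs.2.le)
      have hmeas : StronglyMeasurableAtFilter (fun τ => Real.exp (E τ)) (𝓝[>] s) :=
        ⟨Icc 0 T, nhdsWithin_mono s Ioi_subset_Ici_self (hmemIci s hs),
          hexpc.aestronglyMeasurable measurableSet_Icc⟩
      have hcw : ContinuousWithinAt (fun τ => Real.exp (E τ)) (Ioi s) s :=
        (hexpc s ⟨hs.1, hs.2.le⟩).mono_of_mem_nhdsWithin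
          (nhdsWithin_mono s Ioi_subset_Ici_self (hmemIci s hs))
      have hP : HasDerivWithinAt (fun s => ∫ τ in (0:ℝ)..s, Real.exp (E τ))
          (Real.exp (E s)) (Ici s) s :=
        intervalIntegral.integral_hasDerivWithinAt_right hint hmeas hcw
      exact ((hP.const_mul lam).const_add 1).const_mul (u0' x)
    · exact hvcont.mul hexpc
    · exact continuousOn_const.mul
        (continuousOn_const.add (continuousOn_const.mul hPexp))
    · simp [hw, hgdef, hE, hv0]
  -- conclude
  have hwt : ux t x * Real.exp (E t)
      = u0' x * (1 + lam * ∫ τ in (0:ℝ)..t, Real.exp (E τ)) := key t ht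
  have hGval : G t x = Real.exp (-(E t)) := hG t x
  have hGinv : (∫ τ in (0:ℝ)..t, (G τ x)⁻¹) = ∫ τ in (0:ℝ)..t, Real.exp (E τ) := by
    refine intervalIntegral.integral_congr fun τ _ => ?_
    show (G τ x)⁻¹ = Real.exp (E τ)
    rw [hG τ x, Real.exp_neg, inv_inv]
  have hne : Real.exp (E t) ≠ 0 := Real.exp_ne_zero _
  rw [hGval, hGinv, Real.exp_neg]
  field_simp
  linear_combination hwt
end

section
/- Boundary monotonicity (Corollary 3.2, point 2): let v : [0,T]×[0,L] → ℝ be a bounded solution of problem P((0,L),v0) whose equation holds for all s ∈ [0,L] including the endpoints, and suppose v(t,·) is nonincreasing on [0,L] for every t ∈ [0,T]. Then for every t ∈ [0,T], v(t,0) ≤ v0(0) and v(t,L) ≥ v0(L). -/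
open MeasureTheory Set

/-- Gronwall-type comparison: if `u' ≤ lam * (c - u)` on `[0,T]` and `u 0 = c`,
then `u ≤ c` on `[0,T]`. -/
lemma stmt_8_aux {T lam : ℝ} (_hlam : 0 ≤ lam) (u : ℝ → ℝ) (c : ℝ) (hu0 : u 0 = c)
    (hder : ∀ t ∈ Icc (0:ℝ) T, ∃ D, HasDerivWithinAt u D (Icc 0 T) t ∧ D ≤ lam * (c - u t)) :
    ∀ t ∈ Icc (0:ℝ) T, u t ≤ c := by
  set f : ℝ → ℝ := fun t => Real.exp (lam * t) * (u t - c) with hf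
  have hfd : ∀ t ∈ Icc (0:ℝ) T, ∃ D, HasDerivWithinAt f D (Icc 0 T) t ∧ D ≤ 0 := by
    intro t ht
    obtain ⟨D, hD, hDle⟩ := hder t ht
    refine ⟨Real.exp (lam * t) * lam * (u t - c) + Real.exp (lam * t) * D, ?_, ?_⟩
    · have he : HasDerivAt (fun t : ℝ => Real.exp (lam * t)) (Real.exp (lam * t) * lam) t := by
        simpa [Function.comp_def] using (Real.hasDerivAt_exp (lam * t)).comp t
          ((hasDerivAt_id t).const_mul lam)
      exact (he.hasDerivWithinAt.mul (hD.sub_const c))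
    · have hepos : (0:ℝ) < Real.exp (lam * t) := Real.exp_pos _
      nlinarith [mul_le_mul_of_nonneg_left hDle hepos.le]
  have hcont : ContinuousOn f (Icc 0 T) := fun t ht =>
    ((hfd t ht).choose_spec.1).continuousWithinAt
  have hderivAt : ∀ x, ∀ hx : x ∈ Ioo (0:ℝ) T,
      HasDerivAt f ((hfd x (Ioo_subset_Icc_self hx)).choose) x := fun x hx =>
    ((hfd x (Ioo_subset_Icc_self hx)).choose_spec.1).hasDerivAt (Icc_mem_nhds hx.1 hx.2)
  have hanti : AntitoneOn f (Icc 0 T) := by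
    refine antitoneOn_of_deriv_nonpos (convex_Icc 0 T) hcont ?_ ?_ <;>
      rw [interior_Icc]
    · exact fun x hx => (hderivAt x hx).differentiableAt.differentiableWithinAt
    · intro x hx
      rw [(hderivAt x hx).deriv]
      exact (hfd x (Ioo_subset_Icc_self hx)).choose_spec.2
  intro t ht
  have h0 : (0:ℝ) ∈ Icc (0:ℝ) T := ⟨le_refl _, ht.1.trans ht.2⟩
  have := hanti h0 ht ht.1
  have hf0 : f 0 = 0 := by simp [hf, hu0]
  rw [hf0] at this
  simp only [hf] at this
  have hepos : (0:ℝ) < Real.exp (lam * t) := Real.exp_pos _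
  nlinarith

/-- Boundary monotonicity (Corollary 3.2, point 2): if `v` is a bounded solution of
P((0,L),v0) whose equation holds on all of `[0,L]` including the endpoints, and
`v(t,·)` is nonincreasing on `[0,L]` for every `t ∈ [0,T]`, then
`v(t,0) ≤ v0(0)` and `v(t,L) ≥ v0(L)` for every `t ∈ [0,T]`. -/
theorem stmt_8
    (L : ℝ) (hL : 0 < L)
    (K : ℝ → ℝ) (hKnonneg : ∀ ξ, 0 ≤ K ξ) (BK : ℝ) (hKbdd : ∀ ξ, K ξ ≤ BK)
    (LK : NNReal) (hKlip : LipschitzWith LK K)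
    (h : ℝ) (hh : 0 < h) (lam : ℝ) (hlam : 0 ≤ lam) (T : ℝ) (hT : 0 < T)
    (v0 : ℝ → ℝ) (hv0m : Measurable v0) (M0 : ℝ) (hv0b : ∀ s ∈ Icc (0:ℝ) L, |v0 s| ≤ M0)
    (hv0mono : ∀ s1 ∈ Icc (0:ℝ) L, ∀ s2 ∈ Icc (0:ℝ) L, s1 ≤ s2 → v0 s2 ≤ v0 s1)
    (v : ℝ → ℝ → ℝ)
    (hvmeas : ∀ t ∈ Icc (0:ℝ) T, Measurable (v t))
    (M : ℝ) (hvbdd : ∀ t ∈ Icc (0:ℝ) T, ∀ s ∈ Icc (0:ℝ) L, |v t s| ≤ M)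
    (hinit : ∀ s ∈ Icc (0:ℝ) L, v 0 s = v0 s)
    (hsol : ∀ t ∈ Icc (0:ℝ) T, ∀ s ∈ Icc (0:ℝ) L,
      HasDerivWithinAt (fun τ => v τ s)
        ((∫ σ in (0:ℝ)..L, K ((v t σ - v t s) / h) * (v t σ - v t s))
          + lam * (v0 s - v t s)) (Icc 0 T) t)
    (hvmono : ∀ t ∈ Icc (0:ℝ) T, ∀ s1 ∈ Icc (0:ℝ) L, ∀ s2 ∈ Icc (0:ℝ) L,
      s1 ≤ s2 → v t s2 ≤ v t s1) :
    ∀ t ∈ Icc (0:ℝ) T, v t 0 ≤ v0 0 ∧ v0 L ≤ v t L := by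
  have h0L : (0:ℝ) ∈ Icc (0:ℝ) L := ⟨le_refl _, hL.le⟩
  have hLL : L ∈ Icc (0:ℝ) L := ⟨hL.le, le_refl _⟩
  have part1 : ∀ t ∈ Icc (0:ℝ) T, v t 0 ≤ v0 0 := by
    refine stmt_8_aux hlam (fun τ => v τ 0) (v0 0) (hinit 0 h0L) ?_
    intro t ht
    refine ⟨_, hsol t ht 0 h0L, ?_⟩
    have hI : (∫ σ in (0:ℝ)..L, K ((v t σ - v t 0) / h) * (v t σ - v t 0)) ≤ 0 := by
      have hnn : (0:ℝ) ≤ ∫ σ in (0:ℝ)..L, -(K ((v t σ - v t 0) / h) * (v t σ - v t 0)) := by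
        refine intervalIntegral.integral_nonneg hL.le ?_
        intro σ hσ
        rw [neg_nonneg]
        exact mul_nonpos_iff.2 (Or.inl ⟨hKnonneg _,
          sub_nonpos.2 (hvmono t ht 0 h0L σ hσ hσ.1)⟩)
      rw [intervalIntegral.integral_neg] at hnn
      linarith
    linarith
  have part2 : ∀ t ∈ Icc (0:ℝ) T, v0 L ≤ v t L := by
    have := stmt_8_aux (T := T) hlam (fun τ => -v τ L) (-v0 L)
      (by simp [hinit L hLL]) ?_
    · intro t ht
      have h2 : -v t L ≤ -v0 L := this t ht
      linarith
    intro t ht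
    refine ⟨_, (hsol t ht L hLL).neg, ?_⟩
    have hI : (0:ℝ) ≤ ∫ σ in (0:ℝ)..L, K ((v t σ - v t L) / h) * (v t σ - v t L) := by
      refine intervalIntegral.integral_nonneg hL.le ?_
      intro σ hσ
      exact mul_nonneg (hKnonneg _) (sub_nonneg.2 (hvmono t ht σ hσ L hLL hσ.2))
    simp only [neg_add]
    linarith
  exact fun t ht => ⟨part1 t ht, part2 t ht⟩
end

section
/- Mass conservation (Corollary 3.2, point 3): let v be a bounded solution of problem P((0,L),v0) such that ∂_t v is bounded on [0,T]×(0,L) and (t,s) ↦ v(t,s) is jointly measurable, and suppose the map ξ ↦ K_h(ξ)·ξ is odd (for instance, K is an even function, as is the Gaussian kernel). Then for every t ∈ [0,T], ∫_0^L v(t,s) ds = ∫_0^L v0(s) ds. -/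
open MeasureTheory Set Function

/-- Fubini swap for bounded a.e.-strongly-measurable functions on finite-measure sets. -/
lemma fubini_swap_bounded {f : ℝ → ℝ → ℝ} {s t : Set ℝ}
    (hs : MeasurableSet s) (ht : MeasurableSet t)
    (hsf : MeasureTheory.volume s ≠ ⊤) (htf : MeasureTheory.volume t ≠ ⊤)
    (hm : AEStronglyMeasurable (Function.uncurry f)
      ((volume.restrict s).prod (volume.restrict t)))
    {C : ℝ} (hb : ∀ x ∈ s, ∀ y ∈ t, |f x y| ≤ C) :
    ∫ x in s, ∫ y in t, f x y = ∫ y in t, ∫ x in s, f x y := by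
  apply MeasureTheory.integral_integral_swap
  rw [Measure.prod_restrict] at hm ⊢
  refine ⟨hm, MeasureTheory.HasFiniteIntegral.restrict_of_bounded (C := C) ?_ ?_⟩
  · rw [Measure.prod_prod]
    exact lt_top_iff_ne_top.2 (ENNReal.mul_ne_top hsf htf)
  · refine (ae_restrict_iff' (hs.prod ht)).2 (Filter.Eventually.of_forall ?_)
    rintro ⟨x, y⟩ ⟨hx, hy⟩
    simpa [Function.uncurry, Real.norm_eq_abs] using hb x hx y hy


/-- Mass conservation (Corollary 3.2, point 3): if `v` is a bounded solution of
P((0,L),v0) with bounded time derivative and jointly measurable, and the map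
`ξ ↦ K_h(ξ)·ξ` is odd, then `∫_0^L v(t,s) ds = ∫_0^L v0(s) ds` for every `t ∈ [0,T]`. -/
theorem stmt_9
    (L : ℝ) (hL : 0 < L)
    (K : ℝ → ℝ) (hKnonneg : ∀ ξ, 0 ≤ K ξ) (BK : ℝ) (hKbdd : ∀ ξ, K ξ ≤ BK)
    (LK : NNReal) (hKlip : LipschitzWith LK K)
    (h : ℝ) (hh : 0 < h) (lam : ℝ) (hlam : 0 ≤ lam) (T : ℝ) (hT : 0 < T)
    (hodd : ∀ ξ : ℝ, K (-ξ / h) * (-ξ) = -(K (ξ / h) * ξ))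
    (v0 : ℝ → ℝ) (hv0m : Measurable v0) (M0 : ℝ) (hv0b : ∀ s ∈ Ioo (0:ℝ) L, |v0 s| ≤ M0)
    (v vt : ℝ → ℝ → ℝ)
    (hvmeas : ∀ t ∈ Icc (0:ℝ) T, Measurable (v t))
    (hvjoint : Measurable (Function.uncurry v))
    (M : ℝ) (hvbdd : ∀ t ∈ Icc (0:ℝ) T, ∀ s ∈ Ioo (0:ℝ) L, |v t s| ≤ M)
    (hinit : ∀ s ∈ Ioo (0:ℝ) L, v 0 s = v0 s)
    (hsol : ∀ t ∈ Icc (0:ℝ) T, ∀ s ∈ Ioo (0:ℝ) L,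
      HasDerivWithinAt (fun τ => v τ s) (vt t s) (Icc 0 T) t)
    (hvt : ∀ t ∈ Icc (0:ℝ) T, ∀ s ∈ Ioo (0:ℝ) L,
      vt t s = (∫ σ in (0:ℝ)..L, K ((v t σ - v t s) / h) * (v t σ - v t s))
        + lam * (v0 s - v t s))
    (B : ℝ) (hvtbdd : ∀ t ∈ Icc (0:ℝ) T, ∀ s ∈ Ioo (0:ℝ) L, |vt t s| ≤ B) :
    ∀ t ∈ Icc (0:ℝ) T, ∫ s in (0:ℝ)..L, v t s = ∫ s in (0:ℝ)..L, v0 s := by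
  -- conversion between interval integrals and set integrals over `Ioo 0 L`
  have ivl : ∀ f : ℝ → ℝ, ∫ s in (0:ℝ)..L, f s = ∫ s in Ioo (0:ℝ) L, f s := by
    intro f
    rw [intervalIntegral.integral_of_le hL.le, MeasureTheory.integral_Ioc_eq_integral_Ioo]
  have hIoofin : MeasureTheory.volume (Ioo (0:ℝ) L) ≠ ⊤ := by
    rw [Real.volume_Ioo]; exact ENNReal.ofReal_ne_top
  -- the function F giving the time derivative
  set F : ℝ → ℝ → ℝ := fun t s =>
    (∫ σ in Ioo (0:ℝ) L, K ((v t σ - v t s) / h) * (v t σ - v t s))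
      + lam * (v0 s - v t s) with hF
  have hFeq : ∀ t ∈ Icc (0:ℝ) T, ∀ s ∈ Ioo (0:ℝ) L, vt t s = F t s := by
    intro t ht s hs
    rw [hvt t ht s hs, ivl]
  have hFbd : ∀ t ∈ Icc (0:ℝ) T, ∀ s ∈ Ioo (0:ℝ) L, |F t s| ≤ B := by
    intro t ht s hs
    rw [← hFeq t ht s hs]; exact hvtbdd t ht s hs
  have hKm : Measurable K := hKlip.continuous.measurable
  -- joint measurability of F
  have hFm : Measurable (Function.uncurry F) := by
    have ha : Measurable (fun q : (ℝ × ℝ) × ℝ => v q.1.1 q.2) :=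
      hvjoint.comp ((measurable_fst.comp measurable_fst).prodMk measurable_snd)
    have hb : Measurable (fun q : (ℝ × ℝ) × ℝ => v q.1.1 q.1.2) :=
      hvjoint.comp measurable_fst
    have hG : Measurable (fun q : (ℝ × ℝ) × ℝ =>
        K ((v q.1.1 q.2 - v q.1.1 q.1.2) / h) * (v q.1.1 q.2 - v q.1.1 q.1.2)) :=
      (hKm.comp ((ha.sub hb).div_const h)).mul (ha.sub hb)
    have h1 : Measurable (fun p : ℝ × ℝ =>
        ∫ σ in Ioo (0:ℝ) L, K ((v p.1 σ - v p.1 p.2) / h) * (v p.1 σ - v p.1 p.2)) :=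
      (hG.stronglyMeasurable.integral_prod_right').measurable
    have h2 : Measurable (fun p : ℝ × ℝ => lam * (v0 p.2 - v p.1 p.2)) :=
      measurable_const.mul ((hv0m.comp measurable_snd).sub hvjoint)
    exact h1.add h2
  have hFsec : ∀ s, Measurable fun τ => F τ s := fun s =>
    hFm.comp (measurable_id.prodMk measurable_const)
  -- integrability facts
  have int_v : ∀ t ∈ Icc (0:ℝ) T, IntegrableOn (v t) (Ioo (0:ℝ) L) := by
    intro t ht
    refine Measure.integrableOn_of_bounded (M := M) hIoofin (hvmeas t ht).aestronglyMeasurable ?_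
    refine (ae_restrict_iff' measurableSet_Ioo).2 (Filter.Eventually.of_forall fun s hs => ?_)
    simpa [Real.norm_eq_abs] using hvbdd t ht s hs
  have int_v0 : IntegrableOn v0 (Ioo (0:ℝ) L) := by
    refine Measure.integrableOn_of_bounded (M := M0) hIoofin hv0m.aestronglyMeasurable ?_
    refine (ae_restrict_iff' measurableSet_Ioo).2 (Filter.Eventually.of_forall fun s hs => ?_)
    simpa [Real.norm_eq_abs] using hv0b s hs
  -- Step A: fundamental theorem of calculus for each fiber s
  have stepA : ∀ t ∈ Icc (0:ℝ) T, ∀ s ∈ Ioo (0:ℝ) L,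
      v t s - v0 s = ∫ τ in Ioc (0:ℝ) t, F τ s := by
    intro t ht s hs
    have hcont : ContinuousOn (fun τ => v τ s) (Icc 0 t) := fun τ hτ =>
      ((hsol τ ⟨hτ.1, hτ.2.trans ht.2⟩ s hs).continuousWithinAt).mono
        (Icc_subset_Icc le_rfl ht.2)
    have hderiv : ∀ x ∈ Ioo (0:ℝ) t, HasDerivWithinAt (fun τ => v τ s) (F x s) (Ioi x) x := by
      intro x hx
      have hxI : x ∈ Icc (0:ℝ) T := ⟨hx.1.le, hx.2.le.trans ht.2⟩
      have hd := hsol x hxI s hs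
      rw [hFeq x hxI s hs] at hd
      refine hd.mono_of_mem_nhdsWithin (Filter.mem_of_superset
        (Ioc_mem_nhdsGT_of_mem ⟨le_rfl, lt_of_lt_of_le hx.2 ht.2⟩) ?_)
      exact fun y hy => ⟨hxI.1.trans hy.1.le, hy.2⟩
    have hint : IntervalIntegrable (fun τ => F τ s) volume 0 t := by
      rw [intervalIntegrable_iff_integrableOn_Ioc_of_le ht.1]
      refine Measure.integrableOn_of_bounded (M := B) ?_ (hFsec s).aestronglyMeasurable ?_
      · rw [Real.volume_Ioc]; exact ENNReal.ofReal_ne_top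
      · refine (ae_restrict_iff' measurableSet_Ioc).2 (Filter.Eventually.of_forall fun τ hτ => ?_)
        simpa [Real.norm_eq_abs] using hFbd τ ⟨hτ.1.le, hτ.2.trans ht.2⟩ s hs
    have := intervalIntegral.integral_eq_sub_of_hasDeriv_right_of_le ht.1 hcont hderiv hint
    rw [intervalIntegral.integral_of_le ht.1, hinit s hs] at this
    exact this.symm
  -- notation
  set m : ℝ → ℝ := fun t => ∫ s in Ioo (0:ℝ) L, v t s with hm
  set m0v : ℝ := ∫ s in Ioo (0:ℝ) L, v0 s with hm0v
  have hmmeas : Measurable m := (hvjoint.stronglyMeasurable.integral_prod_right').measurable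
  have hmbd : ∀ t ∈ Icc (0:ℝ) T, |m t| ≤ M * L := by
    intro t ht
    have := MeasureTheory.norm_setIntegral_le_of_norm_le_const (C := M) (f := v t)
      (lt_top_iff_ne_top.2 hIoofin)
      (fun s hs => by simpa [Real.norm_eq_abs] using hvbdd t ht s hs)
    rw [Real.norm_eq_abs] at this
    calc |m t| ≤ M * (volume (Ioo (0:ℝ) L)).toReal := this
      _ = M * L := by rw [Real.volume_Ioo, sub_zero, ENNReal.toReal_ofReal hL.le]
  -- Step D: the spatial integral of F τ is lam * (m0v - m τ)
  have stepD : ∀ τ ∈ Icc (0:ℝ) T, (∫ s in Ioo (0:ℝ) L, F τ s) = lam * (m0v - m τ) := by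
    intro τ hτ
    set W : ℝ → ℝ → ℝ := fun s σ => K ((v τ σ - v τ s) / h) * (v τ σ - v τ s) with hW
    have hWm : Measurable (Function.uncurry W) := by
      have ha : Measurable (fun q : ℝ × ℝ => v τ q.2) := (hvmeas τ hτ).comp measurable_snd
      have hb : Measurable (fun q : ℝ × ℝ => v τ q.1) := (hvmeas τ hτ).comp measurable_fst
      exact (hKm.comp ((ha.sub hb).div_const h)).mul (ha.sub hb)
    have hWb : ∀ s ∈ Ioo (0:ℝ) L, ∀ σ ∈ Ioo (0:ℝ) L, |W s σ| ≤ BK * (2 * M) := by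
      intro s hs σ hσ
      have h1 : |K ((v τ σ - v τ s) / h)| ≤ BK := by
        rw [abs_of_nonneg (hKnonneg _)]; exact hKbdd _
      have h2 : |v τ σ - v τ s| ≤ 2 * M := by
        calc |v τ σ - v τ s| ≤ |v τ σ| + |v τ s| := abs_sub _ _
          _ ≤ M + M := add_le_add (hvbdd τ hτ σ hσ) (hvbdd τ hτ s hs)
          _ = 2 * M := by ring
      calc |W s σ| = |K ((v τ σ - v τ s) / h)| * |v τ σ - v τ s| := abs_mul _ _
        _ ≤ BK * (2 * M) := mul_le_mul h1 h2 (abs_nonneg _) ((abs_nonneg _).trans h1)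
    have hanti : ∀ x y, W x y = -(W y x) := by
      intro x y
      have := hodd (v τ x - v τ y)
      have e : -(v τ x - v τ y) = v τ y - v τ x := by ring
      rw [e] at this
      simpa [hW] using this
    -- the double integral of W vanishes
    have hswap : (∫ x in Ioo (0:ℝ) L, ∫ y in Ioo (0:ℝ) L, W x y)
        = ∫ y in Ioo (0:ℝ) L, ∫ x in Ioo (0:ℝ) L, W x y :=
      fubini_swap_bounded measurableSet_Ioo measurableSet_Ioo hIoofin hIoofin
        hWm.aestronglyMeasurable hWb
    have hI0 : (∫ x in Ioo (0:ℝ) L, ∫ y in Ioo (0:ℝ) L, W x y) = 0 := by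
      have e1 : (∫ y in Ioo (0:ℝ) L, ∫ x in Ioo (0:ℝ) L, W x y)
          = ∫ y in Ioo (0:ℝ) L, -(∫ x in Ioo (0:ℝ) L, W y x) := by
        refine setIntegral_congr_fun measurableSet_Ioo fun y _ => ?_
        rw [← integral_neg]
        exact setIntegral_congr_fun measurableSet_Ioo fun x _ => hanti x y
      have e2 : (∫ y in Ioo (0:ℝ) L, -(∫ x in Ioo (0:ℝ) L, W y x))
          = -(∫ y in Ioo (0:ℝ) L, ∫ x in Ioo (0:ℝ) L, W y x) := integral_neg _
      have := hswap
      rw [e1, e2] at this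
      linarith
    -- integrability of the two pieces
    have hInnerM : Measurable (fun s => ∫ σ in Ioo (0:ℝ) L, W s σ) :=
      (hWm.stronglyMeasurable.integral_prod_right').measurable
    have hInnerInt : IntegrableOn (fun s => ∫ σ in Ioo (0:ℝ) L, W s σ) (Ioo (0:ℝ) L) := by
      refine Measure.integrableOn_of_bounded (M := BK * (2 * M) * L) hIoofin
        hInnerM.aestronglyMeasurable ?_
      refine (ae_restrict_iff' measurableSet_Ioo).2 (Filter.Eventually.of_forall fun s hs => ?_)
      have := MeasureTheory.norm_setIntegral_le_of_norm_le_const (C := BK * (2 * M)) (f := W s)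
        (lt_top_iff_ne_top.2 hIoofin)
        (fun σ hσ => by simpa [Real.norm_eq_abs] using hWb s hs σ hσ)
      rw [measureReal_def, Real.volume_Ioo, sub_zero, ENNReal.toReal_ofReal hL.le] at this
      exact this
    have hRelInt : IntegrableOn (fun s => lam * (v0 s - v τ s)) (Ioo (0:ℝ) L) :=
      (int_v0.sub (int_v τ hτ)).const_mul lam
    have hsplit : (∫ s in Ioo (0:ℝ) L, F τ s)
        = (∫ s in Ioo (0:ℝ) L, ∫ σ in Ioo (0:ℝ) L, W s σ)
          + ∫ s in Ioo (0:ℝ) L, lam * (v0 s - v τ s) :=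
      integral_add hInnerInt hRelInt
    rw [hsplit, hI0, zero_add, MeasureTheory.integral_const_mul,
      integral_sub int_v0 (int_v τ hτ)]
  -- combining: the integral equation for m
  have key : ∀ t ∈ Icc (0:ℝ) T, m t = m0v + ∫ τ in (0:ℝ)..t, lam * (m0v - m τ) := by
    intro t ht
    have hB : m t - m0v = ∫ s in Ioo (0:ℝ) L, ∫ τ in Ioc (0:ℝ) t, F τ s := by
      rw [hm, hm0v, ← integral_sub (int_v t ht) int_v0]
      exact setIntegral_congr_fun measurableSet_Ioo fun s hs => stepA t ht s hs
    have hIocfin : MeasureTheory.volume (Ioc (0:ℝ) t) ≠ ⊤ := by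
      rw [Real.volume_Ioc]; exact ENNReal.ofReal_ne_top
    have hC : (∫ s in Ioo (0:ℝ) L, ∫ τ in Ioc (0:ℝ) t, F τ s)
        = ∫ τ in Ioc (0:ℝ) t, ∫ s in Ioo (0:ℝ) L, F τ s := by
      refine fubini_swap_bounded (C := B) measurableSet_Ioo measurableSet_Ioc hIoofin hIocfin
        ?_ ?_
      · exact ((hFm.comp measurable_swap :
          Measurable fun p : ℝ × ℝ => F p.2 p.1)).aestronglyMeasurable
      · exact fun s hs τ hτ => hFbd τ ⟨hτ.1.le, hτ.2.trans ht.2⟩ s hs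
    have hD : (∫ τ in Ioc (0:ℝ) t, ∫ s in Ioo (0:ℝ) L, F τ s)
        = ∫ τ in Ioc (0:ℝ) t, lam * (m0v - m τ) :=
      setIntegral_congr_fun measurableSet_Ioc fun τ hτ =>
        stepD τ ⟨hτ.1.le, hτ.2.trans ht.2⟩
    rw [intervalIntegral.integral_of_le ht.1, ← hD, ← hC, ← hB]
    ring
  -- the ODE argument
  set g : ℝ → ℝ := fun τ => lam * (m0v - m τ) with hg
  have hgm : Measurable g := measurable_const.mul (measurable_const.sub hmmeas)
  have hgbd : ∀ τ ∈ Icc (0:ℝ) T, |g τ| ≤ lam * (|m0v| + M * L) := by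
    intro τ hτ
    rw [hg, abs_mul, abs_of_nonneg hlam]
    refine mul_le_mul_of_nonneg_left ?_ hlam
    calc |m0v - m τ| ≤ |m0v| + |m τ| := abs_sub _ _
      _ ≤ |m0v| + M * L := add_le_add le_rfl (hmbd τ hτ)
  have hgIntOn : IntegrableOn g (Icc (0:ℝ) T) := by
    refine Measure.integrableOn_of_bounded (M := lam * (|m0v| + M * L))
      (by rw [Real.volume_Icc]; exact ENNReal.ofReal_ne_top) hgm.aestronglyMeasurable ?_
    exact (ae_restrict_iff' measurableSet_Icc).2 (Filter.Eventually.of_forall fun τ hτ => by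
      simpa [Real.norm_eq_abs] using hgbd τ hτ)
  set P : ℝ → ℝ := fun u => ∫ τ in (0:ℝ)..u, g τ with hP
  have hPcont : ContinuousOn P (Icc (0:ℝ) T) := by
    have := intervalIntegral.continuousOn_primitive_interval (a := 0) (b := T)
      (μ := volume) (f := g) (by rwa [uIcc_of_le hT.le])
    rwa [uIcc_of_le hT.le] at this
  have hwP : ∀ u ∈ Icc (0:ℝ) T, m u - m0v = P u := by
    intro u hu
    rw [key u hu]; ring
  have hgInt : ∀ u ∈ Icc (0:ℝ) T, IntervalIntegrable g volume 0 u := by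
    intro u hu
    rw [intervalIntegrable_iff_integrableOn_Ioc_of_le hu.1]
    exact hgIntOn.mono_set (fun x hx => ⟨hx.1.le, hx.2.trans hu.2⟩)
  have hP' : ∀ t ∈ Ico (0:ℝ) T, HasDerivWithinAt P (-lam * P t) (Ici t) t := by
    intro t ht
    have htI : t ∈ Icc (0:ℝ) T := ⟨ht.1, ht.2.le⟩
    have hIccmem : Icc (0:ℝ) T ∈ nhdsWithin t (Ioi t) :=
      Filter.mem_of_superset (Ioc_mem_nhdsGT_of_mem ⟨le_rfl, ht.2⟩)
        (fun y hy => ⟨ht.1.trans hy.1.le, hy.2⟩)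
    have hcg : ContinuousWithinAt g (Ioi t) t := by
      have h1 : ContinuousWithinAt (fun u => -lam * P u) (Icc (0:ℝ) T) t :=
        (continuousOn_const.mul hPcont) t htI
      have h2 : ContinuousWithinAt g (Icc (0:ℝ) T) t := by
        refine h1.congr (fun u hu => ?_) ?_
        · rw [hg, ← hwP u hu]; ring
        · rw [hg, ← hwP t htI]; ring
      exact h2.mono_of_mem_nhdsWithin hIccmem
    have hmeasg : StronglyMeasurableAtFilter g (nhdsWithin t (Ioi t)) volume :=
      ⟨univ, Filter.univ_mem, hgm.aestronglyMeasurable.restrict⟩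
    have hd := intervalIntegral.integral_hasDerivWithinAt_right (s := Ici t)
      (t := Ioi t) (hgInt t htI) hmeasg hcg
    have : g t = -lam * P t := by rw [hg, ← hwP t htI]; ring
    rwa [this] at hd
  have hLip : ∀ t : ℝ, LipschitzWith lam.toNNReal (fun x : ℝ => -lam * x) := by
    intro t
    refine LipschitzWith.of_dist_le_mul fun x y => ?_
    have e : (-lam * x) - (-lam * y) = -(lam * (x - y)) := by ring
    rw [Real.dist_eq, Real.dist_eq, Real.coe_toNNReal _ hlam, e, abs_neg, abs_mul,
      abs_of_nonneg hlam]
  have hzero : EqOn P (fun _ => (0:ℝ)) (Icc (0:ℝ) T) := by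
    refine ODE_solution_unique (v := fun _ x => -lam * x) hLip hPcont hP'
      continuousOn_const (fun t _ => by
        simpa using (hasDerivWithinAt_const t (Ici t) (0:ℝ))) ?_
    simp [hP]
  -- conclusion
  intro t ht
  have hmt : m t = m0v := by
    have h2 := hwP t ht
    rw [hzero ht] at h2
    simp at h2
    linarith
  rw [ivl (v t), ivl v0]
  exact hmt
end

section
/- Exponential flattening when λ = 0 (Corollary 3.2, point 5): let λ = 0, let K be additionally continuously differentiable, let v be a bounded solution of problem P((0,L),v0) on [0,∞) with |v(t,s)| ≤ M for all (t,s), with v0 continuously differentiable, v and ∂_s v continuous, ∂_s v(·,s) differentiable in t, and ∂_t ∂_s v = ∂_s ∂_t v. Suppose c2 := L · inf{ K'_h(ξ)·ξ + K_h(ξ) : |ξ| ≤ 2M } > 0. Then for every t ≥ 0 and s ∈ (0,L), |∂_s v(t,s)| ≤ |v0'(s)| · e^{−c2 t}; in particular ∂_s v(t,·) converges uniformly to 0 as t → ∞. -/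
open MeasureTheory Set Filter

/-- Exponential flattening when λ = 0 (Corollary 3.2, point 5): if `v` is a bounded
solution of P((0,L),v0) with λ = 0, `K ∈ C¹`, commuting mixed partials, and
`c2 := L · inf{ K'_h(ξ)ξ + K_h(ξ) : |ξ| ≤ 2M } > 0`, then
`|∂_s v(t,s)| ≤ |v0'(s)| e^{−c2 t}`; in particular `∂_s v(t,·) → 0` uniformly. -/
theorem stmt_10
    (L : ℝ) (hL : 0 < L)
    (K K' : ℝ → ℝ) (hKnonneg : ∀ ξ, 0 ≤ K ξ) (BK : ℝ) (hKbdd : ∀ ξ, K ξ ≤ BK)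
    (LK : NNReal) (hKlip : LipschitzWith LK K)
    (hKderiv : ∀ ξ, HasDerivAt K (K' ξ) ξ) (hK'cont : Continuous K')
    (BK' : ℝ) (hK'bdd : ∀ ξ, |K' ξ| ≤ BK')
    (h : ℝ) (hh : 0 < h)
    (v0 v0' : ℝ → ℝ) (hv0deriv : ∀ s, HasDerivAt v0 (v0' s) s) (hv0'cont : Continuous v0')
    (v vs vt vts : ℝ → ℝ → ℝ)
    (hvmeas : ∀ t, 0 ≤ t → Measurable (v t))
    (M : ℝ) (hvbdd : ∀ t, 0 ≤ t → ∀ s ∈ Ioo (0:ℝ) L, |v t s| ≤ M)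
    (hinit : ∀ s ∈ Ioo (0:ℝ) L, v 0 s = v0 s)
    -- v solves the equation with λ = 0
    (hsol : ∀ t, 0 ≤ t → ∀ s ∈ Ioo (0:ℝ) L,
      HasDerivWithinAt (fun τ => v τ s) (vt t s) (Ici 0) t)
    (hvt : ∀ t, 0 ≤ t → ∀ s ∈ Ioo (0:ℝ) L,
      vt t s = ∫ σ in (0:ℝ)..L, K ((v t σ - v t s) / h) * (v t σ - v t s))
    -- ∂_s v = vs, with v and ∂_s v continuous
    (hvs : ∀ t, 0 ≤ t → ∀ s ∈ Ioo (0:ℝ) L, HasDerivAt (fun z => v t z) (vs t s) s)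
    (hvcont : ContinuousOn (fun p : ℝ × ℝ => v p.1 p.2) (Ici 0 ×ˢ Ioo 0 L))
    (hvscont : ContinuousOn (fun p : ℝ × ℝ => vs p.1 p.2) (Ici 0 ×ˢ Ioo 0 L))
    -- commuting mixed partials: ∂_t ∂_s v = vts = ∂_s ∂_t v
    (hmix1 : ∀ t, 0 ≤ t → ∀ s ∈ Ioo (0:ℝ) L,
      HasDerivWithinAt (fun τ => vs τ s) (vts t s) (Ici 0) t)
    (hmix2 : ∀ t, 0 ≤ t → ∀ s ∈ Ioo (0:ℝ) L,
      HasDerivAt (fun z => vt t z) (vts t s) s)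
    (c2 : ℝ)
    (hc2def : c2 = L * sInf ((fun ξ => K' (ξ / h) / h * ξ + K (ξ / h)) ''
      Icc (-(2 * M)) (2 * M)))
    (hc2pos : 0 < c2) :
    (∀ t, 0 ≤ t → ∀ s ∈ Ioo (0:ℝ) L, |vs t s| ≤ |v0' s| * Real.exp (-c2 * t)) ∧
    TendstoUniformlyOn (fun t s => vs t s) 0 atTop (Ioo 0 L) := by
  have hKcont : Continuous K := hKlip.continuous
  set G : ℝ → ℝ := fun ξ => K' (ξ / h) / h * ξ + K (ξ / h) with hGdef
  have hGcont : Continuous G := by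
    apply Continuous.add
    · exact ((hK'cont.comp (continuous_id.div_const h)).div_const h).mul continuous_id
    · exact hKcont.comp (continuous_id.div_const h)
  have hM : 0 ≤ M := by
    have := hvbdd 0 le_rfl (L/2) ⟨by linarith, by linarith⟩
    exact le_trans (abs_nonneg _) this
  have hBK : 0 ≤ BK := le_trans (hKnonneg 0) (hKbdd 0)
  have hBK' : 0 ≤ BK' := le_trans (abs_nonneg _) (hK'bdd 0)
  set CG : ℝ := BK' / h * (2 * M) + BK with hCGdef
  have hGabs : ∀ ξ : ℝ, |ξ| ≤ 2 * M → |G ξ| ≤ CG := by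
    intro ξ hξ
    have h1 : |K' (ξ / h) / h * ξ| ≤ BK' / h * (2 * M) := by
      rw [abs_mul, abs_div, abs_of_pos hh]
      have := hK'bdd (ξ / h)
      have hd : 0 ≤ BK' / h := div_nonneg hBK' hh.le
      have : |K' (ξ / h)| / h ≤ BK' / h := by gcongr
      exact mul_le_mul this hξ (abs_nonneg _) hd
    have h2 : |K (ξ / h)| ≤ BK := by
      rw [abs_of_nonneg (hKnonneg _)]; exact hKbdd _
    calc |G ξ| ≤ |K' (ξ / h) / h * ξ| + |K (ξ / h)| := abs_add_le _ _
      _ ≤ CG := by rw [hCGdef]; linarith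
  have hGlb : ∀ ξ : ℝ, |ξ| ≤ 2 * M → c2 / L ≤ G ξ := by
    intro ξ hξ
    have hbdd : BddBelow (G '' Icc (-(2 * M)) (2 * M)) :=
      (isCompact_Icc.image hGcont).bddBelow
    have hmem : G ξ ∈ G '' Icc (-(2 * M)) (2 * M) := by
      refine ⟨ξ, ?_, rfl⟩
      rcases abs_le.mp hξ with ⟨h1, h2⟩
      exact ⟨h1, h2⟩
    have hle := csInf_le hbdd hmem
    have : c2 / L = sInf (G '' Icc (-(2 * M)) (2 * M)) := by
      rw [hc2def]; field_simp
    exact this.le.trans hle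
  -- a.e. facts
  have haeNe : ∀ᵐ σ : ℝ ∂(volume : Measure ℝ), σ ≠ 0 ∧ σ ≠ L := by
    have h0 : ∀ᵐ σ : ℝ ∂(volume : Measure ℝ), σ ≠ 0 := by
      rw [ae_iff]
      have : {σ : ℝ | ¬σ ≠ 0} = {0} := by ext σ; simp
      rw [this]; exact measure_singleton 0
    have h1 : ∀ᵐ σ : ℝ ∂(volume : Measure ℝ), σ ≠ L := by
      rw [ae_iff]
      have : {σ : ℝ | ¬σ ≠ L} = {L} := by ext σ; simp
      rw [this]; exact measure_singleton L
    exact h0.and h1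
  -- integrability helper
  have hIntHelp : ∀ (f : ℝ → ℝ) (C : ℝ), Measurable f → (∀ σ ∈ Ioo (0:ℝ) L, |f σ| ≤ C) →
      IntervalIntegrable f volume 0 L := by
    intro f C hf hbd
    apply IntervalIntegrable.mono_fun' (g := fun _ => C) intervalIntegrable_const
      hf.aestronglyMeasurable
    filter_upwards [ae_restrict_mem measurableSet_uIoc, ae_restrict_of_ae haeNe] with σ hmem hne
    rw [uIoc_of_le hL.le] at hmem
    exact hbd σ ⟨hmem.1, lt_of_le_of_ne hmem.2 hne.2⟩
  have hdiff2M : ∀ t, 0 ≤ t → ∀ σ ∈ Ioo (0:ℝ) L, ∀ z ∈ Ioo (0:ℝ) L,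
      |v t σ - v t z| ≤ 2 * M := by
    intro t ht σ hσ z hz
    have h1 := abs_le.mp (hvbdd t ht σ hσ)
    have h2 := abs_le.mp (hvbdd t ht z hz)
    rw [abs_le]; constructor <;> linarith
  -- claim 1: formula for vts
  have claim1 : ∀ t, 0 ≤ t → ∀ s ∈ Ioo (0:ℝ) L,
      vts t s = -(vs t s) * ∫ σ in (0:ℝ)..L, G (v t σ - v t s) := by
    intro t ht s hs
    have hm := hvmeas t ht
    -- continuity of z ↦ vs t z at s
    have hslice : ContinuousOn (fun z => vs t z) (Ioo 0 L) := by
      intro z hz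
      have hc := hvscont (t, z) ⟨ht, hz⟩
      exact hc.comp ((continuous_const.prodMk continuous_id).continuousWithinAt)
        (fun y hy => ⟨ht, hy⟩)
    have hcontAt : ContinuousAt (fun z => vs t z) s :=
      hslice.continuousAt (Ioo_mem_nhds hs.1 hs.2)
    have hnear : ∀ᶠ z in nhds s, |vs t z| < |vs t s| + 1 :=
      (continuous_abs.continuousAt.comp hcontAt).eventually_lt_const (lt_add_one _)
    obtain ⟨ε, hε, hball⟩ : ∃ ε > 0,
        Metric.ball s ε ⊆ Ioo 0 L ∩ {z | |vs t z| < |vs t s| + 1} :=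
      Metric.mem_nhds_iff.mp (inter_mem (Ioo_mem_nhds hs.1 hs.2) hnear)
    set Cv : ℝ := |vs t s| + 1 with hCv
    have hFm : ∀ z : ℝ, Measurable (fun σ => K ((v t σ - v t z) / h) * (v t σ - v t z)) := by
      intro z
      have hcout : Continuous (fun ξ : ℝ => K ((ξ - v t z) / h) * (ξ - v t z)) :=
        (hKcont.comp ((continuous_id.sub continuous_const).div_const h)).mul
          (continuous_id.sub continuous_const)
      exact hcout.measurable.comp hm
    have hF'm : Measurable (fun σ => -(vs t s) * G (v t σ - v t s)) := by
      have : Continuous (fun ξ : ℝ => G (ξ - v t s)) :=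
        hGcont.comp (continuous_id.sub continuous_const)
      exact measurable_const.mul (this.measurable.comp hm)
    have hmain := intervalIntegral.hasDerivAt_integral_of_dominated_loc_of_deriv_le
      (μ := volume) (a := (0:ℝ)) (b := L)
      (F := fun z σ => K ((v t σ - v t z) / h) * (v t σ - v t z))
      (F' := fun z σ => -(vs t z) * G (v t σ - v t z))
      (x₀ := s) (bound := fun _ => Cv * CG) (Metric.ball_mem_nhds s hε)
      (Eventually.of_forall fun z => (hFm z).aestronglyMeasurable)
      (hIntHelp _ (BK * (2 * M)) (hFm s) ?_)
      hF'm.aestronglyMeasurable ?_ intervalIntegrable_const ?_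
    · have hDeriv : HasDerivAt
          (fun z => ∫ σ in (0:ℝ)..L, K ((v t σ - v t z) / h) * (v t σ - v t z))
          (∫ σ in (0:ℝ)..L, -(vs t s) * G (v t σ - v t s)) s := hmain.2
      have heq : (fun z => vt t z) =ᶠ[nhds s]
          (fun z => ∫ σ in (0:ℝ)..L, K ((v t σ - v t z) / h) * (v t σ - v t z)) :=
        eventually_of_mem (Ioo_mem_nhds hs.1 hs.2) (fun z hz => hvt t ht z hz)
      have h2 : HasDerivAt (fun z => vt t z)
          (∫ σ in (0:ℝ)..L, -(vs t s) * G (v t σ - v t s)) s :=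
        hDeriv.congr_of_eventuallyEq heq
      rw [(hmix2 t ht s hs).unique h2, intervalIntegral.integral_const_mul]
    · -- bound on F s
      intro σ hσ
      have hd := hdiff2M t ht σ hσ s hs
      rw [abs_mul, abs_of_nonneg (hKnonneg _)]
      exact mul_le_mul (hKbdd _) hd (abs_nonneg _) hBK
    · -- h_bound
      filter_upwards [haeNe] with σ hne hσI z hz
      rw [uIoc_of_le hL.le] at hσI
      have hσ : σ ∈ Ioo (0:ℝ) L := ⟨hσI.1, lt_of_le_of_ne hσI.2 hne.2⟩
      have hzIoo : z ∈ Ioo (0:ℝ) L := (hball hz).1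
      have hzCv : |vs t z| ≤ Cv := le_of_lt (hball hz).2
      have hd := hdiff2M t ht σ hσ z hzIoo
      rw [Real.norm_eq_abs, abs_mul, abs_neg]
      exact mul_le_mul hzCv (hGabs _ hd) (abs_nonneg _) (by rw [hCv]; positivity)
    · -- h_diff
      filter_upwards [haeNe] with σ hne hσI z hz
      rw [uIoc_of_le hL.le] at hσI
      have hσ : σ ∈ Ioo (0:ℝ) L := ⟨hσI.1, lt_of_le_of_ne hσI.2 hne.2⟩
      have hzIoo : z ∈ Ioo (0:ℝ) L := (hball hz).1
      have hvz := hvs t ht z hzIoo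
      have hinner : HasDerivAt (fun z => (v t σ - v t z) / h) (-(vs t z) / h) z :=
        (hvz.const_sub (v t σ)).div_const h
      have hK1 : HasDerivAt (fun z => K ((v t σ - v t z) / h))
          (K' ((v t σ - v t z) / h) * (-(vs t z) / h)) z :=
        (hKderiv ((v t σ - v t z) / h)).comp z hinner
      have hprod := hK1.fun_mul (hvz.const_sub (v t σ))
      refine hprod.congr_deriv ?_
      rw [hGdef]
      field_simp
      ring
  -- claim 2: lower bound on the integral
  have claim2 : ∀ t, 0 ≤ t → ∀ s ∈ Ioo (0:ℝ) L,
      c2 ≤ ∫ σ in (0:ℝ)..L, G (v t σ - v t s) := by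
    intro t ht s hs
    have hm := hvmeas t ht
    have hGm : Measurable (fun σ => G (v t σ - v t s)) :=
      (hGcont.comp (continuous_id.sub continuous_const)).measurable.comp hm
    have hint : IntervalIntegrable (fun σ => G (v t σ - v t s)) volume 0 L := by
      apply hIntHelp _ CG hGm
      intro σ hσ
      exact hGabs _ (hdiff2M t ht σ hσ s hs)
    have hconst : IntervalIntegrable (fun _ : ℝ => c2 / L) volume 0 L :=
      intervalIntegrable_const
    have hmono := intervalIntegral.integral_mono_ae_restrict hL.le hconst hint ?_
    · rw [intervalIntegral.integral_const, smul_eq_mul, sub_zero] at hmono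
      have : L * (c2 / L) = c2 := by field_simp
      linarith
    · filter_upwards [ae_restrict_mem measurableSet_Icc, ae_restrict_of_ae haeNe]
        with σ hmem hne
      have hσ : σ ∈ Ioo (0:ℝ) L :=
        ⟨lt_of_le_of_ne hmem.1 (Ne.symm hne.1), lt_of_le_of_ne hmem.2 hne.2⟩
      exact hGlb _ (hdiff2M t ht σ hσ s hs)
  -- key differential inequality
  have hkey : ∀ t, 0 ≤ t → ∀ s ∈ Ioo (0:ℝ) L, vs t s * vts t s ≤ -c2 * (vs t s) ^ 2 := by
    intro t ht s hs
    rw [claim1 t ht s hs]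
    have hI := claim2 t ht s hs
    nlinarith [sq_nonneg (vs t s), mul_nonneg (sq_nonneg (vs t s)) (sub_nonneg.mpr hI)]
  -- Gronwall-type decay
  have hdecay : ∀ t, 0 ≤ t → ∀ s ∈ Ioo (0:ℝ) L,
      |vs t s| ≤ |v0' s| * Real.exp (-c2 * t) := by
    intro t ht s hs
    set φ : ℝ → ℝ := fun τ => (vs τ s) ^ 2 * Real.exp (2 * c2 * τ) with hφ
    have hφd : ∀ τ ∈ Ici (0:ℝ), HasDerivWithinAt φ
        ((2 * (vs τ s) * (vts τ s) + 2 * c2 * (vs τ s) ^ 2) * Real.exp (2 * c2 * τ))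
        (Ici 0) τ := by
      intro τ hτ
      have h1 := hmix1 τ hτ s hs
      have h2 : HasDerivWithinAt (fun τ => (vs τ s) ^ 2)
          (2 * (vs τ s) * (vts τ s)) (Ici 0) τ := by
        have := h1.fun_pow 2
        refine this.congr_deriv ?_
        simp
      have h3 : HasDerivAt (fun τ => Real.exp (2 * c2 * τ))
          (Real.exp (2 * c2 * τ) * (2 * c2)) τ := by
        have := ((hasDerivAt_id τ).const_mul (2 * c2)).exp
        simpa using this
      have := h2.fun_mul h3.hasDerivWithinAt
      refine this.congr_deriv ?_
      ring
    have hcont : ContinuousOn φ (Ici 0) := fun τ hτ => (hφd τ hτ).continuousWithinAt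
    have hanti : AntitoneOn φ (Ici 0) := by
      apply antitoneOn_of_hasDerivWithinAt_nonpos (convex_Ici 0) hcont
        (f' := fun τ => (2 * (vs τ s) * (vts τ s) + 2 * c2 * (vs τ s) ^ 2) *
          Real.exp (2 * c2 * τ))
      · intro τ hτ
        exact (hφd τ (interior_subset hτ)).mono interior_subset
      · intro τ hτ
        rw [interior_Ici, mem_Ioi] at hτ
        have hk := hkey τ hτ.le s hs
        have he := Real.exp_pos (2 * c2 * τ)
        nlinarith
    have h0s : vs 0 s = v0' s := by
      have h1 : HasDerivAt (fun z => v 0 z) (vs 0 s) s := hvs 0 le_rfl s hs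
      have h2 : HasDerivAt v0 (vs 0 s) s :=
        h1.congr_of_eventuallyEq
          (eventually_of_mem (Ioo_mem_nhds hs.1 hs.2) fun z hz => (hinit z hz).symm)
      exact h2.unique (hv0deriv s)
    have hmono : φ t ≤ φ 0 := hanti (self_mem_Ici) ht ht
    have hφ0 : φ 0 = (v0' s) ^ 2 := by simp [hφ, h0s]
    have hsq : (vs t s) ^ 2 * Real.exp (2 * c2 * t) ≤ (v0' s) ^ 2 := by
      rw [← hφ0]; exact hmono
    set E : ℝ := Real.exp (c2 * t) with hE
    have hEpos : 0 < E := Real.exp_pos _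
    have hE2 : E ^ 2 = Real.exp (2 * c2 * t) := by
      rw [hE, sq, ← Real.exp_add]; ring_nf
    have hmul : |vs t s| * E ≤ |v0' s| := by
      have h1 : (|vs t s| * E) ^ 2 ≤ (|v0' s|) ^ 2 := by
        rw [mul_pow, sq_abs, sq_abs, hE2]; exact hsq
      calc |vs t s| * E = Real.sqrt ((|vs t s| * E) ^ 2) :=
            (Real.sqrt_sq (by positivity)).symm
        _ ≤ Real.sqrt ((|v0' s|) ^ 2) := Real.sqrt_le_sqrt h1
        _ = |v0' s| := Real.sqrt_sq (abs_nonneg _)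
    rw [neg_mul, Real.exp_neg, ← hE, ← div_eq_mul_inv, le_div_iff₀ hEpos]
    exact hmul
  refine ⟨hdecay, ?_⟩
  obtain ⟨C, hC⟩ := isCompact_Icc.exists_bound_of_continuousOn
    (hv0'cont.continuousOn (s := Icc 0 L))
  rw [Metric.tendstoUniformlyOn_iff]
  intro ε hε
  have h1 : Tendsto (fun t : ℝ => -c2 * t) atTop atBot :=
    (tendsto_const_mul_atBot_of_neg (by linarith)).mpr tendsto_id
  have h2 : Tendsto (fun t : ℝ => C * Real.exp (-c2 * t)) atTop (nhds 0) := by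
    have := (Real.tendsto_exp_atBot.comp h1).const_mul C
    simpa using this
  have hev : ∀ᶠ t in atTop, C * Real.exp (-c2 * t) < ε := h2.eventually_lt_const hε
  filter_upwards [hev, eventually_ge_atTop (0:ℝ)] with t hlt ht
  intro s hs
  have hb := hdecay t ht s hs
  have hCs : |v0' s| ≤ C := by
    have := hC s (Ioo_subset_Icc_self hs)
    rwa [Real.norm_eq_abs] at this
  have : |vs t s| ≤ C * Real.exp (-c2 * t) := by
    calc |vs t s| ≤ |v0' s| * Real.exp (-c2 * t) := hb
      _ ≤ C * Real.exp (-c2 * t) := by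
          exact mul_le_mul_of_nonneg_right hCs (Real.exp_pos _).le
  have hd : dist ((0 : ℝ → ℝ) s) (vs t s) = |vs t s| := by
    simp [Real.dist_eq]
  rw [hd]
  linarith
end
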